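/- arXiv:0910.4172 — 9 statements merged into one kernel-verified Lean document; each statement's English description precedes it below -/
import Mathlib

section
/- Let d ≥ 2, let C be a convex body in ℝ^d, let (b_1,…,b_d) be a basis of ℝ^d, let e_1,…,e_d be real numbers with e_i ≥ 1, and suppose there are points p, q ∈ ℝ^d such that p + {∑_i t_i b_i : t_i ∈ [0,1]} ⊆ C ⊆ q + {∑_i t_i (e_i b_i) : t_i ∈ [0,1]}. Then for every finite family F of translates of C, τ(F) ≤ ⌈e_d⌉ · ∏_{i=1}^{d−1} ⌈e_i + 1⌉ · ν(F). -/
open Pointwise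

lemma oneD {α : Type*} [DecidableEq α] (g : α → ℝ) (m : ℕ) (hm : 1 ≤ m) :
    ∀ S : Finset α, ∃ (Pc : Finset ℝ) (T : Finset α), T ⊆ S ∧
      (∀ s ∈ S, ∃ c ∈ Pc, g s ≤ c ∧ c ≤ g s + 1) ∧
      (∀ u ∈ T, ∀ w ∈ T, u ≠ w → (m : ℝ) < |g u - g w|) ∧
      Pc.card ≤ m * T.card := by
  intro S
  induction S using Finset.strongInduction with
  | _ S ih =>
    rcases S.eq_empty_or_nonempty with rfl | hS
    · exact ⟨∅, ∅, by simp⟩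
    obtain ⟨a, haS, hamin⟩ := S.exists_min_image g hS
    set S' := S.filter (fun s => g a + m < g s) with hS'
    have hssub : S' ⊂ S := by
      refine Finset.filter_ssubset.2 ⟨a, haS, by push_cast; nlinarith [hm]⟩
    obtain ⟨Pc', T', hT'sub, hcov', hgap', hcard'⟩ := ih S' hssub
    have haT' : a ∉ T' := fun h => by
      have := Finset.mem_filter.1 (hT'sub h)
      linarith [this.2]
    refine ⟨Pc' ∪ (Finset.range m).image (fun j : ℕ => g a + j + 1),
      insert a T', ?_, ?_, ?_, ?_⟩
    · exact Finset.insert_subset haS (hT'sub.trans (Finset.filter_subset _ _))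
    · intro s hs
      by_cases h : g a + m < g s
      · obtain ⟨c, hc, hc2⟩ := hcov' s (Finset.mem_filter.2 ⟨hs, h⟩)
        exact ⟨c, Finset.mem_union_left _ hc, hc2⟩
      · push_neg at h
        have h0 : 0 ≤ g s - g a := by linarith [hamin s hs]
        set j : ℕ := min ⌊g s - g a⌋₊ (m - 1) with hj
        refine ⟨g a + j + 1, Finset.mem_union_right _
          (Finset.mem_image.2 ⟨j, Finset.mem_range.2 (by omega), rfl⟩), ?_, ?_⟩
        · rcases le_or_gt (⌊g s - g a⌋₊ : ℕ) (m - 1) with hle | hlt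
          · have : j = ⌊g s - g a⌋₊ := min_eq_left hle
            rw [this]
            have := Nat.lt_floor_add_one (g s - g a)
            linarith
          · have hjm : j = m - 1 := min_eq_right (le_of_lt hlt)
            have : (m : ℝ) ≤ ⌊g s - g a⌋₊ := by exact_mod_cast by omega
            have h2 := Nat.floor_le h0
            rw [hjm]
            have : ((m - 1 : ℕ) : ℝ) = (m : ℝ) - 1 := by
              push_cast [Nat.cast_sub hm]; ring
            linarith
        · have h2 := Nat.floor_le h0
          have hjle : (j : ℝ) ≤ ⌊g s - g a⌋₊ := by exact_mod_cast min_le_left _ _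
          linarith
    · intro u hu w hw huw
      rcases Finset.mem_insert.1 hu with rfl | hu' <;>
        rcases Finset.mem_insert.1 hw with rfl | hw'
      · exact absurd rfl huw
      · have := Finset.mem_filter.1 (hT'sub hw')
        rw [abs_sub_comm, abs_of_pos (by linarith [this.2])]
        linarith [this.2]
      · have := Finset.mem_filter.1 (hT'sub hu')
        rw [abs_of_pos (by linarith [this.2])]
        linarith [this.2]
      · exact hgap' u hu' w hw' huw
    · rw [Finset.card_insert_of_notMem haT']
      calc (Pc' ∪ _).card ≤ Pc'.card + ((Finset.range m).image _).card :=
            Finset.card_union_le _ _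
        _ ≤ m * T'.card + m := by
            have := Finset.card_image_le (s := Finset.range m)
              (f := fun j : ℕ => g a + j + 1)
            simp only [Finset.card_range] at this
            omega
        _ = m * (T'.card + 1) := by ring
open Pointwise

section Geo
variable {d : ℕ} {C : Set (EuclideanSpace ℝ (Fin d))}
  {b : Module.Basis (Fin d) ℝ (EuclideanSpace ℝ (Fin d))}
  {e : Fin d → ℝ} {p q : EuclideanSpace ℝ (Fin d)}

lemma coordC (hQ : C ⊆ {x | ∃ t : Fin d → ℝ, (∀ i, t i ∈ Set.Icc (0 : ℝ) 1) ∧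
      x = q + ∑ i, (t i * e i) • b i}) (he : ∀ i, 1 ≤ e i)
    {x : EuclideanSpace ℝ (Fin d)} (hx : x ∈ C) (i : Fin d) :
    b.repr q i ≤ b.repr x i ∧ b.repr x i ≤ b.repr q i + e i := by
  obtain ⟨t, ht, rfl⟩ := hQ hx
  have : b.repr (q + ∑ j, (t j * e j) • b j) i = b.repr q i + t i * e i := by
    simp [map_add, map_sum, Finsupp.finset_sum_apply, Module.Basis.repr_self_apply,
      Finsupp.single_apply]
  rw [this]
  have h1 := (ht i).1
  have h2 := (ht i).2
  have he' : (0:ℝ) ≤ e i := by linarith [he i]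
  constructor
  · nlinarith
  · nlinarith

lemma disjC (hQ : C ⊆ {x | ∃ t : Fin d → ℝ, (∀ i, t i ∈ Set.Icc (0 : ℝ) 1) ∧
      x = q + ∑ i, (t i * e i) • b i}) (he : ∀ i, 1 ≤ e i)
    (v w : EuclideanSpace ℝ (Fin d)) (i : Fin d)
    (h : e i < |b.repr v i - b.repr w i|) : Disjoint (v +ᵥ C) (w +ᵥ C) := by
  rw [Set.disjoint_left]
  rintro x hx1 hx2
  obtain ⟨c1, hc1, rfl⟩ := hx1
  obtain ⟨c2, hc2, heq⟩ := hx2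
  simp only at heq
  have h1 := coordC hQ he hc1 i
  have h2 := coordC hQ he hc2 i
  have hv : b.repr (v +ᵥ c1) i = b.repr v i + b.repr c1 i := by
    simp [vadd_eq_add, map_add]
  have hw : b.repr (w +ᵥ c2) i = b.repr w i + b.repr c2 i := by
    simp [vadd_eq_add, map_add]
  rw [heq] at hw
  rw [hv] at hw
  rcases abs_cases (b.repr v i - b.repr w i) with ⟨h3, _⟩ | ⟨h3, _⟩ <;> rw [h3] at h <;> linarith

lemma pierceC (hP : {x | ∃ t : Fin d → ℝ, (∀ i, t i ∈ Set.Icc (0 : ℝ) 1) ∧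
      x = p + ∑ i, t i • b i} ⊆ C)
    (v : EuclideanSpace ℝ (Fin d)) (c : Fin d → ℝ)
    (hc : ∀ i, b.repr v i ≤ c i ∧ c i ≤ b.repr v i + 1) :
    (p + ∑ i, c i • b i) ∈ v +ᵥ C := by
  refine ⟨p + ∑ i, (c i - b.repr v i) • b i, hP ⟨fun i => c i - b.repr v i,
    fun i => Set.mem_Icc.2 ⟨by simp only; linarith [(hc i).1],
      by simp only; linarith [(hc i).2]⟩, rfl⟩, ?_⟩
  have hv : ∑ i, b.repr v i • b i = v := b.sum_repr v
  calc v +ᵥ (p + ∑ i, (c i - b.repr v i) • b i)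
      = p + (v + ∑ i, (c i - b.repr v i) • b i) := by
        rw [vadd_eq_add]; abel
    _ = p + ∑ i, c i • b i := by
        congr 1
        nth_rewrite 1 [← hv]
        rw [← Finset.sum_add_distrib]
        exact Finset.sum_congr rfl fun i _ => by rw [← add_smul]; ring_nf

end Geo

/-- If a convex body `C` in `ℝ^d` (`d ≥ 2`) is sandwiched between two parallel
parallelepipeds `p + {∑ tᵢ bᵢ : tᵢ ∈ [0,1]}` and `q + {∑ tᵢ (eᵢ bᵢ) : tᵢ ∈ [0,1]}`
(with `eᵢ ≥ 1`), then for every finite family of translates of `C`,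
`τ(F) ≤ ⌈e_d⌉ · ∏_{i=1}^{d−1} ⌈eᵢ + 1⌉ · ν(F)`. -/
theorem piercing_translates_sandwiched_parallelepipeds
    (d : ℕ) (hd : 2 ≤ d)
    (C : Set (EuclideanSpace ℝ (Fin d)))
    (hCcompact : IsCompact C) (hCconv : Convex ℝ C)
    (hCint : (interior C).Nonempty)
    (b : Module.Basis (Fin d) ℝ (EuclideanSpace ℝ (Fin d)))
    (e : Fin d → ℝ) (he : ∀ i, 1 ≤ e i)
    (p q : EuclideanSpace ℝ (Fin d))
    (hP : {x | ∃ t : Fin d → ℝ, (∀ i, t i ∈ Set.Icc (0 : ℝ) 1) ∧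
            x = p + ∑ i, t i • b i} ⊆ C)
    (hQ : C ⊆ {x | ∃ t : Fin d → ℝ, (∀ i, t i ∈ Set.Icc (0 : ℝ) 1) ∧
            x = q + ∑ i, (t i * e i) • b i})
    (V : Finset (EuclideanSpace ℝ (Fin d))) :
    ∃ P W : Finset (EuclideanSpace ℝ (Fin d)),
      W ⊆ V ∧
      (∀ v ∈ V, ∃ x ∈ P, x ∈ v +ᵥ C) ∧
      ((W : Set (EuclideanSpace ℝ (Fin d))).Pairwise fun u w =>
        Disjoint (u +ᵥ C) (w +ᵥ C)) ∧
      (P.card : ℤ) ≤ ⌈e ⟨d - 1, by omega⟩⌉ *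
        (∏ i ∈ Finset.univ.erase (⟨d - 1, by omega⟩ : Fin d), ⌈e i + 1⌉) *
        (W.card : ℤ) := by
  classical
  set L : Fin d := ⟨d - 1, by omega⟩ with hL
  have heL : 1 ≤ e L := he L
  set M : ℕ := ⌈e L⌉.toNat with hMdef
  have hceil : (1:ℤ) ≤ ⌈e L⌉ := by
    rw [Int.le_ceil_iff]; norm_num; linarith
  have hML : (M : ℤ) = ⌈e L⌉ := Int.toNat_of_nonneg (by omega)
  have hM1 : 1 ≤ M := by omega
  have hMr : e L ≤ (M : ℝ) := by
    have h1 : ((M : ℤ) : ℝ) = (M : ℝ) := by push_cast; ring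
    have := Int.le_ceil (e L)
    rw [← hML] at this; exact_mod_cast this
  set n : Fin d → ℤ := fun i => ⌈e i + 1⌉ with hn
  have hnr : ∀ i, e i + 1 ≤ (n i : ℝ) := fun i => Int.le_ceil _
  have hnpos : ∀ i, 0 < n i := fun i => Int.ceil_pos.2 (by linarith [he i])
  -- column keys
  set key : EuclideanSpace ℝ (Fin d) → (Fin d → ℤ) :=
    fun v i => if i = L then 0 else ⌊b.repr v i⌋ with hkey
  set res : (Fin d → ℤ) → (Fin d → ℤ) :=
    fun κ i => if i = L then 0 else κ i % n i with hres
  have H : ∀ κ : Fin d → ℤ, ∃ (Pc : Finset ℝ)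
      (T : Finset (EuclideanSpace ℝ (Fin d))),
      T ⊆ V.filter (fun v => key v = κ) ∧
      (∀ s ∈ V.filter (fun v => key v = κ), ∃ c ∈ Pc,
        b.repr s L ≤ c ∧ c ≤ b.repr s L + 1) ∧
      (∀ u ∈ T, ∀ w ∈ T, u ≠ w → (M : ℝ) < |b.repr u L - b.repr w L|) ∧
      Pc.card ≤ M * T.card :=
    fun κ => oneD (fun v => b.repr v L) M hM1 _
  choose Pc T hTsub hcov hgap hcard using H
  set K : Finset (Fin d → ℤ) := V.image key with hK
  set pt : (Fin d → ℤ) → ℝ → EuclideanSpace ℝ (Fin d) :=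
    fun κ c => p + ∑ i, (if i = L then c else ((κ i : ℝ) + 1)) • b i with hpt
  set P : Finset (EuclideanSpace ℝ (Fin d)) :=
    K.biUnion (fun κ => (Pc κ).image (pt κ)) with hPdef
  -- coverage
  have hcover : ∀ v ∈ V, ∃ x ∈ P, x ∈ v +ᵥ C := by
    intro v hv
    have hvf : v ∈ V.filter (fun v' => key v' = key v) :=
      Finset.mem_filter.2 ⟨hv, rfl⟩
    obtain ⟨c, hcPc, hc1, hc2⟩ := hcov (key v) v hvf
    refine ⟨pt (key v) c, Finset.mem_biUnion.2 ⟨key v,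
      Finset.mem_image_of_mem _ hv, Finset.mem_image_of_mem _ hcPc⟩, ?_⟩
    apply pierceC hP
    intro i
    by_cases hiL : i = L
    · subst hiL; simp only [if_pos rfl]; exact ⟨hc1, hc2⟩
    · simp only [if_neg hiL, hkey, if_neg hiL]
      constructor
      · have h1 := Int.floor_le (b.repr v i)
        have h2 := Int.lt_floor_add_one (b.repr v i)
        push_cast; linarith
      · have h1 := Int.floor_le (b.repr v i)
        have h2 := Int.lt_floor_add_one (b.repr v i)
        push_cast; linarith
  -- handle empty V
  rcases V.eq_empty_or_nonempty with rfl | hVne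
  · exact ⟨∅, ∅, by simp⟩
  -- choose best residue class
  set R : Finset (Fin d → ℤ) := K.image res with hR
  have hRne : R.Nonempty := (hVne.image key).image res
  obtain ⟨ρ, hρR, hρmax⟩ := R.exists_max_image
    (fun ρ => ∑ κ ∈ K.filter (fun κ' => res κ' = ρ), (T κ).card) hRne
  set Kρ : Finset (Fin d → ℤ) := K.filter (fun κ' => res κ' = ρ) with hKρ
  set W : Finset (EuclideanSpace ℝ (Fin d)) := Kρ.biUnion T with hW
  have hkeyT : ∀ κ, ∀ v ∈ T κ, key v = κ := by
    intro κ v hv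
    exact (Finset.mem_filter.1 (hTsub κ hv)).2
  have hWsub : W ⊆ V := by
    intro v hv
    obtain ⟨κ, _, hvT⟩ := Finset.mem_biUnion.1 hv
    exact (Finset.mem_filter.1 (hTsub κ hvT)).1
  have hWcard : W.card = ∑ κ ∈ Kρ, (T κ).card := by
    apply Finset.card_biUnion
    intro κ1 h1 κ2 h2 hne
    rw [Function.onFun, Finset.disjoint_left]
    intro v hv1 hv2
    exact hne ((hkeyT κ1 v hv1).symm.trans (hkeyT κ2 v hv2))
  -- disjointness of W translates
  have hWdisj : (W : Set (EuclideanSpace ℝ (Fin d))).Pairwise fun u w =>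
      Disjoint (u +ᵥ C) (w +ᵥ C) := by
    intro u hu w hw huw
    simp only [Finset.coe_biUnion, Finset.mem_coe] at hu hw
    obtain ⟨κ1, hκ1, hu1⟩ := Finset.mem_biUnion.1 hu
    obtain ⟨κ2, hκ2, hw2⟩ := Finset.mem_biUnion.1 hw
    by_cases hκ : κ1 = κ2
    · subst hκ
      have := hgap κ1 u hu1 w hw2 huw
      exact disjC hQ he u w L (lt_of_le_of_lt hMr this)
    · -- different columns in the same residue class
      have hres1 : res κ1 = ρ := (Finset.mem_filter.1 hκ1).2
      have hres2 : res κ2 = ρ := (Finset.mem_filter.1 hκ2).2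
      obtain ⟨i, hi⟩ : ∃ i, κ1 i ≠ κ2 i := by
        by_contra hcon
        push_neg at hcon
        exact hκ (funext hcon)
      have hKL : ∀ κ ∈ K, κ L = 0 := by
        intro κ hκ
        obtain ⟨v', _, rfl⟩ := Finset.mem_image.1 hκ
        simp [hkey]
      have hiL : i ≠ L := by
        intro hiLeq; subst hiLeq
        rw [hKL κ1 (Finset.mem_filter.1 hκ1).1, hKL κ2 (Finset.mem_filter.1 hκ2).1] at hi
        exact hi rfl
      have hmod : κ1 i % n i = κ2 i % n i := by
        have := congrFun (hres1.trans hres2.symm) i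
        simpa [hres, if_neg hiL] using this
      have hdvd : n i ∣ κ2 i - κ1 i := Int.ModEq.dvd hmod
      have habs : n i ≤ |κ2 i - κ1 i| :=
        Int.le_of_dvd (abs_pos.2 (sub_ne_zero.2 (Ne.symm hi))) ((dvd_abs _ _).2 hdvd)
      have hku := hkeyT κ1 u hu1
      have hkw := hkeyT κ2 w hw2
      have hκ1i : κ1 i = ⌊b.repr u i⌋ := by
        rw [← hku]; simp [hkey, if_neg hiL]
      have hκ2i : κ2 i = ⌊b.repr w i⌋ := by
        rw [← hkw]; simp [hkey, if_neg hiL]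
      apply disjC hQ he u w i
      have f1 := Int.floor_le (b.repr u i)
      have f2 := Int.lt_floor_add_one (b.repr u i)
      have f3 := Int.floor_le (b.repr w i)
      have f4 := Int.lt_floor_add_one (b.repr w i)
      rw [← hκ1i] at f1 f2
      rw [← hκ2i] at f3 f4
      have habsr : (n i : ℝ) ≤ |(κ2 i : ℝ) - (κ1 i : ℝ)| := by
        have : ((n i : ℤ) : ℝ) ≤ ((|κ2 i - κ1 i| : ℤ) : ℝ) := by exact_mod_cast habs
        rwa [Int.cast_abs, Int.cast_sub] at this
      have hni := hnr i
      rcases abs_cases ((κ2 i : ℝ) - (κ1 i : ℝ)) with ⟨hA, _⟩ | ⟨hA, _⟩ <;>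
        rcases abs_cases (b.repr u i - b.repr w i) with ⟨hB, _⟩ | ⟨hB, _⟩ <;>
        rw [hA] at habsr <;> rw [hB] <;> linarith
  -- counting
  have hPcard : P.card ≤ M * ∑ κ ∈ K, (T κ).card := by
    calc P.card ≤ ∑ κ ∈ K, ((Pc κ).image (pt κ)).card := Finset.card_biUnion_le
      _ ≤ ∑ κ ∈ K, M * (T κ).card :=
          Finset.sum_le_sum fun κ _ => (Finset.card_image_le).trans (hcard κ)
      _ = M * ∑ κ ∈ K, (T κ).card := (Finset.mul_sum _ _ _).symm
  have hsplit : ∑ κ ∈ K, (T κ).card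
      = ∑ ρ' ∈ R, ∑ κ ∈ K.filter (fun κ' => res κ' = ρ'), (T κ).card :=
    (Finset.sum_fiberwise_of_maps_to (fun κ hκ => Finset.mem_image_of_mem res hκ) _).symm
  have hmaxsum : ∑ ρ' ∈ R, ∑ κ ∈ K.filter (fun κ' => res κ' = ρ'), (T κ).card
      ≤ R.card * W.card := by
    rw [hWcard]
    calc ∑ ρ' ∈ R, ∑ κ ∈ K.filter (fun κ' => res κ' = ρ'), (T κ).card
        ≤ ∑ _ρ' ∈ R, ∑ κ ∈ Kρ, (T κ).card :=
          Finset.sum_le_sum fun ρ' h => hρmax ρ' h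
      _ = R.card * ∑ κ ∈ Kρ, (T κ).card := by
          rw [Finset.sum_const, smul_eq_mul]
  -- cardinality of residue classes
  set t : Fin d → Finset ℤ := fun i => if i = L then {0} else Finset.Ico 0 (n i)
    with ht
  have hRsub : R ⊆ Fintype.piFinset t := by
    intro ρ' hρ'
    obtain ⟨κ, hκK, rfl⟩ := Finset.mem_image.1 hρ'
    rw [Fintype.mem_piFinset]
    intro i
    by_cases hiL : i = L
    · subst hiL; simp [ht, hres]
    · simp only [ht, if_neg hiL, hres, Finset.mem_Ico]
      exact ⟨Int.emod_nonneg _ (ne_of_gt (hnpos i)), Int.emod_lt_of_pos _ (hnpos i)⟩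
  have hRcard : (R.card : ℤ) ≤ ∏ i ∈ Finset.univ.erase L, n i := by
    have h1 : R.card ≤ ∏ i, (t i).card := by
      rw [← Fintype.card_piFinset]
      exact Finset.card_le_card hRsub
    have h2 : (∏ i, (t i).card : ℤ) = ((t L).card : ℤ) *
        ∏ i ∈ Finset.univ.erase L, ((t i).card : ℤ) := by
      push_cast
      rw [← Finset.mul_prod_erase Finset.univ _ (Finset.mem_univ L)]
    have h3 : ((t L).card : ℤ) = 1 := by simp [ht]
    have h4 : ∀ i ∈ Finset.univ.erase L, ((t i).card : ℤ) = n i := by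
      intro i hi
      have hiL : i ≠ L := (Finset.mem_erase.1 hi).1
      simp only [ht, if_neg hiL]
      rw [Int.card_Ico]
      simpa using Int.toNat_of_nonneg (le_of_lt (hnpos i))
    calc (R.card : ℤ) ≤ (∏ i, (t i).card : ℤ) := by exact_mod_cast h1
      _ = ∏ i ∈ Finset.univ.erase L, n i := by
          rw [h2, h3, one_mul]
          exact Finset.prod_congr rfl h4
  refine ⟨P, W, hWsub, hcover, hWdisj, ?_⟩
  have hfinal : (P.card : ℤ) ≤ (M : ℤ) * ((R.card : ℤ) * (W.card : ℤ)) := by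
    have : P.card ≤ M * (R.card * W.card) := by
      calc P.card ≤ M * ∑ κ ∈ K, (T κ).card := hPcard
        _ ≤ M * (R.card * W.card) := Nat.mul_le_mul_left M (hsplit ▸ hmaxsum)
    exact_mod_cast this
  calc (P.card : ℤ) ≤ (M : ℤ) * ((R.card : ℤ) * (W.card : ℤ)) := hfinal
    _ ≤ ⌈e L⌉ * ((∏ i ∈ Finset.univ.erase L, n i) * (W.card : ℤ)) := by
        rw [hML]
        exact mul_le_mul_of_nonneg_left
          (mul_le_mul_of_nonneg_right hRcard (Int.natCast_nonneg _))
          (le_trans zero_le_one hceil)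
    _ = ⌈e L⌉ * (∏ i ∈ Finset.univ.erase L, ⌈e i + 1⌉) * (W.card : ℤ) := by
        rw [hn]; ring
end

section
/- For every dimension d ≥ 2, every parallelepiped P in ℝ^d (i.e., P = p + {∑_i t_i b_i : t_i ∈ [0,1]} for some point p and some basis (b_1,…,b_d) of ℝ^d), and every finite family F of translates of P, τ(F) ≤ 2^(d−1) · ν(F). -/
open Pointwise

/-- For every dimension `d ≥ 2`, every parallelepiped
`P = p + {∑ tᵢ bᵢ : tᵢ ∈ [0,1]}` in `ℝ^d`, and every finite family of translates of `P`,
`τ(F) ≤ 2^(d−1) · ν(F)`. -/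
theorem piercing_translates_parallelepiped
    (d : ℕ) (hd : 2 ≤ d)
    (b : Module.Basis (Fin d) ℝ (EuclideanSpace ℝ (Fin d)))
    (p : EuclideanSpace ℝ (Fin d))
    (P : Set (EuclideanSpace ℝ (Fin d)))
    (hP : P = {x | ∃ t : Fin d → ℝ, (∀ i, t i ∈ Set.Icc (0 : ℝ) 1) ∧
            x = p + ∑ i, t i • b i})
    (V : Finset (EuclideanSpace ℝ (Fin d))) :
    ∃ Q W : Finset (EuclideanSpace ℝ (Fin d)),
      W ⊆ V ∧
      (∀ v ∈ V, ∃ x ∈ Q, x ∈ v +ᵥ P) ∧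
      ((W : Set (EuclideanSpace ℝ (Fin d))).Pairwise fun u w =>
        Disjoint (u +ᵥ P) (w +ᵥ P)) ∧
      Q.card ≤ 2 ^ (d - 1) * W.card := by
  classical
  set c : EuclideanSpace ℝ (Fin d) → Fin d → ℝ := fun x => b.equivFun x with hc
  have hL : ∀ (y z : EuclideanSpace ℝ (Fin d)) (i : Fin d),
      c (y - z) i = c y i - c z i := by
    intro y z i
    simp [hc, map_sub]
  have hLa : ∀ (y z : EuclideanSpace ℝ (Fin d)) (i : Fin d),
      c (y + z) i = c y i + c z i := by
    intro y z i
    simp [hc, map_add]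
  have hLs : ∀ (t : Fin d → ℝ) (i : Fin d), c (∑ j, t j • b j) i = t i := by
    intro t i
    have h1 : b.equivFun (∑ j, t j • b j) = t := by
      rw [show (∑ j, t j • b j) = b.equivFun.symm t from (b.equivFun_symm_apply t).symm]
      exact b.equivFun.apply_symm_apply t
    rw [hc]
    exact congrFun h1 i
  have hmem : ∀ v x : EuclideanSpace ℝ (Fin d),
      x ∈ v +ᵥ P ↔ ∀ i, c (x - v - p) i ∈ Set.Icc (0:ℝ) 1 := by
    intro v x
    rw [Set.mem_vadd_set_iff_neg_vadd_mem, hP]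
    simp only [Set.mem_setOf_eq, vadd_eq_add]
    constructor
    · rintro ⟨t, ht, hx⟩ i
      have h2 : x - v - p = ∑ j, t j • b j := by
        have h3 : x - v - p = (-v + x) - p := by abel
        rw [h3, hx]; abel
      rw [h2, hLs]
      exact ht i
    · intro h
      refine ⟨fun i => c (x - v - p) i, h, ?_⟩
      have h2 : ∑ i, c (x - v - p) i • b i = x - v - p := by
        rw [hc]
        exact b.sum_equivFun (x - v - p)
      rw [h2]; abel
  have hdisj : ∀ u w : EuclideanSpace ℝ (Fin d), (∃ i, 1 < |c u i - c w i|) →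
      Disjoint (u +ᵥ P) (w +ᵥ P) := by
    rintro u w ⟨i, hi⟩
    rw [Set.disjoint_left]
    intro x hxu hxw
    have h1 := (hmem u x).1 hxu i
    have h2 := (hmem w x).1 hxw i
    rw [hL, hL] at h1 h2
    rw [Set.mem_Icc] at h1 h2
    have : |c u i - c w i| ≤ 1 := abs_le.mpr ⟨by linarith, by linarith⟩
    linarith
  set up : Fin (d-1) → Fin d := fun j => ⟨(j:ℕ)+1, by have := j.2; omega⟩ with hup
  set down : Fin d → Fin (d-1) := fun i => ⟨(i:ℕ)-1, by have := i.2; omega⟩ with hdown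
  have hupdown : ∀ i : Fin d, (i:ℕ) ≠ 0 → up (down i) = i := by
    intro i hi
    apply Fin.ext
    simp only [hup, hdown]
    have := i.2
    omega
  suffices main : ∀ n (S : Finset (EuclideanSpace ℝ (Fin d))), S.card ≤ n →
      ∃ Q W : Finset (EuclideanSpace ℝ (Fin d)),
        W ⊆ S ∧ (∀ v ∈ S, ∃ x ∈ Q, x ∈ v +ᵥ P) ∧
        ((W : Set (EuclideanSpace ℝ (Fin d))).Pairwise fun u w =>
          Disjoint (u +ᵥ P) (w +ᵥ P)) ∧
        Q.card ≤ 2 ^ (d - 1) * W.card by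
    exact main V.card V le_rfl
  intro n
  induction n with
  | zero =>
    intro S hS
    have : S = ∅ := Finset.card_eq_zero.mp (Nat.le_zero.mp hS)
    subst this
    exact ⟨∅, ∅, by simp, by simp, by simp, by simp⟩
  | succ n ih =>
    intro S hS
    rcases S.eq_empty_or_nonempty with rfl | hSne
    · exact ⟨∅, ∅, by simp, by simp, by simp, by simp⟩
    obtain ⟨v1, hv1S, hv1min⟩ := S.exists_min_image (fun v => c v ⟨0, by omega⟩) hSne
    set tt : (Fin (d-1) → Bool) → Fin d → ℝ := fun ε i =>
      if (i : ℕ) = 0 then 1 else if ε (down i) then 1 else 0 with htt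
    set q : (Fin (d-1) → Bool) → EuclideanSpace ℝ (Fin d) := fun ε =>
      v1 + p + ∑ i, tt ε i • b i with hq
    set Q₁ : Finset (EuclideanSpace ℝ (Fin d)) := Finset.image q Finset.univ with hQ₁
    set S' := S.filter (fun v => ∃ i, 1 < |c v i - c v1 i|) with hS'
    have hv1S' : v1 ∉ S' := by
      simp only [hS', Finset.mem_filter]
      rintro ⟨-, i, hi⟩
      simp only [sub_self, abs_zero] at hi
      linarith
    have hS'sub : S' ⊆ S := Finset.filter_subset _ _
    have hS'card : S'.card ≤ n := by
      have h1 : S' ⊆ S.erase v1 := fun x hx =>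
        Finset.mem_erase.mpr ⟨fun h => hv1S' (h ▸ hx), hS'sub hx⟩
      have h2 := Finset.card_le_card h1
      rw [Finset.card_erase_of_mem hv1S] at h2
      omega
    obtain ⟨Q', W', hW'S', hpierce', hpair', hcard'⟩ := ih S' hS'card
    refine ⟨Q₁ ∪ Q', insert v1 W', ?_, ?_, ?_, ?_⟩
    · exact Finset.insert_subset hv1S (hW'S'.trans hS'sub)
    · intro v hv
      by_cases hvS' : v ∈ S'
      · obtain ⟨x, hx, hxm⟩ := hpierce' v hvS'
        exact ⟨x, Finset.mem_union_right _ hx, hxm⟩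
      · have hnear : ∀ i, |c v i - c v1 i| ≤ 1 := by
          have h3 : ¬ ∃ i, 1 < |c v i - c v1 i| := fun hex =>
            hvS' (Finset.mem_filter.mpr ⟨hv, hex⟩)
          push_neg at h3
          exact h3
        have h0 : c v1 ⟨0, by omega⟩ ≤ c v ⟨0, by omega⟩ := hv1min v hv
        set ε : Fin (d-1) → Bool := fun j =>
          decide (c v1 (up j) < c v (up j)) with hε
        refine ⟨q ε, Finset.mem_union_left _
          (Finset.mem_image_of_mem q (Finset.mem_univ ε)), ?_⟩
        rw [hmem]
        intro i
        have hqe : c (q ε - v - p) i = c v1 i - c v i + tt ε i := by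
          have h4 : q ε - v - p = (v1 - v) + ∑ j, tt ε j • b j := by
            show v1 + p + ∑ i, tt ε i • b i - v - p = _; abel
          rw [h4, hLa, hL, hLs]
        rw [hqe, Set.mem_Icc]
        have habs := abs_le.mp (hnear i)
        obtain ⟨habs1, habs2⟩ := habs
        by_cases hi0 : (i : ℕ) = 0
        · have hieq : i = (⟨0, by omega⟩ : Fin d) := Fin.ext hi0
          have h5 : tt ε i = 1 := by rw [htt]; simp only [hi0, if_pos]
          have h0' : c v1 i ≤ c v i := by rw [hieq]; exact h0
          rw [h5]
          constructor <;> linarith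
        · have h5 : tt ε i = if c v1 i < c v i then 1 else 0 := by
            rw [htt]
            simp only [if_neg hi0]
            rw [hε]
            simp only [hupdown i hi0]
            by_cases hlt : c v1 i < c v i
            · rw [if_pos hlt, if_pos (by simpa using hlt)]
            · rw [if_neg hlt, if_neg (by simpa using hlt)]
          rw [h5]
          by_cases hlt : c v1 i < c v i
          · rw [if_pos hlt]
            constructor <;> linarith
          · rw [if_neg hlt]
            push_neg at hlt
            constructor <;> linarith
    · have hsymm : Symmetric (fun u w : EuclideanSpace ℝ (Fin d) =>
          Disjoint (u +ᵥ P) (w +ᵥ P)) := fun u w h => h.symm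
      rw [Finset.coe_insert]
      haveI : Std.Symm (fun u w : EuclideanSpace ℝ (Fin d) =>
          Disjoint (u +ᵥ P) (w +ᵥ P)) := ⟨fun u w h => hsymm h⟩
      rw [Set.pairwise_insert_of_symm]
      refine ⟨hpair', ?_⟩
      intro w hw _
      have hwS' : w ∈ S' := hW'S' hw
      rw [hS', Finset.mem_filter] at hwS'
      obtain ⟨-, i, hi⟩ := hwS'
      exact hdisj v1 w ⟨i, by rw [abs_sub_comm] at hi; exact hi⟩
    · have hv1W' : v1 ∉ W' := fun h => hv1S' (hW'S' h)
      have hQ1card : Q₁.card ≤ 2 ^ (d - 1) := by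
        calc Q₁.card ≤ (Finset.univ : Finset (Fin (d-1) → Bool)).card :=
              Finset.card_image_le
          _ = 2 ^ (d - 1) := by simp
      calc (Q₁ ∪ Q').card ≤ Q₁.card + Q'.card := Finset.card_union_le _ _
        _ ≤ 2 ^ (d - 1) + 2 ^ (d - 1) * W'.card := by omega
        _ = 2 ^ (d - 1) * (insert v1 W').card := by
            rw [Finset.card_insert_of_notMem hv1W']
            ring
end

section
/- Let d ≥ 2 and let S be a centrally symmetric convex body in ℝ^d with S = −S. Suppose Λ₁ is a lattice in ℝ^d such that the translates {S + λ : λ ∈ Λ₁} cover ℝ^d, and Λ₂ is a lattice in ℝ^d such that the translates {S + μ : μ ∈ Λ₂} are pairwise disjoint. Then for every finite family F of translates of S, τ(F) ≤ 2^d · (covol(Λ₂) / covol(Λ₁)) · ν(F). (Here vol(S)/covol(Λ₁) is the density of the lattice covering and vol(S)/covol(Λ₂) is the density of the lattice packing, so this bound equals 2^d times the ratio of the covering density to the packing density.) -/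
open Pointwise MeasureTheory

open Set
open scoped ENNReal

namespace PiercingAux

variable {d : ℕ} (b : Module.Basis (Fin d) ℝ (EuclideanSpace ℝ (Fin d)))

lemma mem_lat_iff {x : EuclideanSpace ℝ (Fin d)} :
    x ∈ Submodule.span ℤ (Set.range ⇑b) ↔ ∃ c : Fin d → ℤ, x = ∑ i, (c i : ℝ) • b i := by
  rw [Submodule.mem_span_range_iff_exists_fun]
  constructor
  · rintro ⟨c, hc⟩
    refine ⟨c, ?_⟩
    rw [← hc]
    exact Finset.sum_congr rfl fun i _ => (Int.cast_smul_eq_zsmul ℝ (c i) (b i)).symm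
  · rintro ⟨c, hc⟩
    refine ⟨c, ?_⟩
    rw [hc]
    exact Finset.sum_congr rfl fun i _ => (Int.cast_smul_eq_zsmul ℝ (c i) (b i)).symm

instance : Countable ↥(Submodule.span ℤ (Set.range ⇑b)) := by
  have h : (Submodule.span ℤ (Set.range ⇑b) : Set (EuclideanSpace ℝ (Fin d))) ⊆
      Set.range (fun c : Fin d → ℤ => ∑ i, (c i : ℝ) • b i) := by
    intro x hx
    obtain ⟨c, hc⟩ := (mem_lat_iff b).mp hx
    exact ⟨c, hc.symm⟩
  exact ((Set.countable_range _).mono h).to_subtype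


open scoped ENNReal

variable (A : Set (EuclideanSpace ℝ (Fin d)))

/-- the lattice-point counting function -/
noncomputable def cnt (u : EuclideanSpace ℝ (Fin d)) : ℝ≥0∞ :=
  ∑' g : ↥(Submodule.span ℤ (Set.range ⇑b)), A.indicator 1 (u + ↑g)

lemma cnt_measurable (hA : MeasurableSet A) : Measurable (cnt b A) := by
  apply Measurable.ennreal_tsum
  intro g
  exact (measurable_one.indicator hA).comp (measurable_add_const _)

lemma card_le_cnt {u : EuclideanSpace ℝ (Fin d)}
    (T : Finset ↥(Submodule.span ℤ (Set.range ⇑b))) (hT : ∀ g ∈ T, u + ↑g ∈ A) :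
    (T.card : ℝ≥0∞) ≤ cnt b A u := by
  have h1 : (T.card : ℝ≥0∞) = ∑ g ∈ T, A.indicator 1 (u + ↑g) := by
    rw [Finset.sum_congr rfl (fun g hg => Set.indicator_of_mem (hT g hg) 1)]
    simp
  rw [h1]
  exact ENNReal.sum_le_tsum T

lemma finite_of_cnt_ne_top {u : EuclideanSpace ℝ (Fin d)} (h : cnt b A u ≠ ⊤) :
    {g : ↥(Submodule.span ℤ (Set.range ⇑b)) | u + ↑g ∈ A}.Finite := by
  by_contra hinf
  rw [← Set.Infinite] at hinf
  obtain ⟨n, hn⟩ := ENNReal.exists_nat_gt h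
  obtain ⟨T, hTsub, hTcard⟩ := hinf.exists_subset_card_eq n
  have := card_le_cnt b A T (fun g hg => hTsub hg)
  rw [hTcard] at this
  exact absurd (this.trans_lt hn) (lt_irrefl _)

lemma cnt_eq_card {u : EuclideanSpace ℝ (Fin d)}
    (h : {g : ↥(Submodule.span ℤ (Set.range ⇑b)) | u + ↑g ∈ A}.Finite) :
    cnt b A u = h.toFinset.card := by
  rw [cnt, tsum_eq_sum (s := h.toFinset) ?_]
  · have heq : ∑ g ∈ h.toFinset, A.indicator 1 (u + ↑g)
        = ∑ _g ∈ h.toFinset, (1 : ℝ≥0∞) :=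
      Finset.sum_congr rfl (fun g hg =>
        Set.indicator_of_mem (show u + ↑g ∈ A from h.mem_toFinset.mp hg) 1)
    rw [heq]
    simp
  · intro g hg
    exact Set.indicator_of_notMem (fun hm => hg (h.mem_toFinset.mpr hm)) 1


instance : MeasurableVAdd ↥(Submodule.span ℤ (Set.range ⇑b)) (EuclideanSpace ℝ (Fin d)) :=
  (inferInstance : MeasurableVAdd
    ↥(Submodule.span ℤ (Set.range ⇑b)).toAddSubgroup (EuclideanSpace ℝ (Fin d)))

instance : VAddInvariantMeasure ↥(Submodule.span ℤ (Set.range ⇑b)) (EuclideanSpace ℝ (Fin d))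
    volume :=
  (inferInstance : VAddInvariantMeasure
    ↥(Submodule.span ℤ (Set.range ⇑b)).toAddSubgroup (EuclideanSpace ℝ (Fin d)) volume)

lemma lintegral_cnt (hA : MeasurableSet A) :
    ∫⁻ u in ZSpan.fundamentalDomain b, cnt b A u = volume A := by
  have hterm : ∀ g : ↥(Submodule.span ℤ (Set.range ⇑b)),
      ∫⁻ u in ZSpan.fundamentalDomain b, A.indicator 1 (u + ↑g)
        = volume (((-(g : EuclideanSpace ℝ (Fin d))) +ᵥ A) ∩ ZSpan.fundamentalDomain b) := by
    intro g
    have hfun : (fun u : EuclideanSpace ℝ (Fin d) => A.indicator 1 (u + ↑g))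
        = ((-(g : EuclideanSpace ℝ (Fin d))) +ᵥ A).indicator
            (1 : EuclideanSpace ℝ (Fin d) → ℝ≥0∞) := by
      funext u
      have hmem : u ∈ (-(g : EuclideanSpace ℝ (Fin d))) +ᵥ A ↔ u + ↑g ∈ A := by
        rw [Set.mem_vadd_set_iff_neg_vadd_mem, neg_neg, vadd_eq_add, add_comm]
      by_cases hu : u + ↑g ∈ A
      · rw [Set.indicator_of_mem hu, Set.indicator_of_mem (hmem.mpr hu)]
        simp
      · rw [Set.indicator_of_notMem hu, Set.indicator_of_notMem (fun hm => hu (hmem.mp hm))]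
    rw [hfun, lintegral_indicator_one (hA.const_vadd _), Measure.restrict_apply (hA.const_vadd _)]
  calc ∫⁻ u in ZSpan.fundamentalDomain b, cnt b A u
      = ∑' g : ↥(Submodule.span ℤ (Set.range ⇑b)),
          ∫⁻ u in ZSpan.fundamentalDomain b, A.indicator 1 (u + ↑g) := by
        simp only [cnt]
        exact lintegral_tsum (fun g =>
          ((measurable_one.indicator hA).comp (measurable_add_const _)).aemeasurable)
    _ = ∑' g : ↥(Submodule.span ℤ (Set.range ⇑b)),
          volume (((-(g : EuclideanSpace ℝ (Fin d))) +ᵥ A) ∩ ZSpan.fundamentalDomain b) :=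
        tsum_congr hterm
    _ = volume A := by
        rw [(ZSpan.isAddFundamentalDomain b volume).measure_eq_tsum A]
        have h1 : ∀ g : ↥(Submodule.span ℤ (Set.range ⇑b)),
            volume (((-(g : EuclideanSpace ℝ (Fin d))) +ᵥ A) ∩ ZSpan.fundamentalDomain b)
              = volume (((-g) +ᵥ A) ∩ ZSpan.fundamentalDomain b) := by
          intro g
          congr 2
        rw [tsum_congr h1]
        exact (Equiv.neg _).tsum_eq
          (fun g : ↥(Submodule.span ℤ (Set.range ⇑b)) =>
            volume ((g +ᵥ A) ∩ ZSpan.fundamentalDomain b))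


lemma volD_ne_zero : volume (ZSpan.fundamentalDomain b) ≠ 0 :=
  ZSpan.measure_fundamentalDomain_ne_zero b

lemma volD_ne_top : volume (ZSpan.fundamentalDomain b) ≠ ⊤ :=
  ((ZSpan.fundamentalDomain_isBounded b).measure_lt_top).ne

lemma exists_low (hA : MeasurableSet A) (hAfin : volume A ≠ ⊤) :
    ∃ u : EuclideanSpace ℝ (Fin d), ∃ T : Finset ↥(Submodule.span ℤ (Set.range ⇑b)),
      (∀ g : ↥(Submodule.span ℤ (Set.range ⇑b)), u + ↑g ∈ A → g ∈ T) ∧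
      (T.card : ℝ≥0∞) * volume (ZSpan.fundamentalDomain b) ≤ volume A := by
  by_contra hcon
  push_neg at hcon
  set D := ZSpan.fundamentalDomain b with hD
  set q : ℝ := (volume A / volume D).toReal with hq
  set n : ℕ := ⌊q⌋₊ + 1 with hn
  have hdiv_ne_top : volume A / volume D ≠ ⊤ :=
    (ENNReal.div_lt_top hAfin (volD_ne_zero b)).ne
  have hlt : volume A / volume D < (n : ℝ≥0∞) := by
    rw [← ENNReal.toReal_lt_toReal hdiv_ne_top (ENNReal.natCast_ne_top n),
      ENNReal.toReal_natCast]
    exact_mod_cast Nat.lt_floor_add_one q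
  have hvolA_lt : volume A < (n : ℝ≥0∞) * volume D := by
    conv_lhs => rw [← ENNReal.div_mul_cancel (volD_ne_zero b) (volD_ne_top b)
      (b := volume A)]
    exact (ENNReal.mul_lt_mul_iff_left (volD_ne_zero b) (volD_ne_top b)).mpr hlt
  have hmin : ∀ k : ℕ, volume A < (k : ℝ≥0∞) * volume D → n ≤ k := by
    intro k hk
    have h1 : volume A / volume D < (k : ℝ≥0∞) :=
      (ENNReal.div_lt_iff (Or.inl (volD_ne_zero b)) (Or.inl (volD_ne_top b))).mpr hk
    have h2 : q < (k : ℝ) := by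
      have := (ENNReal.toReal_lt_toReal hdiv_ne_top (ENNReal.natCast_ne_top k)).mpr h1
      rwa [ENNReal.toReal_natCast] at this
    have h3 := (Nat.floor_lt (show (0:ℝ) ≤ q from ENNReal.toReal_nonneg)).mpr h2
    exact Nat.succ_le_of_lt h3
  have hbig : ∀ u, (n : ℝ≥0∞) ≤ cnt b A u := by
    intro u
    by_cases htop : cnt b A u = ⊤
    · rw [htop]; exact le_top
    · have hfin := finite_of_cnt_ne_top b A htop
      have hTprop : ∀ g : ↥(Submodule.span ℤ (Set.range ⇑b)),
          u + ↑g ∈ A → g ∈ hfin.toFinset := fun g hg => hfin.mem_toFinset.mpr hg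
      have hlt2 : volume A < (hfin.toFinset.card : ℝ≥0∞) * volume D :=
        hcon u hfin.toFinset hTprop
      have hk := hmin _ hlt2
      rw [cnt_eq_card b A hfin]
      exact_mod_cast hk
  have hfinal : (n : ℝ≥0∞) * volume D ≤ ∫⁻ u in D, cnt b A u := by
    rw [← setLIntegral_const D ((n : ℕ) : ℝ≥0∞)]
    exact setLIntegral_mono (cnt_measurable b A hA) (fun u _ => hbig u)
  rw [lintegral_cnt b A hA] at hfinal
  exact absurd (hfinal.trans_lt hvolA_lt) (lt_irrefl _)


lemma exists_high (hA : MeasurableSet A) (hAfin : volume A ≠ ⊤) (hA0 : volume A ≠ 0) :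
    ∃ u : EuclideanSpace ℝ (Fin d), ∃ T : Finset ↥(Submodule.span ℤ (Set.range ⇑b)),
      (∀ g ∈ T, u + ↑g ∈ A) ∧
      volume A ≤ (T.card : ℝ≥0∞) * volume (ZSpan.fundamentalDomain b) := by
  by_contra hcon
  push_neg at hcon
  set D := ZSpan.fundamentalDomain b with hD
  set q : ℝ := (volume A / volume D).toReal with hq
  have hdiv_ne_top : volume A / volume D ≠ ⊤ :=
    (ENNReal.div_lt_top hAfin (volD_ne_zero b)).ne
  have hdiv_ne_zero : volume A / volume D ≠ 0 := by
    simp only [ne_eq, ENNReal.div_eq_zero_iff, not_or]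
    exact ⟨hA0, volD_ne_top b⟩
  have hqpos : 0 < q := ENNReal.toReal_pos hdiv_ne_zero hdiv_ne_top
  set m : ℕ := ⌈q⌉₊ - 1 with hm
  have hceil_pos : 1 ≤ ⌈q⌉₊ := Nat.one_le_ceil_iff.mpr hqpos
  have hmq : (m : ℝ) < q := by
    by_contra hcontra
    push_neg at hcontra
    have h1 : ⌈q⌉₊ ≤ m := Nat.ceil_le.mpr hcontra
    omega
  have hmlt : (m : ℝ≥0∞) < volume A / volume D := by
    rw [← ENNReal.ofReal_toReal hdiv_ne_top]
    calc (m : ℝ≥0∞) = ENNReal.ofReal (m : ℝ) := by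
          rw [ENNReal.ofReal_natCast]
      _ < ENNReal.ofReal q := (ENNReal.ofReal_lt_ofReal_iff hqpos).mpr hmq
  have hmvol : (m : ℝ≥0∞) * volume D < volume A := by
    have := (ENNReal.mul_lt_mul_iff_left (volD_ne_zero b) (volD_ne_top b)).mpr hmlt
    rwa [ENNReal.div_mul_cancel (volD_ne_zero b) (volD_ne_top b)] at this
  have hmax : ∀ k : ℕ, (k : ℝ≥0∞) * volume D < volume A → k ≤ m := by
    intro k hk
    have h1 : (k : ℝ≥0∞) < volume A / volume D :=
      (ENNReal.lt_div_iff_mul_lt (Or.inl (volD_ne_zero b)) (Or.inl (volD_ne_top b))).mpr hk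
    have h2 : (k : ℝ) < q := by
      have := (ENNReal.toReal_lt_toReal (ENNReal.natCast_ne_top k) hdiv_ne_top).mpr h1
      rwa [ENNReal.toReal_natCast] at this
    have h3 : k < ⌈q⌉₊ := Nat.lt_ceil.mpr h2
    omega
  have hsmall : ∀ u, cnt b A u ≠ ⊤ → cnt b A u ≤ (m : ℝ≥0∞) := by
    intro u htop
    have hfin := finite_of_cnt_ne_top b A htop
    have hT : ∀ g ∈ hfin.toFinset, u + ↑g ∈ A := fun g hg => hfin.mem_toFinset.mp hg
    have hlt2 : (hfin.toFinset.card : ℝ≥0∞) * volume D < volume A :=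
      hcon u hfin.toFinset hT
    have hk := hmax _ hlt2
    rw [cnt_eq_card b A hfin]
    exact_mod_cast hk
  -- the set where cnt is infinite is null in D
  have hDmeas : MeasurableSet D := ZSpan.fundamentalDomain_measurableSet b
  have hcntmeas := cnt_measurable b A hA
  have hBmeas : MeasurableSet {u | cnt b A u = ⊤} := hcntmeas (measurableSet_singleton ⊤)
  have hBnull : volume (D ∩ {u | cnt b A u = ⊤}) = 0 := by
    by_contra hpos
    have h1 : ∫⁻ u in D ∩ {u | cnt b A u = ⊤}, cnt b A u
        ≤ ∫⁻ u in D, cnt b A u := lintegral_mono_set Set.inter_subset_left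
    have h2 : ∫⁻ u in D ∩ {u | cnt b A u = ⊤}, cnt b A u = ⊤ := by
      have h3 : ∫⁻ u in D ∩ {u | cnt b A u = ⊤}, cnt b A u
          ≥ ∫⁻ _ in D ∩ {u | cnt b A u = ⊤}, (⊤ : ℝ≥0∞) := by
        refine setLIntegral_mono hcntmeas (fun x hx => ?_)
        exact le_of_eq hx.2.symm
      rw [setLIntegral_const] at h3
      rw [ENNReal.top_mul hpos] at h3
      exact top_le_iff.mp h3
    rw [lintegral_cnt b A hA] at h1
    rw [h2] at h1
    exact hAfin (top_le_iff.mp h1)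
  have hae : ∀ᵐ u ∂(volume.restrict D), cnt b A u ≤ (m : ℝ≥0∞) := by
    have hsub : {u | ¬ cnt b A u ≤ (m : ℝ≥0∞)} ∩ D ⊆ D ∩ {u | cnt b A u = ⊤} := by
      intro x hx
      refine ⟨hx.2, ?_⟩
      by_contra hxe
      exact hx.1 (hsmall x hxe)
    have := measure_mono_null hsub hBnull
    rw [ae_restrict_iff' hDmeas]
    rw [MeasureTheory.ae_iff]
    refine measure_mono_null (fun x hx => ?_) this
    simp only [Set.mem_setOf_eq, Classical.not_imp] at hx
    exact ⟨hx.2, hx.1⟩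
  have hle : ∫⁻ u in D, cnt b A u ≤ (m : ℝ≥0∞) * volume D := by
    calc ∫⁻ u in D, cnt b A u ≤ ∫⁻ _ in D, (m : ℝ≥0∞) := lintegral_mono_ae hae
      _ = (m : ℝ≥0∞) * volume D := setLIntegral_const D _
  rw [lintegral_cnt b A hA] at hle
  exact absurd (hle.trans_lt hmvol) (lt_irrefl _)


lemma stmt_eq_par : {x : EuclideanSpace ℝ (Fin d) | ∃ t : Fin d → ℝ,
    (∀ i, t i ∈ Set.Icc (0 : ℝ) 1) ∧ x = ∑ i, t i • b i} = parallelepiped ⇑b := by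
  ext x
  rw [mem_parallelepiped_iff]
  constructor
  · rintro ⟨t, ht, rfl⟩
    exact ⟨t, Set.mem_Icc.mpr ⟨fun i => (ht i).1, fun i => (ht i).2⟩, rfl⟩
  · rintro ⟨t, ht, rfl⟩
    have h := Set.mem_Icc.mp ht
    exact ⟨t, fun i => ⟨h.1 i, h.2 i⟩, rfl⟩

lemma parallelepiped_const_smul (c : ℝ) (v : Fin d → EuclideanSpace ℝ (Fin d)) :
    parallelepiped (fun i => c • v i) = c • parallelepiped v := by
  ext x
  rw [mem_parallelepiped_iff]
  constructor
  · rintro ⟨t, ht, rfl⟩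
    refine ⟨∑ i, t i • v i, (mem_parallelepiped_iff _ _).mpr ⟨t, ht, rfl⟩, ?_⟩
    show c • (∑ i, t i • v i) = ∑ i, t i • c • v i
    rw [Finset.smul_sum]
    exact Finset.sum_congr rfl fun i _ => smul_comm c (t i) (v i)
  · rintro ⟨y, hy, rfl⟩
    obtain ⟨t, ht, rfl⟩ := (mem_parallelepiped_iff _ _).mp hy
    refine ⟨t, ht, ?_⟩
    show c • (∑ i, t i • v i) = ∑ i, t i • c • v i
    rw [Finset.smul_sum]
    exact Finset.sum_congr rfl fun i _ => smul_comm c (t i) (v i)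

lemma volume_fd_eq_par : volume (ZSpan.fundamentalDomain b) = volume (parallelepiped ⇑b) :=
  measure_congr (ZSpan.fundamentalDomain_ae_parallelepiped b volume)

end PiercingAux

/-- Let `S` be a centrally symmetric convex body in `ℝ^d` (`d ≥ 2`). If the lattice
generated by the basis `b₁` gives a covering of `ℝ^d` by translates of `S`, and the
lattice generated by the basis `b₂` gives a packing by translates of `S`, then
for every finite family of translates of `S`,
`τ(F) ≤ 2^d · (covol(Λ₂)/covol(Λ₁)) · ν(F)`. -/
theorem piercing_translates_symmetric_lattice_bound
    (d : ℕ) (hd : 2 ≤ d)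
    (S : Set (EuclideanSpace ℝ (Fin d)))
    (hScompact : IsCompact S) (hSconv : Convex ℝ S)
    (hSint : (interior S).Nonempty) (hSsymm : S = -S)
    (b₁ b₂ : Module.Basis (Fin d) ℝ (EuclideanSpace ℝ (Fin d)))
    (hcover : ∀ x : EuclideanSpace ℝ (Fin d),
      ∃ c : Fin d → ℤ, x ∈ (∑ i, (c i : ℝ) • b₁ i) +ᵥ S)
    (hpack : ∀ c c' : Fin d → ℤ, c ≠ c' →
      Disjoint ((∑ i, (c i : ℝ) • b₂ i) +ᵥ S) ((∑ i, (c' i : ℝ) • b₂ i) +ᵥ S))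
    (V : Finset (EuclideanSpace ℝ (Fin d))) :
    ∃ P W : Finset (EuclideanSpace ℝ (Fin d)),
      W ⊆ V ∧
      (∀ v ∈ V, ∃ x ∈ P, x ∈ v +ᵥ S) ∧
      ((W : Set (EuclideanSpace ℝ (Fin d))).Pairwise fun u w =>
        Disjoint (u +ᵥ S) (w +ᵥ S)) ∧
      (P.card : ℝ) ≤ 2 ^ d *
        ((volume {x : EuclideanSpace ℝ (Fin d) | ∃ t : Fin d → ℝ,
            (∀ i, t i ∈ Set.Icc (0 : ℝ) 1) ∧ x = ∑ i, t i • b₂ i}).toReal /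
         (volume {x : EuclideanSpace ℝ (Fin d) | ∃ t : Fin d → ℝ,
            (∀ i, t i ∈ Set.Icc (0 : ℝ) 1) ∧ x = ∑ i, t i • b₁ i}).toReal) *
        (W.card : ℝ) := by
  classical
  -- notation
  set vol₂ : ℝ≥0∞ := volume {x : EuclideanSpace ℝ (Fin d) | ∃ t : Fin d → ℝ,
      (∀ i, t i ∈ Set.Icc (0 : ℝ) 1) ∧ x = ∑ i, t i • b₂ i} with hvol₂
  set vol₁ : ℝ≥0∞ := volume {x : EuclideanSpace ℝ (Fin d) | ∃ t : Fin d → ℝ,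
      (∀ i, t i ∈ Set.Icc (0 : ℝ) 1) ∧ x = ∑ i, t i • b₁ i} with hvol₁
  -- basic facts about S
  obtain ⟨x₀, hx₀i⟩ := hSint
  have hx₀S : x₀ ∈ S := interior_subset hx₀i
  have hnegmem : ∀ y, y ∈ S → -y ∈ S := by
    intro y hy
    rw [hSsymm]
    simpa using hy
  have h0S : (0 : EuclideanSpace ℝ (Fin d)) ∈ S := by
    have h := hSconv hx₀S (hnegmem _ hx₀S)
      (by norm_num : (0:ℝ) ≤ 2⁻¹) (by norm_num : (0:ℝ) ≤ 2⁻¹) (by norm_num)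
    simpa [smul_neg] using h
  have hhalf : ∀ a c : EuclideanSpace ℝ (Fin d), a ∈ S → c ∈ S →
      (2⁻¹ : ℝ) • (a - c) ∈ S := by
    intro a c ha hc
    have h := hSconv ha (hnegmem _ hc)
      (by norm_num : (0:ℝ) ≤ 2⁻¹) (by norm_num : (0:ℝ) ≤ 2⁻¹) (by norm_num)
    simpa [smul_sub, smul_neg, sub_eq_add_neg] using h
  have hmemv : ∀ (v x : EuclideanSpace ℝ (Fin d)), x ∈ v +ᵥ S ↔ x - v ∈ S := by
    intro v x
    rw [Set.mem_vadd_set_iff_neg_vadd_mem, vadd_eq_add, neg_add_eq_sub]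
  -- the union of the family
  set A : Set (EuclideanSpace ℝ (Fin d)) := ⋃ v ∈ V, (v +ᵥ S) with hA
  have hSmeas : MeasurableSet S := hScompact.isClosed.measurableSet
  have hAm : MeasurableSet A := V.measurableSet_biUnion (fun v _ => hSmeas.const_vadd v)
  have hAfin : volume A ≠ ⊤ := by
    have h1 : volume A ≤ ∑ v ∈ V, volume (v +ᵥ S) := measure_biUnion_finset_le V _
    have h2 : ∑ v ∈ V, volume (v +ᵥ S) = (V.card : ℝ≥0∞) * volume S := by
      rw [Finset.sum_congr rfl (fun v _ => measure_vadd (μ := volume) v S), Finset.sum_const,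
        nsmul_eq_mul]
    refine (h1.trans_lt ?_).ne
    rw [h2]
    exact ENNReal.mul_lt_top (lt_top_iff_ne_top.mpr (ENNReal.natCast_ne_top _)) hScompact.measure_lt_top
  -- case of empty family
  rcases V.eq_empty_or_nonempty with hVemp | hV
  · refine ⟨∅, ∅, Finset.empty_subset V, ?_, by simp, by simp⟩
    intro v hv
    rw [hVemp] at hv
    exact absurd hv (Finset.notMem_empty v)
  have hA0 : volume A ≠ 0 := by
    obtain ⟨v₀, hv₀⟩ := hV
    have h1 : (0:ℝ≥0∞) < volume (interior S) := isOpen_interior.measure_pos volume ⟨x₀, hx₀i⟩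
    have h2 : volume (interior S) ≤ volume A := by
      calc volume (interior S) ≤ volume S := measure_mono interior_subset
        _ = volume (v₀ +ᵥ S) := (measure_vadd (μ := volume) v₀ S).symm
        _ ≤ volume A := measure_mono (fun x hx => Set.mem_biUnion hv₀ hx)
    exact (h1.trans_le h2).ne'
  -- piercing side
  obtain ⟨u, T₁, hT₁mem, hT₁card⟩ := PiercingAux.exists_low b₁ A hAm hAfin
  set P : Finset (EuclideanSpace ℝ (Fin d)) := T₁.image (fun g => u + ↑g) with hP
  have hpierce : ∀ v ∈ V, ∃ x ∈ P, x ∈ v +ᵥ S := by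
    intro v hv
    obtain ⟨c, hc⟩ := hcover (v - u)
    set z : EuclideanSpace ℝ (Fin d) := ∑ i, (c i : ℝ) • b₁ i with hz
    have hzmem : z ∈ Submodule.span ℤ (Set.range ⇑b₁) :=
      (PiercingAux.mem_lat_iff b₁).mpr ⟨c, rfl⟩
    have h1 : (v - u) - z ∈ S := (hmemv z (v - u)).mp hc
    have h2 : (u + z) ∈ v +ᵥ S := by
      rw [hmemv]
      have h3 := hnegmem _ h1
      have h4 : -((v - u) - z) = (u + z) - v := by abel
      rwa [h4] at h3
    have h3 : u + z ∈ A := Set.mem_biUnion hv h2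
    have h4 : (⟨z, hzmem⟩ : ↥(Submodule.span ℤ (Set.range ⇑b₁))) ∈ T₁ :=
      hT₁mem ⟨z, hzmem⟩ h3
    exact ⟨u + z, Finset.mem_image.mpr ⟨⟨z, hzmem⟩, h4, rfl⟩, h2⟩
  -- packing side : the doubled lattice
  have hw : ∀ _i : Fin d, IsUnit ((2:ℝ)) := fun _ => isUnit_iff_ne_zero.mpr two_ne_zero
  set b₂' : Module.Basis (Fin d) ℝ (EuclideanSpace ℝ (Fin d)) := b₂.isUnitSMul hw with hb₂'def
  have hb₂'app : ∀ i, b₂' i = (2:ℝ) • b₂ i := fun i => Module.Basis.isUnitSMul_apply hw i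
  obtain ⟨t, T₂, hT₂mem, hT₂card⟩ := PiercingAux.exists_high b₂' A hAm hAfin hA0
  -- choice of an owner for points of A
  set pk : EuclideanSpace ℝ (Fin d) → EuclideanSpace ℝ (Fin d) := fun x =>
    if h : ∃ v, v ∈ V ∧ x ∈ v +ᵥ S then h.choose else 0 with hpk
  have hpkspec : ∀ x ∈ A, pk x ∈ V ∧ x ∈ pk x +ᵥ S := by
    intro x hx
    obtain ⟨v, hv, hxv⟩ := Set.mem_iUnion₂.mp hx
    have hex : ∃ v, v ∈ V ∧ x ∈ v +ᵥ S := ⟨v, hv, hxv⟩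
    simp only [hpk, dif_pos hex]
    exact hex.choose_spec
  set W : Finset (EuclideanSpace ℝ (Fin d)) := T₂.image (fun g => pk (t + ↑g)) with hW
  -- difference of two lattice points of the doubled lattice
  have hdiff : ∀ g g' : ↥(Submodule.span ℤ (Set.range ⇑b₂')), g ≠ g' →
      ∃ cc : Fin d → ℤ, cc ≠ 0 ∧
        ((g : EuclideanSpace ℝ (Fin d)) - ↑g') = (2:ℝ) • (∑ i, (cc i : ℝ) • b₂ i) := by
    intro g g' hne
    obtain ⟨a, ha⟩ := (PiercingAux.mem_lat_iff b₂').mp g.2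
    obtain ⟨a', ha'⟩ := (PiercingAux.mem_lat_iff b₂').mp g'.2
    refine ⟨a - a', ?_, ?_⟩
    · intro h0
      have haa : a = a' := by
        funext i
        have := congrFun h0 i
        simpa [sub_eq_zero] using this
      exact hne (Subtype.ext (by rw [ha, ha', haa]))
    · rw [ha, ha', Finset.smul_sum, ← Finset.sum_sub_distrib]
      refine Finset.sum_congr rfl fun i _ => ?_
      rw [hb₂'app i]
      simp only [Pi.sub_apply]
      push_cast
      module
  -- packing exclusion : a nonzero lattice vector of Λ₂ is not a sum of two elements of S
  have hexcl : ∀ cc : Fin d → ℤ, cc ≠ 0 → ∀ s1 ∈ S, ∀ s2 ∈ S,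
      (∑ i, (cc i : ℝ) • b₂ i) ≠ s1 + s2 := by
    intro cc h0 s1 hs1 s2 hs2 heq
    have hdisj := hpack cc 0 h0
    have h1 : (∑ i, ((0 : Fin d → ℤ) i : ℝ) • b₂ i) = 0 := by simp
    rw [h1, zero_vadd] at hdisj
    have hz2 : s2 ∈ (∑ i, (cc i : ℝ) • b₂ i) +ᵥ S := by
      rw [hmemv, heq]
      have : s2 - (s1 + s2) = -s1 := by abel
      rw [this]
      exact hnegmem _ hs1
    exact Set.disjoint_left.mp hdisj hz2 hs2
  -- injectivity of the owner map
  have hinj : ∀ g ∈ T₂, ∀ g' ∈ T₂, pk (t + ↑g) = pk (t + ↑g') → g = g' := by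
    intro g hg g' hg' hpeq
    by_contra hne
    obtain ⟨cc, hcc0, hccd⟩ := hdiff g g' hne
    obtain ⟨hv1, hm1⟩ := hpkspec (t + ↑g) (hT₂mem g hg)
    obtain ⟨hv2, hm2⟩ := hpkspec (t + ↑g') (hT₂mem g' hg')
    rw [hpeq] at hm1
    have hs1 : (t + ↑g) - pk (t + ↑g') ∈ S := (hmemv _ _).mp hm1
    have hs2 : (t + ↑g') - pk (t + ↑g') ∈ S := (hmemv _ _).mp hm2
    have hzeq : (∑ i, (cc i : ℝ) • b₂ i)
        = (2⁻¹ : ℝ) • (((t + ↑g) - pk (t + ↑g')) - ((t + ↑g') - pk (t + ↑g'))) := by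
      have h5 : ((t + ↑g) - pk (t + ↑g')) - ((t + ↑g') - pk (t + ↑g'))
          = ((g : EuclideanSpace ℝ (Fin d)) - ↑g') := by abel
      rw [h5, hccd, smul_smul]
      norm_num
    have hzS : (∑ i, (cc i : ℝ) • b₂ i) ∈ S := by
      rw [hzeq]
      exact hhalf _ _ hs1 hs2
    exact hexcl cc hcc0 _ hzS 0 h0S (by rw [add_zero])
  have hWcard : W.card = T₂.card :=
    Finset.card_image_of_injOn (fun g hg g' hg' h => hinj g hg g' hg' h)
  have hWsub : W ⊆ V := by
    intro w hw'
    obtain ⟨g, hg, rfl⟩ := Finset.mem_image.mp hw'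
    exact (hpkspec _ (hT₂mem g hg)).1
  have hWdisj : ((W : Set (EuclideanSpace ℝ (Fin d)))).Pairwise fun x y =>
      Disjoint (x +ᵥ S) (y +ᵥ S) := by
    intro x hx y hy hxy
    obtain ⟨g, hg, rfl⟩ := Finset.mem_image.mp (Finset.mem_coe.mp hx)
    obtain ⟨g', hg', rfl⟩ := Finset.mem_image.mp (Finset.mem_coe.mp hy)
    have hne : g ≠ g' := fun h => hxy (by rw [h])
    rw [Set.disjoint_left]
    intro p hp hp'
    obtain ⟨cc, hcc0, hccd⟩ := hdiff g g' hne
    obtain ⟨hv1, hm1⟩ := hpkspec (t + ↑g) (hT₂mem g hg)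
    obtain ⟨hv2, hm2⟩ := hpkspec (t + ↑g') (hT₂mem g' hg')
    have ha : (t + ↑g) - pk (t + ↑g) ∈ S := (hmemv _ _).mp hm1
    have hb : (t + ↑g') - pk (t + ↑g') ∈ S := (hmemv _ _).mp hm2
    have hf : p - pk (t + ↑g) ∈ S := (hmemv _ _).mp hp
    have he : p - pk (t + ↑g') ∈ S := (hmemv _ _).mp hp'
    have hzeq : (∑ i, (cc i : ℝ) • b₂ i)
        = (2⁻¹ : ℝ) • (((t + ↑g) - pk (t + ↑g)) - (p - pk (t + ↑g)))
          + (2⁻¹ : ℝ) • ((p - pk (t + ↑g')) - ((t + ↑g') - pk (t + ↑g'))) := by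
      rw [← smul_add]
      have h5 : (((t + ↑g) - pk (t + ↑g)) - (p - pk (t + ↑g)))
          + ((p - pk (t + ↑g')) - ((t + ↑g') - pk (t + ↑g')))
          = ((g : EuclideanSpace ℝ (Fin d)) - ↑g') := by abel
      rw [h5, hccd, smul_smul]
      norm_num
    exact hexcl cc hcc0 _ (hhalf _ _ ha hf) _ (hhalf _ _ he hb) hzeq
  -- volume identities
  have hvol₁eq : volume (ZSpan.fundamentalDomain b₁) = vol₁ := by
    rw [PiercingAux.volume_fd_eq_par b₁, hvol₁, PiercingAux.stmt_eq_par b₁]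
  have hpar2 : parallelepiped ⇑b₂' = (2:ℝ) • parallelepiped ⇑b₂ := by
    have h1 : ⇑b₂' = fun i => (2:ℝ) • b₂ i := funext hb₂'app
    rw [h1, PiercingAux.parallelepiped_const_smul]
  have hvol₂eq : volume (ZSpan.fundamentalDomain b₂') = (2:ℝ≥0∞) ^ d * vol₂ := by
    rw [PiercingAux.volume_fd_eq_par b₂', hpar2, MeasureTheory.Measure.addHaar_smul,
      finrank_euclideanSpace_fin, hvol₂, PiercingAux.stmt_eq_par b₂]
    congr 1
    rw [abs_of_pos (by positivity : (0:ℝ) < 2 ^ d), ENNReal.ofReal_pow (by norm_num : (0:ℝ) ≤ 2)]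
    norm_num
  -- chain of inequalities in ℝ≥0∞
  have hkey : (P.card : ℝ≥0∞) * vol₁ ≤ (W.card : ℝ≥0∞) * ((2:ℝ≥0∞) ^ d * vol₂) := by
    calc (P.card : ℝ≥0∞) * vol₁ ≤ (T₁.card : ℝ≥0∞) * vol₁ := by
          gcongr
          exact_mod_cast Finset.card_image_le
      _ ≤ volume A := by rw [← hvol₁eq]; exact hT₁card
      _ ≤ (T₂.card : ℝ≥0∞) * volume (ZSpan.fundamentalDomain b₂') := hT₂card
      _ = (W.card : ℝ≥0∞) * ((2:ℝ≥0∞) ^ d * vol₂) := by rw [hWcard, hvol₂eq]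
  -- pass to real numbers
  have hvol₁0 : vol₁ ≠ 0 := by rw [← hvol₁eq]; exact PiercingAux.volD_ne_zero b₁
  have hvol₁top : vol₁ ≠ ⊤ := by rw [← hvol₁eq]; exact PiercingAux.volD_ne_top b₁
  have hvol₂top : vol₂ ≠ ⊤ := by
    have h1 := PiercingAux.volD_ne_top b₂'
    rw [hvol₂eq] at h1
    intro h2
    rw [h2] at h1
    simp [ENNReal.mul_top, ENNReal.pow_eq_top_iff] at h1
  have hRHSne : (W.card : ℝ≥0∞) * ((2:ℝ≥0∞) ^ d * vol₂) ≠ ⊤ := by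
    refine ENNReal.mul_ne_top (ENNReal.natCast_ne_top _) (ENNReal.mul_ne_top ?_ hvol₂top)
    exact (ENNReal.pow_ne_top (by norm_num))
  have hreal := ENNReal.toReal_mono hRHSne hkey
  rw [ENNReal.toReal_mul, ENNReal.toReal_mul, ENNReal.toReal_mul, ENNReal.toReal_pow,
    ENNReal.toReal_natCast, ENNReal.toReal_natCast, ENNReal.toReal_ofNat] at hreal
  have hr1pos : 0 < vol₁.toReal := ENNReal.toReal_pos hvol₁0 hvol₁top
  refine ⟨P, W, hWsub, hpierce, hWdisj, ?_⟩
  rw [show (2:ℝ) ^ d * (vol₂.toReal / vol₁.toReal) * (W.card : ℝ)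
      = ((W.card : ℝ) * ((2:ℝ) ^ d * vol₂.toReal)) / vol₁.toReal by ring,
    le_div_iff₀ hr1pos]
  linarith
end

section
/- For every centrally symmetric convex body S in the plane ℝ² (S = −S) and every finite family F of translates of S, τ(F) ≤ (16/3) · ν(F). -/
open Pointwise Topology

noncomputable section

local notation "E" => EuclideanSpace ℝ (Fin 2)

namespace PiercingTranslatesAux

/-- Key estimate: if `x, y, x - y` are "unit vectors" for a gauge `g` and
`d = s•x + t•y` with `s,t ≥ 0` and `1 ≤ g d ≤ 2`, then `g (d - (x+y)) ≤ 1`. -/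
lemma lemA (g : E → ℝ)
    (gadd : ∀ p q : E, g (p + q) ≤ g p + g q)
    (gsmul : ∀ (c : ℝ) (p : E), 0 ≤ c → g (c • p) = c * g p)
    (gneg : ∀ p : E, g (-p) = g p)
    (gsupp : ∀ p : E, g p = 1 → ∃ f : E →L[ℝ] ℝ, f p = 1 ∧ ∀ w, f w ≤ g w)
    (x y : E) (hx : g x = 1) (hy : g y = 1) (hxy : g (x - y) = 1)
    {s t : ℝ} (hs : 0 ≤ s) (ht : 0 ≤ t)
    (h1 : 1 ≤ g (s • x + t • y)) (h2 : g (s • x + t • y) ≤ 2) :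
    g (s • x + t • y - (x + y)) ≤ 1 := by
  obtain ⟨f, hfx, hfle⟩ := gsupp x hx
  obtain ⟨f', hf'y, hf'le⟩ := gsupp y hy
  have hfy : (0:ℝ) ≤ f y := by
    have h1' : f (x - y) ≤ 1 := by rw [← hxy]; exact hfle _
    rw [map_sub] at h1'
    linarith
  have hf'x : (0:ℝ) ≤ f' x := by
    have hyx : g (y - x) = 1 := by
      rw [show y - x = -(x - y) by abel, gneg, hxy]
    have h1' : f' (y - x) ≤ 1 := by rw [← hyx]; exact hf'le _
    rw [map_sub] at h1'
    linarith
  have hfd : f (s • x + t • y) ≤ 2 := le_trans (hfle _) h2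
  have hf'd : f' (s • x + t • y) ≤ 2 := le_trans (hf'le _) h2
  rw [map_add, map_smul, map_smul, smul_eq_mul, smul_eq_mul, hfx] at hfd
  rw [map_add, map_smul, map_smul, smul_eq_mul, smul_eq_mul, hf'y] at hf'd
  have hs2 : s ≤ 2 := by nlinarith [mul_nonneg ht hfy]
  have ht2 : t ≤ 2 := by nlinarith [mul_nonneg hs hf'x]
  have hσ1 : 1 ≤ s + t := by
    have h := gadd (s • x) (t • y)
    rw [gsmul s x hs, gsmul t y ht, hx, hy] at h
    linarith
  rcases le_or_gt 2 (s + t) with hσ2 | hσ2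
  · -- case σ ≥ 2
    have hσpos : (0:ℝ) < s + t := by linarith
    have hid : (s + t) • (s • x + t • y - (x + y)) =
        (s + t - 2) • (s • x + t • y) + (2*s - (s+t)) • (x - y) := by
      module
    have hkey : (s + t) * g (s • x + t • y - (x + y)) ≤ (s + t) * 1 := by
      rw [← gsmul _ _ hσpos.le, hid]
      rcases le_or_gt 0 (2*s - (s+t)) with hc | hc
      · calc g ((s + t - 2) • (s • x + t • y) + (2*s - (s+t)) • (x - y))
            ≤ g ((s + t - 2) • (s • x + t • y)) + g ((2*s - (s+t)) • (x - y)) := gadd _ _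
          _ = (s + t - 2) * g (s • x + t • y) + (2*s - (s+t)) * g (x - y) := by
              rw [gsmul _ _ (by linarith), gsmul _ _ hc]
          _ ≤ (s + t - 2) * 2 + (2*s - (s+t)) * 1 := by
              rw [hxy]
              have : (s + t - 2) * g (s • x + t • y) ≤ (s + t - 2) * 2 :=
                mul_le_mul_of_nonneg_left h2 (by linarith)
              linarith
          _ ≤ (s + t) * 1 := by nlinarith
      · have hneg : (2*s - (s+t)) • (x - y) = -(((s+t) - 2*s) • (x - y)) := by module
        calc g ((s + t - 2) • (s • x + t • y) + (2*s - (s+t)) • (x - y))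
            ≤ g ((s + t - 2) • (s • x + t • y)) + g ((2*s - (s+t)) • (x - y)) := gadd _ _
          _ = (s + t - 2) * g (s • x + t • y) + ((s+t) - 2*s) * g (x - y) := by
              rw [hneg, gneg, gsmul _ _ (by linarith), gsmul _ _ (by linarith)]
          _ ≤ (s + t - 2) * 2 + ((s+t) - 2*s) * 1 := by
              rw [hxy]
              have : (s + t - 2) * g (s • x + t • y) ≤ (s + t - 2) * 2 :=
                mul_le_mul_of_nonneg_left h2 (by linarith)
              linarith
          _ ≤ (s + t) * 1 := by nlinarith
    exact le_of_mul_le_mul_left hkey hσpos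
  · -- case σ < 2
    rcases le_or_gt s 1 with hs1 | hs1
    · rcases le_or_gt t 1 with ht1 | ht1
      · have hid : s • x + t • y - (x + y) = -((1 - s) • x + (1 - t) • y) := by module
        rw [hid, gneg]
        calc g ((1 - s) • x + (1 - t) • y)
            ≤ g ((1 - s) • x) + g ((1 - t) • y) := gadd _ _
          _ = (1 - s) * 1 + (1 - t) * 1 := by
              rw [gsmul _ _ (by linarith), gsmul _ _ (by linarith), hx, hy]
          _ ≤ 1 := by linarith
      · have hid : s • x + t • y - (x + y) = (t - 1) • (y - x) + (2 - (s+t)) • (-x) := by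
          module
        have hyx : g (y - x) = 1 := by
          rw [show y - x = -(x - y) by abel, gneg, hxy]
        rw [hid]
        calc g ((t - 1) • (y - x) + (2 - (s+t)) • (-x))
            ≤ g ((t - 1) • (y - x)) + g ((2 - (s+t)) • (-x)) := gadd _ _
          _ = (t - 1) * 1 + (2 - (s+t)) * 1 := by
              rw [gsmul _ _ (by linarith), gsmul _ _ (by linarith), hyx, gneg, hx]
          _ ≤ 1 := by linarith
    · have hid : s • x + t • y - (x + y) = (s - 1) • (x - y) + (2 - (s+t)) • (-y) := by
        module
      rw [hid]
      calc g ((s - 1) • (x - y) + (2 - (s+t)) • (-y))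
          ≤ g ((s - 1) • (x - y)) + g ((2 - (s+t)) • (-y)) := gadd _ _
        _ = (s - 1) * 1 + (2 - (s+t)) * 1 := by
            rw [gsmul _ _ (by linarith), gsmul _ _ (by linarith), hxy, gneg, hy]
        _ ≤ 1 := by linarith

lemma cover (g : E → ℝ)
    (gadd : ∀ p q : E, g (p + q) ≤ g p + g q)
    (gsmul : ∀ (c : ℝ) (p : E), 0 ≤ c → g (c • p) = c * g p)
    (gneg : ∀ p : E, g (-p) = g p)
    (gsupp : ∀ p : E, g p = 1 → ∃ f : E →L[ℝ] ℝ, f p = 1 ∧ ∀ w, f w ≤ g w)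
    (a b : E) (ha : g a = 1) (hb : g b = 1) (hab : g (a - b) = 1)
    (hdet : 0 < a 0 * b 1 - a 1 * b 0)
    (d : E) (hd2 : g d ≤ 2) (hηd : 0 ≤ a 0 * d 1 - a 1 * d 0) :
    ∃ c : E, (c = 0 ∨ c = a + b ∨ c = (2:ℝ) • b - a ∨ c = b - (2:ℝ) • a) ∧
      g (d - c) ≤ 1 := by
  by_cases hd1 : g d ≤ 1
  · exact ⟨0, Or.inl rfl, by rwa [sub_zero]⟩
  push_neg at hd1
  have h1 : 1 ≤ g d := hd1.le
  set Δ : ℝ := a 0 * b 1 - a 1 * b 0 with hΔdef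
  set β : ℝ := (a 0 * d 1 - a 1 * d 0) / Δ with hβdef
  set α : ℝ := (d 0 * b 1 - d 1 * b 0) / Δ with hαdef
  have hβ : 0 ≤ β := div_nonneg hηd hdet.le
  have hd : d = α • a + β • b := by
    apply PiLp.ext
    intro i
    fin_cases i <;>
      simp only [PiLp.add_apply, PiLp.smul_apply, smul_eq_mul, hαdef, hβdef] <;>
      · show _ = _
        field_simp
        simp only [Fin.zero_eta, Fin.mk_one, Fin.isValue, hΔdef]
        ring
  rcases le_or_gt 0 α with hα | hα
  · have key := lemA g gadd gsmul gneg gsupp a b ha hb hab hα hβ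
      (by rw [← hd]; exact h1) (by rw [← hd]; exact hd2)
    refine ⟨a + b, Or.inr (Or.inl rfl), ?_⟩
    have heq : d - (a + b) = α • a + β • b - (a + b) := by rw [← hd]
    rw [heq]; exact key
  · rcases le_or_gt 0 (α + β) with hαβ | hαβ
    · have hba : g (b - a) = 1 := by
        rw [show b - a = -(a - b) by abel, gneg, hab]
      have hdiff : g (b - (b - a)) = 1 := by
        rw [show b - (b - a) = a by abel, ha]
      have hrepr : (α + β) • b + (-α) • (b - a) = α • a + β • b := by module
      have key := lemA g gadd gsmul gneg gsupp b (b - a) hb hba hdiff hαβ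
        (by linarith : (0:ℝ) ≤ -α)
        (by rw [hrepr, ← hd]; exact h1) (by rw [hrepr, ← hd]; exact hd2)
      refine ⟨(2:ℝ) • b - a, Or.inr (Or.inr (Or.inl rfl)), ?_⟩
      have heq : d - ((2:ℝ) • b - a) =
          (α + β) • b + (-α) • (b - a) - (b + (b - a)) := by
        rw [hrepr, ← hd]; module
      rw [heq]; exact key
    · have hba : g (b - a) = 1 := by
        rw [show b - a = -(a - b) by abel, gneg, hab]
      have hna : g (-a) = 1 := by rw [gneg, ha]
      have hdiff : g ((b - a) - (-a)) = 1 := by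
        rw [show (b - a) - (-a) = b by abel, hb]
      have hrepr : β • (b - a) + (-(α + β)) • (-a) = α • a + β • b := by module
      have key := lemA g gadd gsmul gneg gsupp (b - a) (-a) hba hna hdiff hβ
        (by linarith : (0:ℝ) ≤ -(α + β))
        (by rw [hrepr, ← hd]; exact h1) (by rw [hrepr, ← hd]; exact hd2)
      refine ⟨b - (2:ℝ) • a, Or.inr (Or.inr (Or.inr rfl)), ?_⟩
      have heq : d - (b - (2:ℝ) • a) =
          β • (b - a) + (-(α + β)) • (-a) - ((b - a) + -a) := by
        rw [hrepr, ← hd]; module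
      rw [heq]; exact key

lemma exists_hexagon (g : E → ℝ)
    (gzero : g 0 = 0)
    (gsmul : ∀ (c : ℝ) (p : E), 0 ≤ c → g (c • p) = c * g p)
    (gneg : ∀ p : E, g (-p) = g p)
    (gcont : Continuous g)
    (gpos : ∀ p : E, p ≠ 0 → 0 < g p) :
    ∃ a b : E, g a = 1 ∧ g b = 1 ∧ g (a - b) = 1 := by
  have hznz : ∀ θ : ℝ,
      Real.cos θ • EuclideanSpace.single (0:Fin 2) (1:ℝ)
        + Real.sin θ • EuclideanSpace.single (1:Fin 2) (1:ℝ) ≠ 0 := by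
    intro θ hzero
    have h0 := congrFun (congrArg (fun v : E => (v : Fin 2 → ℝ)) hzero) 0
    have h1 := congrFun (congrArg (fun v : E => (v : Fin 2 → ℝ)) hzero) 1
    simp only [PiLp.add_apply, PiLp.smul_apply, smul_eq_mul,
      EuclideanSpace.single_apply] at h0 h1
    norm_num at h0 h1
    nlinarith [Real.sin_sq_add_cos_sq θ]
  set z : ℝ → E := fun θ =>
    Real.cos θ • EuclideanSpace.single (0:Fin 2) (1:ℝ)
      + Real.sin θ • EuclideanSpace.single (1:Fin 2) (1:ℝ) with hzdef
  have hznz' : ∀ θ, z θ ≠ 0 := hznz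
  have hzcont : Continuous z :=
    (Real.continuous_cos.smul continuous_const).add
      (Real.continuous_sin.smul continuous_const)
  set u : ℝ → E := fun θ => (g (z θ))⁻¹ • z θ with hudef
  have hgu : ∀ θ, g (u θ) = 1 := by
    intro θ
    show g ((g (z θ))⁻¹ • z θ) = 1
    rw [gsmul _ _ (inv_nonneg.2 (gpos _ (hznz' θ)).le)]
    exact inv_mul_cancel₀ (gpos _ (hznz' θ)).ne'
  have hucont : Continuous u :=
    ((gcont.comp hzcont).inv₀ (fun θ => (gpos _ (hznz' θ)).ne')).smul hzcont
  have hhcont : Continuous (fun θ => g (u 0 - u θ)) :=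
    gcont.comp ((hucont.comp continuous_const).sub hucont)
  have hz0 : z 0 = EuclideanSpace.single (0:Fin 2) (1:ℝ) := by
    show Real.cos 0 • _ + Real.sin 0 • _ = _
    simp
  have hzπ : z Real.pi = -(EuclideanSpace.single (0:Fin 2) (1:ℝ)) := by
    show Real.cos Real.pi • _ + Real.sin Real.pi • _ = _
    simp
  have huπ : u Real.pi = -(u 0) := by
    show (g (z Real.pi))⁻¹ • z Real.pi = -((g (z 0))⁻¹ • z 0)
    rw [hzπ, hz0, gneg, smul_neg]
  have hh0 : (fun θ => g (u 0 - u θ)) 0 = 0 := by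
    simp only [sub_self, gzero]
  have hhπ : (fun θ => g (u 0 - u θ)) Real.pi = 2 := by
    show g (u 0 - u Real.pi) = 2
    rw [huπ, sub_neg_eq_add, ← two_smul ℝ (u 0), gsmul _ _ (by norm_num), hgu]
    norm_num
  have hmem1 : (1:ℝ) ∈ Set.Icc ((fun θ => g (u 0 - u θ)) 0)
      ((fun θ => g (u 0 - u θ)) Real.pi) := by
    rw [hh0, hhπ]; norm_num
  obtain ⟨θ, hθI, hθ⟩ :=
    intermediate_value_Icc Real.pi_pos.le hhcont.continuousOn hmem1
  exact ⟨u 0, u θ, hgu 0, hgu θ, hθ⟩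

lemma det_ne (g : E → ℝ)
    (gzero : g 0 = 0)
    (gsmul : ∀ (c : ℝ) (p : E), 0 ≤ c → g (c • p) = c * g p)
    (gneg : ∀ p : E, g (-p) = g p)
    (a b : E) (ha : g a = 1) (hb : g b = 1) (hab : g (a - b) = 1) :
    a 0 * b 1 - a 1 * b 0 ≠ 0 := by
  intro h0Δ
  have hane : a ≠ 0 := by
    intro h'
    rw [h', gzero] at ha; norm_num at ha
  have hcase : ∃ c : ℝ, b = c • a := by
    rcases eq_or_ne (a 0) 0 with h00 | h00
    · have h11 : a 1 ≠ 0 := by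
        intro h11
        apply hane
        apply PiLp.ext
        intro i
        fin_cases i
        · exact h00
        · exact h11
      have hb0 : b 0 = 0 := by
        rw [h00] at h0Δ
        have : a 1 * b 0 = 0 := by linarith
        exact (mul_eq_zero.1 this).resolve_left h11
      refine ⟨b 1 / a 1, ?_⟩
      apply PiLp.ext
      intro i
      fin_cases i
      · show b 0 = b 1 / a 1 * a 0
        rw [hb0, h00]; ring
      · show b 1 = b 1 / a 1 * a 1
        field_simp
    · refine ⟨b 0 / a 0, ?_⟩
      apply PiLp.ext
      intro i
      fin_cases i
      · show b 0 = b 0 / a 0 * a 0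
        field_simp
      · show b 1 = b 0 / a 0 * a 1
        field_simp
        linarith [h0Δ]
  obtain ⟨c, hbc⟩ := hcase
  rcases le_or_gt 0 c with hc | hc
  · have hgb : g b = c := by rw [hbc, gsmul _ _ hc, ha, mul_one]
    have hc1 : c = 1 := by rw [← hgb, hb]
    rw [hc1, one_smul] at hbc
    rw [hbc, sub_self, gzero] at hab
    norm_num at hab
  · have hgb : g b = -c := by
      rw [hbc, show c • a = -((-c) • a) by module, gneg,
        gsmul _ _ (by linarith), ha, mul_one]
    have hc1 : c = -1 := by
      have h1 : -c = 1 := by rw [← hgb, hb]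
      linarith
    rw [hc1] at hbc
    have h2a : a - b = (2:ℝ) • a := by rw [hbc]; module
    rw [h2a, gsmul _ _ (by norm_num), ha] at hab
    norm_num at hab



end PiercingTranslatesAux

open PiercingTranslatesAux in
/-- For every centrally symmetric convex body `S` in the plane and every finite family of
translates of `S`, `τ(F) ≤ (16/3) · ν(F)`. -/
theorem piercing_translates_symmetric_planar
    (S : Set (EuclideanSpace ℝ (Fin 2)))
    (hScompact : IsCompact S) (hSconv : Convex ℝ S)
    (hSint : (interior S).Nonempty) (hSsymm : S = -S)
    (V : Finset (EuclideanSpace ℝ (Fin 2))) :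
    ∃ P W : Finset (EuclideanSpace ℝ (Fin 2)),
      W ⊆ V ∧
      (∀ v ∈ V, ∃ x ∈ P, x ∈ v +ᵥ S) ∧
      ((W : Set (EuclideanSpace ℝ (Fin 2))).Pairwise fun u w =>
        Disjoint (u +ᵥ S) (w +ᵥ S)) ∧
      (P.card : ℝ) ≤ 16 / 3 * (W.card : ℝ) := by
  classical
  set g : E → ℝ := gauge S with hgdef
  -- 0 is an interior point
  have h0int : (0:E) ∈ interior S := by
    obtain ⟨x, hx⟩ := hSint
    have hx' : -x ∈ interior S := by
      have hsub : -(interior S) ⊆ S := by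
        intro y hy
        rw [hSsymm]
        have h2 : -y ∈ S := interior_subset (Set.mem_neg.1 hy)
        simpa using Set.neg_mem_neg.2 h2
      exact interior_maximal hsub isOpen_interior.neg (Set.neg_mem_neg.2 hx)
    have hcomb := hSconv.interior hx hx'
      (by norm_num : (0:ℝ) ≤ 1/2) (by norm_num : (0:ℝ) ≤ 1/2) (by norm_num)
    have : (1/2 : ℝ) • x + (1/2 : ℝ) • (-x) = (0:E) := by module
    rwa [this] at hcomb
  have h0nhds : S ∈ 𝓝 (0:E) := mem_interior_iff_mem_nhds.1 h0int
  have habs : Absorbent ℝ S := absorbent_nhds_zero h0nhds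
  have hbdd : Bornology.IsVonNBounded ℝ S :=
    NormedSpace.isVonNBounded_of_isBounded _ hScompact.isBounded
  have hscl : IsClosed S := hScompact.isClosed
  have hmem : ∀ x : E, x ∈ S ↔ g x ≤ 1 := by
    intro x
    constructor
    · exact fun h => gauge_le_one_of_mem h
    · intro h
      have := (gauge_le_one_iff_mem_closure hSconv h0nhds).1 h
      rwa [hscl.closure_eq] at this
  have gzero : g 0 = 0 := gauge_zero
  have gadd : ∀ p q : E, g (p + q) ≤ g p + g q := fun p q =>
    gauge_add_le hSconv habs p q
  have gsmul : ∀ (c : ℝ) (p : E), 0 ≤ c → g (c • p) = c * g p := by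
    intro c p hc
    rw [hgdef, gauge_smul_of_nonneg hc, smul_eq_mul]
  have gneg : ∀ p : E, g (-p) = g p := by
    intro p
    apply gauge_neg
    intro x hx
    rw [hSsymm]
    exact Set.neg_mem_neg.2 hx
  have gpos : ∀ p : E, p ≠ 0 → 0 < g p := fun p hp =>
    (gauge_pos habs hbdd).2 hp
  have gcont : Continuous g := continuous_gauge hSconv h0nhds
  have gsupp : ∀ p : E, g p = 1 → ∃ f : E →L[ℝ] ℝ, f p = 1 ∧ ∀ w, f w ≤ g w := by
    intro p hp
    have hpnotint : p ∉ interior S := by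
      intro h
      have := (gauge_lt_one_iff_mem_interior hSconv h0nhds).2 h
      rw [← hgdef] at this
      linarith [hp.ge.trans_lt this]
    obtain ⟨f₀, hf₀⟩ := geometric_hahn_banach_open_point
      (hSconv.interior) isOpen_interior hpnotint
    have hc : (0:ℝ) < f₀ p := by
      have := hf₀ 0 h0int
      simpa using this
    have hfS : ∀ y ∈ S, f₀ y ≤ f₀ p := by
      intro y hy
      by_contra hlt
      push_neg at hlt
      have hfy : 0 < f₀ y := lt_trans hc hlt
      set tt : ℝ := (f₀ p + f₀ y) / (2 * f₀ y) with httdef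
      have htt0 : 0 < tt := by positivity
      have htt1 : tt < 1 := by
        rw [httdef, div_lt_one (by positivity)]
        linarith
      have hmemint : (1 - tt) • (0:E) + tt • y ∈ interior S :=
        Convex.combo_interior_closure_mem_interior hSconv h0int
          (subset_closure hy) (by linarith) htt0.le (by ring)
      have h2 : tt • y ∈ interior S := by
        rwa [smul_zero, zero_add] at hmemint
      have h3 := hf₀ _ h2
      rw [map_smul, smul_eq_mul] at h3
      have h4 : tt * f₀ y = (f₀ p + f₀ y) / 2 := by
        rw [httdef]; field_simp
      rw [h4] at h3
      linarith
    refine ⟨(f₀ p)⁻¹ • f₀, ?_, ?_⟩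
    · simp [inv_mul_cancel₀ hc.ne']
    · intro w
      rcases eq_or_ne w 0 with rfl | hw
      · simp [gzero]
      · have hgw : 0 < g w := gpos w hw
        have hw' : (g w)⁻¹ • w ∈ S := by
          rw [hmem, gsmul _ _ (inv_nonneg.2 hgw.le), inv_mul_cancel₀ hgw.ne']
        have h5 := hfS _ hw'
        rw [map_smul, smul_eq_mul] at h5
        have h6 : f₀ w ≤ f₀ p * g w := by
          have := mul_le_mul_of_nonneg_left h5 hgw.le
          rw [← mul_assoc, mul_inv_cancel₀ hgw.ne', one_mul] at this
          linarith [this]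
        show (f₀ p)⁻¹ * f₀ w ≤ g w
        rw [inv_mul_le_iff₀ hc]
        linarith
  -- hexagon and covering data
  obtain ⟨a, b, ha, hb, hab⟩ := exists_hexagon g gzero gsmul gneg gcont gpos
  have hΔne := det_ne g gzero gsmul gneg a b ha hb hab
  obtain ⟨η, c₁, c₂, c₃, hηsub, hcover⟩ :
      ∃ (η : E → ℝ) (c₁ c₂ c₃ : E),
        (∀ p q : E, η (p - q) = η p - η q) ∧
        ∀ d : E, g d ≤ 2 → 0 ≤ η d →
          ∃ c : E, (c = 0 ∨ c = c₁ ∨ c = c₂ ∨ c = c₃) ∧ g (d - c) ≤ 1 := by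
    rcases hΔne.lt_or_gt with hneg | hpos
    · refine ⟨fun w => b 0 * w 1 - b 1 * w 0, b + a, (2:ℝ) • a - b, a - (2:ℝ) • b,
        ?_, ?_⟩
      · intro p q; simp only [PiLp.sub_apply]; ring
      · intro d hd2 hηd
        have hba : g (b - a) = 1 := by
          rw [show b - a = -(a - b) by abel, gneg, hab]
        exact cover g gadd gsmul gneg gsupp b a hb ha hba (by linarith) d hd2 hηd
    · refine ⟨fun w => a 0 * w 1 - a 1 * w 0, a + b, (2:ℝ) • b - a, b - (2:ℝ) • a,
        ?_, ?_⟩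
      · intro p q; simp only [PiLp.sub_apply]; ring
      · intro d hd2 hηd
        exact cover g gadd gsmul gneg gsupp a b ha hb hab hpos d hd2 hηd
  -- greedy induction
  suffices hmain : ∀ U : Finset E, ∃ P W : Finset E,
      W ⊆ U ∧ (∀ v ∈ U, ∃ x ∈ P, x ∈ v +ᵥ S) ∧
      ((W : Set E).Pairwise fun u w => Disjoint (u +ᵥ S) (w +ᵥ S)) ∧
      P.card ≤ 4 * W.card by
    obtain ⟨P, W, h1, h2, h3, h4⟩ := hmain V
    refine ⟨P, W, h1, h2, h3, ?_⟩
    have h4' : (P.card : ℝ) ≤ 4 * (W.card : ℝ) := by exact_mod_cast h4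
    have : (0:ℝ) ≤ (W.card : ℝ) := Nat.cast_nonneg _
    linarith
  intro U
  induction U using Finset.strongInduction with
  | _ U ih =>
    rcases U.eq_empty_or_nonempty with rfl | hne
    · exact ⟨∅, ∅, Finset.Subset.refl _, by simp, by simp, by simp⟩
    · obtain ⟨u, huU, humin⟩ := U.exists_min_image η hne
      set U' : Finset E := U.filter (fun v => 2 < g (v - u)) with hU'def
      have hU'ss : U' ⊂ U := by
        refine (Finset.ssubset_iff_of_subset (Finset.filter_subset _ _)).2 ⟨u, huU, ?_⟩
        simp only [hU'def, Finset.mem_filter, sub_self]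
        rw [hgdef]
        push_neg
        intro _
        rw [gauge_zero]
        norm_num
      obtain ⟨P', W', hW'U', hp', hpair', hcard'⟩ := ih U' hU'ss
      have huW' : u ∉ W' := by
        intro h
        have := (Finset.mem_filter.1 (hW'U' h)).2
        rw [sub_self, gzero] at this
        norm_num at this
      refine ⟨P' ∪ {u, u + c₁, u + c₂, u + c₃}, insert u W', ?_, ?_, ?_, ?_⟩
      · exact Finset.insert_subset huU (hW'U'.trans (Finset.filter_subset _ _))
      · intro v hv
        by_cases hvfar : 2 < g (v - u)
        · obtain ⟨x, hxP', hx⟩ := hp' v (Finset.mem_filter.2 ⟨hv, hvfar⟩)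
          exact ⟨x, Finset.mem_union_left _ hxP', hx⟩
        · push_neg at hvfar
          have hηv : 0 ≤ η (v - u) := by
            rw [hηsub]
            have := humin v hv
            linarith
          obtain ⟨c, hcmem, hcle⟩ := hcover (v - u) hvfar hηv
          refine ⟨u + c, Finset.mem_union_right _ ?_, ?_⟩
          · rcases hcmem with rfl | rfl | rfl | rfl <;> simp
          · rw [Set.mem_vadd_set_iff_neg_vadd_mem, vadd_eq_add]
            have heq : -v + (u + c) = -((v - u) - c) := by abel
            rw [heq, hSsymm]
            exact Set.neg_mem_neg.2 ((hmem _).2 hcle)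
      · rw [Finset.coe_insert]
        apply Set.Pairwise.insert hpair'
        intro w hwW' hne'
        have hwfar : 2 < g (w - u) := (Finset.mem_filter.1 (hW'U' hwW')).2
        have hdisj : Disjoint (u +ᵥ S) (w +ᵥ S) := by
          rw [Set.disjoint_left]
          rintro x hxu hxw
          rw [Set.mem_vadd_set_iff_neg_vadd_mem, vadd_eq_add] at hxu hxw
          have h1 : g (-u + x) ≤ 1 := (hmem _).1 hxu
          have h2 : g (-w + x) ≤ 1 := (hmem _).1 hxw
          have h3 : g (w - u) ≤ 2 := by
            have heq : w - u = (-u + x) + -(-w + x) := by abel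
            rw [heq]
            calc g ((-u + x) + -(-w + x))
                ≤ g (-u + x) + g (-(-w + x)) := gadd _ _
              _ = g (-u + x) + g (-w + x) := by rw [gneg]
              _ ≤ 2 := by linarith
          linarith
        exact ⟨hdisj, hdisj.symm⟩
      · have hWcard : (insert u W').card = W'.card + 1 :=
          Finset.card_insert_of_notMem huW'
        have h4 : ({u, u + c₁, u + c₂, u + c₃} : Finset E).card ≤ 4 := by
          apply le_trans (Finset.card_insert_le _ _)
          apply Nat.succ_le_succ
          apply le_trans (Finset.card_insert_le _ _)
          apply Nat.succ_le_succ
          apply le_trans (Finset.card_insert_le _ _)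
          apply Nat.succ_le_succ
          exact Finset.card_singleton _ |>.le
        have h5 := Finset.card_union_le P' ({u, u + c₁, u + c₂, u + c₃} : Finset E)
        rw [hWcard]
        omega
end
end

section
/- Let S be a centrally symmetric convex body in ℝ^d with S = −S, and let Λ be a lattice in ℝ^d such that the translates {S + λ : λ ∈ Λ} cover ℝ^d. Then for every finite family F of translates of S, τ(F) ≤ vol(⋃F) / covol(Λ), where vol(⋃F) is the Lebesgue volume of the union of the members of F. (Equivalently, τ(F) ≤ θ · vol(⋃F)/vol(S) where θ = vol(S)/covol(Λ) is the density of the lattice covering.) -/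
open Pointwise MeasureTheory Submodule ENNReal

/-- Let `S` be a centrally symmetric convex body in `ℝ^d`, and suppose the lattice
generated by the basis `b` gives a covering of `ℝ^d` by translates of `S`. Then for every
finite family `F` of translates of `S`, `τ(F) ≤ vol(⋃F)/covol(Λ)`. -/
theorem piercing_translates_lattice_covering_bound
    (d : ℕ)
    (S : Set (EuclideanSpace ℝ (Fin d)))
    (hScompact : IsCompact S) (hSconv : Convex ℝ S)
    (hSint : (interior S).Nonempty) (hSsymm : S = -S)
    (b : Module.Basis (Fin d) ℝ (EuclideanSpace ℝ (Fin d)))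
    (hcover : ∀ x : EuclideanSpace ℝ (Fin d),
      ∃ c : Fin d → ℤ, x ∈ (∑ i, (c i : ℝ) • b i) +ᵥ S)
    (V : Finset (EuclideanSpace ℝ (Fin d))) :
    ∃ P : Finset (EuclideanSpace ℝ (Fin d)),
      (∀ v ∈ V, ∃ x ∈ P, x ∈ v +ᵥ S) ∧
      (P.card : ℝ) ≤ (volume (⋃ v ∈ V, v +ᵥ S)).toReal /
        (volume {x : EuclideanSpace ℝ (Fin d) | ∃ t : Fin d → ℝ,
          (∀ i, t i ∈ Set.Icc (0 : ℝ) 1) ∧ x = ∑ i, t i • b i}).toReal := by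
  classical
  set Λ : AddSubgroup (EuclideanSpace ℝ (Fin d)) := (span ℤ (Set.range b)).toAddSubgroup
    with hΛdef
  haveI hΛc : Countable Λ := by
    have hcnt : Set.Countable ((span ℤ (Set.range b)) : Set (EuclideanSpace ℝ (Fin d))) := by
      have h : ((span ℤ (Set.range b)) : Set (EuclideanSpace ℝ (Fin d)))
          = Set.range (fun c : Fin d → ℤ => ∑ i, c i • b i) := by
        ext x
        simp [SetLike.mem_coe, mem_span_range_iff_exists_fun, eq_comm]
      rw [h]; exact Set.countable_range _
    exact hcnt.to_subtype
  set F : Set (EuclideanSpace ℝ (Fin d)) := ZSpan.fundamentalDomain b with hFdef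
  set U : Set (EuclideanSpace ℝ (Fin d)) := ⋃ v ∈ V, v +ᵥ S with hUdef
  -- basic facts about U
  have hUcompact : IsCompact U := by
    refine V.finite_toSet.isCompact_biUnion (fun v _ => ?_)
    rw [← Set.image_vadd]
    exact hScompact.image (continuous_const_vadd v)
  have hUmeas : MeasurableSet U := hUcompact.isClosed.measurableSet
  have hUsub : ∀ v ∈ V, v +ᵥ S ⊆ U := fun v hv => Set.subset_biUnion_of_mem (u := fun v => v +ᵥ S) hv
  have hUlt : volume U ≠ ⊤ := hUcompact.measure_lt_top.ne
  -- basic facts about the covolume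
  have hF0 : volume F ≠ 0 := ZSpan.measure_fundamentalDomain_ne_zero b
  have hFtop : volume F ≠ ⊤ := ((ZSpan.fundamentalDomain_isBounded b).measure_lt_top).ne
  -- the denominator set equals the parallelepiped, whose volume is the covolume
  have hpar : {x : EuclideanSpace ℝ (Fin d) | ∃ t : Fin d → ℝ,
      (∀ i, t i ∈ Set.Icc (0 : ℝ) 1) ∧ x = ∑ i, t i • b i} = parallelepiped ⇑b := by
    ext x
    simp only [parallelepiped, Set.mem_image, Set.mem_Icc, Set.mem_setOf_eq, Pi.le_def]
    constructor
    · rintro ⟨t, ht, rfl⟩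
      exact ⟨t, ⟨fun i => (ht i).1, fun i => (ht i).2⟩, rfl⟩
    · rintro ⟨t, ⟨h0, h1⟩, rfl⟩
      exact ⟨t, fun i => ⟨h0 i, h1 i⟩, rfl⟩
  have hden : volume {x : EuclideanSpace ℝ (Fin d) | ∃ t : Fin d → ℝ,
      (∀ i, t i ∈ Set.Icc (0 : ℝ) 1) ∧ x = ∑ i, t i • b i} = volume F := by
    rw [hpar, hFdef]
    exact (measure_congr (ZSpan.fundamentalDomain_ae_parallelepiped b volume)).symm
  -- the key piercing property: through every translate of the lattice there is a point
  -- of the shifted lattice in each member of the family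
  have key : ∀ x : EuclideanSpace ℝ (Fin d), ∀ v ∈ V,
      ∃ p, (p ∈ U ∧ p - x ∈ Λ) ∧ p ∈ v +ᵥ S := by
    intro x v hv
    obtain ⟨c, hc⟩ := hcover (v - x)
    set l : EuclideanSpace ℝ (Fin d) := ∑ i, (c i : ℝ) • b i with hl
    have hlΛ : l ∈ Λ := by
      refine sum_mem (fun i _ => ?_)
      have h6 : ((c i : ℤ) : ℝ) • b i = (c i) • b i := Int.cast_smul_eq_zsmul ℝ (c i) (b i)
      rw [hΛdef, Submodule.mem_toAddSubgroup, h6]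
      exact zsmul_mem (subset_span (Set.mem_range_self i)) (c i)
    obtain ⟨s₀, hs₀S, hs₀⟩ := hc
    -- hs₀ : l +ᵥ s₀ = v - x
    refine ⟨x + l, ⟨?_, by simpa using hlΛ⟩, ?_⟩
    · refine hUsub v hv ?_
      refine ⟨-s₀, ?_, ?_⟩
      · rw [hSsymm]; exact Set.neg_mem_neg.mpr hs₀S
      · have : l + s₀ = v - x := hs₀
        simp only [vadd_eq_add]
        linear_combination (norm := module) -this
    · refine ⟨-s₀, ?_, ?_⟩
      · rw [hSsymm]; exact Set.neg_mem_neg.mpr hs₀S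
      · have : l + s₀ = v - x := hs₀
        simp only [vadd_eq_add]
        linear_combination (norm := module) -this
  -- finiteness of candidate piercing sets
  have hTfin : ∀ x : EuclideanSpace ℝ (Fin d),
      Set.Finite {p : EuclideanSpace ℝ (Fin d) | p ∈ U ∧ p - x ∈ Λ} := by
    intro x
    haveI : DiscreteTopology ((Λ : Set (EuclideanSpace ℝ (Fin d)))) :=
      (inferInstance : DiscreteTopology (span ℤ (Set.range b)).toAddSubgroup)
    have hclosed : IsClosed ((Λ : Set (EuclideanSpace ℝ (Fin d)))) :=
      AddSubgroup.isClosed_of_discrete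
    have hbd : Bornology.IsBounded ((-x) +ᵥ U) := by
      rw [← Set.image_vadd]
      exact (hUcompact.image (continuous_const_vadd (-x))).isBounded
    have hfin : Set.Finite (((-x) +ᵥ U) ∩ (Λ : Set (EuclideanSpace ℝ (Fin d)))) :=
      Metric.finite_isBounded_inter_isClosed DiscreteTopology.isDiscrete hbd hclosed
    have hsub : {p : EuclideanSpace ℝ (Fin d) | p ∈ U ∧ p - x ∈ Λ}
        ⊆ (fun l => x + l) '' ((((-x) +ᵥ U) ∩ (Λ : Set (EuclideanSpace ℝ (Fin d))))) := by
      rintro p ⟨hpU, hpΛ⟩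
      have hx1 : p - x ∈ (-x) +ᵥ U := by
        rw [Set.mem_vadd_set_iff_neg_vadd_mem]
        have e : -(-x) +ᵥ (p - x) = p := by rw [vadd_eq_add]; abel
        rw [e]; exact hpU
      exact ⟨p - x, ⟨hx1, hpΛ⟩, by show x + (p - x) = p; module⟩
    exact (hfin.image _).subset hsub
  set n : ℕ := ⌊(volume U).toReal / (volume F).toReal⌋₊ with hn
  -- main counting step
  have main : ∃ x ∈ F, ((hTfin x).toFinset.card ≤ n) := by
    by_contra hcon
    push_neg at hcon
    -- lower bound the measure of U using the fundamental domain decomposition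
    have hsum : volume U = ∑' l : Λ, volume (((l : EuclideanSpace ℝ (Fin d)) +ᵥ U) ∩ F) :=
      (ZSpan.isAddFundamentalDomain' b volume).measure_eq_tsum U
    have hmeasA : ∀ l : Λ, MeasurableSet ((l : EuclideanSpace ℝ (Fin d)) +ᵥ U) :=
      fun l => hUmeas.const_vadd _
    have hswap : ∑' l : Λ, volume (((l : EuclideanSpace ℝ (Fin d)) +ᵥ U) ∩ F)
        = ∫⁻ y in F, ∑' l : Λ,
            Set.indicator ((l : EuclideanSpace ℝ (Fin d)) +ᵥ U) 1 y ∂volume := by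
      rw [lintegral_tsum (fun l => ((measurable_one.indicator (hmeasA l)).aemeasurable))]
      refine tsum_congr (fun l => ?_)
      rw [lintegral_indicator_one (hmeasA l), Measure.restrict_apply (hmeasA l)]
    have hpt : ∀ y ∈ F, ((n + 1 : ℕ) : ℝ≥0∞)
        ≤ ∑' l : Λ, Set.indicator ((l : EuclideanSpace ℝ (Fin d)) +ᵥ U) 1 y := by
      intro y hy
      have hcard : n + 1 ≤ (hTfin y).toFinset.card := hcon y hy
      set φ : EuclideanSpace ℝ (Fin d) → Λ := fun p =>
        if h : p - y ∈ Λ then ⟨y - p, (neg_sub p y) ▸ neg_mem h⟩ else 0 with hφ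
      set ss : Finset Λ := (hTfin y).toFinset.image φ with hss
      have hinj : Set.InjOn φ ((hTfin y).toFinset : Set (EuclideanSpace ℝ (Fin d))) := by
        intro p hp q hq hpq
        rw [Finset.mem_coe, Set.Finite.mem_toFinset] at hp hq
        rw [hφ] at hpq
        simp only [dif_pos hp.2, dif_pos hq.2, Subtype.mk.injEq] at hpq
        exact sub_right_injective hpq
      have hsscard : ss.card = (hTfin y).toFinset.card :=
        Finset.card_image_of_injOn hinj
      have hone : ∀ l ∈ ss, Set.indicator ((l : EuclideanSpace ℝ (Fin d)) +ᵥ U) 1 y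
          = (1 : ℝ≥0∞) := by
        intro l hl
        rw [hss] at hl
        obtain ⟨p, hp, rfl⟩ := Finset.mem_image.mp hl
        rw [Set.Finite.mem_toFinset] at hp
        have hmem : y ∈ ((φ p : EuclideanSpace ℝ (Fin d)) +ᵥ U) := by
          refine ⟨p, hp.1, ?_⟩
          show (φ p : EuclideanSpace ℝ (Fin d)) +ᵥ p = y
          simp only [hφ, dif_pos hp.2]
          rw [vadd_eq_add]
          show y - p + p = y
          module
        simp [Set.indicator_of_mem hmem]
      calc ((n + 1 : ℕ) : ℝ≥0∞) ≤ (ss.card : ℝ≥0∞) := by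
            exact_mod_cast (by exact_mod_cast hsscard ▸ hcard : (n+1) ≤ ss.card)
        _ = ∑ l ∈ ss, Set.indicator ((l : EuclideanSpace ℝ (Fin d)) +ᵥ U) 1 y := by
            rw [Finset.sum_congr rfl hone]
            simp
        _ ≤ _ := ENNReal.sum_le_tsum ss
    have hlow : ((n + 1 : ℕ) : ℝ≥0∞) * volume F ≤ volume U := by
      have h1 : ∫⁻ _ in F, ((n + 1 : ℕ) : ℝ≥0∞) ∂volume = ((n + 1 : ℕ) : ℝ≥0∞) * volume F :=
        setLIntegral_const _ _
      have h2 : ∫⁻ _ in F, ((n + 1 : ℕ) : ℝ≥0∞) ∂volume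
          ≤ ∫⁻ y in F, ∑' l : Λ,
              Set.indicator ((l : EuclideanSpace ℝ (Fin d)) +ᵥ U) 1 y ∂volume :=
        setLIntegral_mono (Measurable.ennreal_tsum
          (fun l => measurable_one.indicator (hmeasA l))) hpt
      rw [hsum, hswap]
      rw [← h1]
      exact h2
    have hreal : ((n + 1 : ℕ) : ℝ) * (volume F).toReal ≤ (volume U).toReal := by
      have h3 := ENNReal.toReal_mono hUlt hlow
      rw [ENNReal.toReal_mul, ENNReal.toReal_natCast] at h3
      exact h3
    have hFpos : 0 < (volume F).toReal := ENNReal.toReal_pos hF0 hFtop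
    have hge : ((n + 1 : ℕ) : ℝ) ≤ (volume U).toReal / (volume F).toReal := by
      rw [le_div_iff₀ hFpos]; exact hreal
    have hlt : (volume U).toReal / (volume F).toReal < n + 1 := Nat.lt_floor_add_one _
    push_cast at hge
    linarith
  obtain ⟨x₀, hx₀F, hx₀⟩ := main
  refine ⟨(hTfin x₀).toFinset, ?_, ?_⟩
  · intro v hv
    obtain ⟨p, hp1, hp2⟩ := key x₀ v hv
    exact ⟨p, (Set.Finite.mem_toFinset _).mpr hp1, hp2⟩
  · rw [hden]
    refine le_trans ?_ (Nat.floor_le (by positivity))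
    exact_mod_cast hx₀
end

section
/- Let S be a centrally symmetric convex body in ℝ^d with S = −S, and let Λ be a lattice in ℝ^d such that the translates {S + λ : λ ∈ Λ} are pairwise disjoint. Then for every finite family F of translates of S, ν(F) ≥ vol(⋃F) / (2^d · covol(Λ)), where vol(⋃F) is the Lebesgue volume of the union of the members of F. (Equivalently, ν(F) ≥ (δ/2^d) · vol(⋃F)/vol(S) where δ = vol(S)/covol(Λ) is the density of the lattice packing.) -/
open Pointwise MeasureTheory

/-- Let `S` be a centrally symmetric convex body in `ℝ^d`, and suppose the lattice
generated by the basis `b` gives a packing of `ℝ^d` by translates of `S`. Then for every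
finite family `F` of translates of `S`, `ν(F) ≥ vol(⋃F)/(2^d · covol(Λ))`. -/
theorem packing_translates_lattice_packing_bound
    (d : ℕ)
    (S : Set (EuclideanSpace ℝ (Fin d)))
    (hScompact : IsCompact S) (hSconv : Convex ℝ S)
    (hSint : (interior S).Nonempty) (hSsymm : S = -S)
    (b : Module.Basis (Fin d) ℝ (EuclideanSpace ℝ (Fin d)))
    (hpack : ∀ c c' : Fin d → ℤ, c ≠ c' →
      Disjoint ((∑ i, (c i : ℝ) • b i) +ᵥ S) ((∑ i, (c' i : ℝ) • b i) +ᵥ S))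
    (V : Finset (EuclideanSpace ℝ (Fin d))) :
    ∃ W : Finset (EuclideanSpace ℝ (Fin d)),
      W ⊆ V ∧
      ((W : Set (EuclideanSpace ℝ (Fin d))).Pairwise fun u w =>
        Disjoint (u +ᵥ S) (w +ᵥ S)) ∧
      (volume (⋃ v ∈ V, v +ᵥ S)).toReal /
        (2 ^ d * (volume {x : EuclideanSpace ℝ (Fin d) | ∃ t : Fin d → ℝ,
          (∀ i, t i ∈ Set.Icc (0 : ℝ) 1) ∧ x = ∑ i, t i • b i}).toReal) ≤
        (W.card : ℝ) := by
  classical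
  set U : Set (EuclideanSpace ℝ (Fin d)) := ⋃ v ∈ V, v +ᵥ S with hUdef
  -- membership in translates
  have hmemv : ∀ (A : Set (EuclideanSpace ℝ (Fin d))) (v x : (EuclideanSpace ℝ (Fin d))), x ∈ v +ᵥ A ↔ x - v ∈ A := by
    intro A v x
    rw [Set.mem_vadd_set_iff_neg_vadd_mem, vadd_eq_add, ← sub_eq_neg_add]
  -- basic facts on S
  have hSne : S.Nonempty := hSint.mono interior_subset
  have hnegS : ∀ x ∈ S, -x ∈ S := by
    intro x hx
    rw [hSsymm] at hx
    exact Set.mem_neg.mp hx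
  have hhalf : ∀ (C : Set (EuclideanSpace ℝ (Fin d))), Convex ℝ C → ∀ x ∈ C, ∀ y ∈ C, ∀ z : (EuclideanSpace ℝ (Fin d)),
      (2:ℝ) • z = x + y → z ∈ C := by
    intro C hC x hx y hy z hz
    have h1 : z = ((1:ℝ)/2) • x + ((1:ℝ)/2) • y := by
      have h2 : ((1:ℝ)/2) • ((2:ℝ) • z) = ((1:ℝ)/2) • (x + y) := by rw [hz]
      rw [smul_smul, smul_add] at h2
      norm_num at h2
      exact h2
    rw [h1]
    exact hC hx hy (by norm_num) (by norm_num) (by norm_num)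
  have h0S : (0 : (EuclideanSpace ℝ (Fin d))) ∈ S := by
    obtain ⟨s₀, hs₀⟩ := hSne
    exact hhalf S hSconv s₀ hs₀ (-s₀) (hnegS _ hs₀) 0 (by simp)
  -- hpack consequence
  have hlam : ∀ c : Fin d → ℤ, c ≠ 0 → (∑ i, (c i : ℝ) • b i) ∉ S + S := by
    intro c hc hmem
    obtain ⟨s₁, hs₁, s₂, hs₂, hsum⟩ := Set.mem_add.mp hmem
    have hd := hpack c 0 hc
    rw [Set.disjoint_left] at hd
    refine hd (a := s₁) ?_ ?_
    · rw [hmemv]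
      have : s₁ - ∑ i, (c i : ℝ) • b i = -s₂ := by rw [← hsum]; abel
      rw [this]
      exact hnegS _ hs₂
    · simpa using hs₁
  -- the doubled lattice
  set b2 : Module.Basis (Fin d) ℝ (EuclideanSpace ℝ (Fin d)) := b.unitsSMul (fun _ => Units.mk0 (2:ℝ) two_ne_zero) with hb2def
  have hb2 : ∀ i, b2 i = (2:ℝ) • b i := by
    intro i
    rw [hb2def, Module.Basis.unitsSMul_apply]
    rfl
  set L : Submodule ℤ (EuclideanSpace ℝ (Fin d)) := Submodule.span ℤ (Set.range ⇑b2) with hLdef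
  have hLmem : ∀ w : (EuclideanSpace ℝ (Fin d)), w ∈ L → w ≠ 0 →
      ∃ c : Fin d → ℤ, c ≠ 0 ∧ w = (2:ℝ) • (∑ i, (c i : ℝ) • b i) := by
    intro w hw hw0
    have h1 := (b2.mem_span_iff_repr_mem ℤ w).mp hw
    choose c hc using h1
    refine ⟨c, ?_, ?_⟩
    · rintro rfl
      apply hw0
      have h2 := b2.sum_repr w
      simp only [← hc, Pi.zero_apply, algebraMap_int_eq, map_zero, zero_smul,
        Finset.sum_const_zero] at h2
      exact h2.symm
    · conv_lhs => rw [← b2.sum_repr w]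
      rw [Finset.smul_sum]
      refine Finset.sum_congr rfl fun i _ => ?_
      rw [← hc i, hb2 i]
      simp only [algebraMap_int_eq, eq_intCast]
      rw [smul_comm]
  -- core geometric lemma
  have hcore : ∀ (g g' v v' x : (EuclideanSpace ℝ (Fin d))), g ∈ L → g' ∈ L → g ≠ g' →
      (x - g) - v ∈ S → (x - g') - v' ∈ S → v - v' ∈ S + S → False := by
    intro g g' v v' x hg hg' hne hs hs' hvv
    obtain ⟨c, hc0, hceq⟩ := hLmem (g' - g) (Submodule.sub_mem L hg' hg)
      (sub_ne_zero.mpr (Ne.symm hne))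
    apply hlam c hc0
    obtain ⟨p₁, hp₁, p₂, hp₂, hp⟩ := Set.mem_add.mp hvv
    obtain rfl : p₂ = v - v' - p₁ := by rw [← hp]; abel
    refine hhalf (S + S) (hSconv.add hSconv) _
      (Set.add_mem_add hp₁ hs) _ (Set.add_mem_add hp₂ (hnegS _ hs')) _ ?_
    rw [← hceq]
    abel
  -- maximal packing subfamily
  have hCne : (Finset.filter (fun W : Finset (EuclideanSpace ℝ (Fin d)) =>
      (W : Set (EuclideanSpace ℝ (Fin d))).Pairwise fun u w => Disjoint (u +ᵥ S) (w +ᵥ S)) V.powerset).Nonempty := by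
    refine ⟨∅, ?_⟩
    simp [Set.pairwise_empty]
  obtain ⟨W, hWmem, hWmax⟩ := Finset.exists_max_image _ Finset.card hCne
  rw [Finset.mem_filter, Finset.mem_powerset] at hWmem
  obtain ⟨hWsub, hWpair⟩ := hWmem
  refine ⟨W, hWsub, hWpair, ?_⟩
  set m := W.card with hmdef
  -- counting lemma: for every x, the set of lattice points g with x ∈ g +ᵥ U is small
  have hcount : ∀ x : (EuclideanSpace ℝ (Fin d)), ∃ hfin : {g : ↥L | x ∈ (g : (EuclideanSpace ℝ (Fin d))) +ᵥ U}.Finite,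
      hfin.toFinset.card ≤ m := by
    intro x
    set T : Set ↥L := {g : ↥L | x ∈ (g : (EuclideanSpace ℝ (Fin d))) +ᵥ U} with hTdef
    have hTmem : ∀ g ∈ T, ∃ v ∈ V, (x - (g:(EuclideanSpace ℝ (Fin d)))) - v ∈ S := by
      intro g hg
      rw [hTdef, Set.mem_setOf_eq, hmemv] at hg
      rw [hUdef] at hg
      simp only [Set.mem_iUnion, exists_prop] at hg
      obtain ⟨v, hv, hxv⟩ := hg
      exact ⟨v, hv, (hmemv S v _).mp hxv⟩
    set Φ : ↥L → (EuclideanSpace ℝ (Fin d)) := fun g =>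
      if h : ∃ v ∈ V, (x - (g:(EuclideanSpace ℝ (Fin d)))) - v ∈ S then h.choose else 0 with hΦdef
    have hΦspec : ∀ g ∈ T, Φ g ∈ V ∧ (x - (g:(EuclideanSpace ℝ (Fin d)))) - Φ g ∈ S := by
      intro g hg
      have h := hTmem g hg
      rw [hΦdef]
      simp only [dif_pos h]
      exact ⟨h.choose_spec.1, h.choose_spec.2⟩
    have hkey : ∀ g ∈ T, ∀ g' ∈ T, g ≠ g' →
        Φ g ≠ Φ g' ∧ Disjoint (Φ g +ᵥ S) (Φ g' +ᵥ S) := by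
      intro g hg g' hg' hne
      have hne' : (g : (EuclideanSpace ℝ (Fin d))) ≠ (g' : (EuclideanSpace ℝ (Fin d))) := fun h => hne (Subtype.coe_injective h)
      have hs := (hΦspec g hg).2
      have hs' := (hΦspec g' hg').2
      constructor
      · intro heq
        refine hcore g g' (Φ g) (Φ g') x g.2 g'.2 hne' hs hs' ?_
        rw [heq, sub_self]
        simpa using Set.add_mem_add h0S h0S
      · by_contra hdisj
        obtain ⟨y, hy1, hy2⟩ := Set.not_disjoint_iff.mp hdisj
        refine hcore g g' (Φ g) (Φ g') x g.2 g'.2 hne' hs hs' ?_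
        have : Φ g - Φ g' = (y - Φ g') + -(y - Φ g) := by abel
        rw [this]
        exact Set.add_mem_add ((hmemv S _ y).mp hy2) (hnegS _ ((hmemv S _ y).mp hy1))
    have hinj : Set.InjOn Φ T := by
      intro g hg g' hg' heq
      by_contra hne
      exact (hkey g hg g' hg' hne).1 heq
    have hTfin : T.Finite := by
      refine Set.Finite.of_finite_image ?_ hinj
      refine Set.Finite.subset V.finite_toSet ?_
      rintro _ ⟨g, hg, rfl⟩
      exact (hΦspec g hg).1
    refine ⟨hTfin, ?_⟩
    set W' : Finset (EuclideanSpace ℝ (Fin d)) := hTfin.toFinset.image Φ with hW'def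
    have hcard : W'.card = hTfin.toFinset.card := by
      refine Finset.card_image_of_injOn ?_
      intro g hg g' hg' heq
      exact hinj (hTfin.mem_toFinset.mp hg) (hTfin.mem_toFinset.mp hg') heq
    have hW'mem : W' ∈ Finset.filter (fun W : Finset (EuclideanSpace ℝ (Fin d)) =>
        (W : Set (EuclideanSpace ℝ (Fin d))).Pairwise fun u w => Disjoint (u +ᵥ S) (w +ᵥ S)) V.powerset := by
      rw [Finset.mem_filter, Finset.mem_powerset]
      constructor
      · intro u hu
        rw [hW'def, Finset.mem_image] at hu
        obtain ⟨g, hg, rfl⟩ := hu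
        exact (hΦspec g (hTfin.mem_toFinset.mp hg)).1
      · intro u hu w hw hne
        rw [Finset.coe_image, Set.mem_image] at hu hw
        obtain ⟨g, hg, rfl⟩ := hu
        obtain ⟨g', hg', rfl⟩ := hw
        rw [Set.Finite.coe_toFinset] at hg hg'
        have hgne : g ≠ g' := fun h => hne (by rw [h])
        exact (hkey g hg g' hg' hgne).2
    rw [← hcard]
    exact hWmax W' hW'mem
  -- measure-theoretic part
  have hSmeas : MeasurableSet S := hScompact.isClosed.measurableSet
  have hUmeas : MeasurableSet U := by
    refine MeasurableSet.biUnion V.countable_toSet fun v _ => hSmeas.const_vadd v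
  have hUcompact : IsCompact U := by
    refine Set.Finite.isCompact_biUnion V.finite_toSet fun v _ => ?_
    rw [← Set.image_vadd]
    exact hScompact.image (continuous_const_vadd v)
  set D' : Set (EuclideanSpace ℝ (Fin d)) := ZSpan.fundamentalDomain b2 with hD'def
  have hD'meas : MeasurableSet D' := ZSpan.fundamentalDomain_measurableSet b2
  have hfd := ZSpan.isAddFundamentalDomain b2 (volume : Measure (EuclideanSpace ℝ (Fin d)))
  have hinv : VAddInvariantMeasure ↥L (EuclideanSpace ℝ (Fin d)) volume :=
    (inferInstance : VAddInvariantMeasure L.toAddSubgroup (EuclideanSpace ℝ (Fin d)) volume)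
  have hmva : MeasurableVAdd ↥L (EuclideanSpace ℝ (Fin d)) :=
    (inferInstance : MeasurableVAdd L.toAddSubgroup (EuclideanSpace ℝ (Fin d)))
  have htsum : volume U = ∑' g : ↥L, volume (((g : (EuclideanSpace ℝ (Fin d))) +ᵥ U) ∩ D') := by
    have := hfd.measure_eq_tsum U
    exact this
  have hmain : volume U ≤ (m : ENNReal) * volume D' := by
    rw [htsum]
    have hAg : ∀ g : ↥L, MeasurableSet (((g : (EuclideanSpace ℝ (Fin d))) +ᵥ U) ∩ D') :=
      fun g => (hUmeas.const_vadd _).inter hD'meas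
    calc ∑' g : ↥L, volume (((g : (EuclideanSpace ℝ (Fin d))) +ᵥ U) ∩ D')
        = ∑' g : ↥L, ∫⁻ x, (((g : (EuclideanSpace ℝ (Fin d))) +ᵥ U) ∩ D').indicator 1 x := by
          refine tsum_congr fun g => ?_
          rw [lintegral_indicator_one (hAg g)]
      _ = ∫⁻ x, ∑' g : ↥L, (((g : (EuclideanSpace ℝ (Fin d))) +ᵥ U) ∩ D').indicator 1 x := by
          rw [lintegral_tsum]
          intro g
          exact ((measurable_one.indicator (hAg g))).aemeasurable
      _ ≤ ∫⁻ x, D'.indicator (fun _ => (m : ENNReal)) x := by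
          refine lintegral_mono fun x => ?_
          by_cases hx : x ∈ D'
          · obtain ⟨hfin, hcard⟩ := hcount x
            rw [Set.indicator_of_mem hx]
            have heq : ∀ g : ↥L, (((g : (EuclideanSpace ℝ (Fin d))) +ᵥ U) ∩ D').indicator (1 : (EuclideanSpace ℝ (Fin d)) → ENNReal) x
                = if g ∈ hfin.toFinset then 1 else 0 := by
              intro g
              by_cases hg : x ∈ (g : (EuclideanSpace ℝ (Fin d))) +ᵥ U
              · have hmem : x ∈ ((g : (EuclideanSpace ℝ (Fin d))) +ᵥ U) ∩ D' := ⟨hg, hx⟩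
                rw [Set.indicator_of_mem hmem, if_pos (hfin.mem_toFinset.mpr hg)]
                rfl
              · rw [Set.indicator_of_notMem (fun h => hg h.1),
                  if_neg (fun h => hg (hfin.mem_toFinset.mp h))]
            calc ∑' g : ↥L, (((g : (EuclideanSpace ℝ (Fin d))) +ᵥ U) ∩ D').indicator (1 : (EuclideanSpace ℝ (Fin d)) → ENNReal) x
                = ∑' g : ↥L, if g ∈ hfin.toFinset then (1:ENNReal) else 0 :=
                  tsum_congr heq
              _ = ∑ g ∈ hfin.toFinset, if g ∈ hfin.toFinset then (1:ENNReal) else 0 := by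
                  refine tsum_eq_sum fun g hg => if_neg hg
              _ = hfin.toFinset.card := by
                  rw [Finset.sum_ite_mem, Finset.inter_self, Finset.sum_const, nsmul_eq_mul,
                    mul_one]
              _ ≤ (m : ENNReal) := by exact_mod_cast Nat.cast_le.mpr hcard
          · rw [Set.indicator_of_notMem hx]
            have : ∀ g : ↥L, (((g : (EuclideanSpace ℝ (Fin d))) +ᵥ U) ∩ D').indicator (1 : (EuclideanSpace ℝ (Fin d)) → ENNReal) x = 0 :=
              fun g => Set.indicator_of_notMem (fun h => hx h.2) _
            simp [this]
      _ = (m : ENNReal) * volume D' := by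
          rw [lintegral_indicator_const hD'meas]
  -- volume of the fundamental domain
  have hPset : {x : (EuclideanSpace ℝ (Fin d)) | ∃ t : Fin d → ℝ,
      (∀ i, t i ∈ Set.Icc (0 : ℝ) 1) ∧ x = ∑ i, t i • b i} = parallelepiped ⇑b := by
    ext x
    rw [Set.mem_setOf_eq, mem_parallelepiped_iff]
    constructor
    · rintro ⟨t, ht, rfl⟩
      exact ⟨t, ⟨fun i => (ht i).1, fun i => (ht i).2⟩, rfl⟩
    · rintro ⟨t, ht, rfl⟩
      exact ⟨t, fun i => ⟨ht.1 i, ht.2 i⟩, rfl⟩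
  have hP2 : parallelepiped ⇑b2 = (2:ℝ) • parallelepiped ⇑b := by
    have hfun : ⇑b2 = ⇑((2:ℝ) • (LinearMap.id : (EuclideanSpace ℝ (Fin d)) →ₗ[ℝ] (EuclideanSpace ℝ (Fin d)))) ∘ ⇑b := by
      funext i
      simp [hb2 i]
    rw [hfun, ← image_parallelepiped]
    ext x
    simp [Set.mem_smul_set]
  have hvolD' : volume D' = (2:ENNReal) ^ d * volume (parallelepiped ⇑b) := by
    rw [hD'def, measure_congr (ZSpan.fundamentalDomain_ae_parallelepiped b2 volume), hP2,
      Measure.addHaar_smul, finrank_euclideanSpace_fin]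
    congr 1
    rw [abs_of_nonneg (by positivity), ENNReal.ofReal_pow (by norm_num)]
    norm_num
  -- finiteness and positivity
  have hPpos : 0 < volume (parallelepiped ⇑b) := by
    rw [← Module.Basis.coe_parallelepiped]
    calc (0 : ENNReal) < volume (interior ↑b.parallelepiped) :=
          isOpen_interior.measure_pos volume b.parallelepiped.interior_nonempty
      _ ≤ volume (b.parallelepiped : Set (EuclideanSpace ℝ (Fin d))) := measure_mono interior_subset
  have hPfin : volume (parallelepiped ⇑b) ≠ ⊤ := by
    rw [← Module.Basis.coe_parallelepiped]
    exact b.parallelepiped.isCompact.measure_lt_top.ne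
  have hUfin : volume U ≠ ⊤ := hUcompact.measure_lt_top.ne
  -- final arithmetic
  rw [hPset]
  set p := (volume (parallelepiped ⇑b)).toReal with hpdef
  have hppos : (0:ℝ) < p := ENNReal.toReal_pos hPpos.ne' hPfin
  have hdenpos : (0:ℝ) < 2 ^ d * p := by positivity
  rw [div_le_iff₀ hdenpos]
  have hle : volume U ≤ (m : ENNReal) * ((2:ENNReal) ^ d * volume (parallelepiped ⇑b)) := by
    rw [← hvolD']
    exact hmain
  have hrhsfin : (m : ENNReal) * ((2:ENNReal) ^ d * volume (parallelepiped ⇑b)) ≠ ⊤ := by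
    refine ENNReal.mul_ne_top (by simp) (ENNReal.mul_ne_top ?_ hPfin)
    simp [ENNReal.pow_ne_top]
  have := ENNReal.toReal_mono hrhsfin hle
  rw [ENNReal.toReal_mul, ENNReal.toReal_mul, ENNReal.toReal_pow] at this
  simpa using this
end

section
/- Let C be a convex body in ℝ^d and let A and B be centrally symmetric convex bodies in ℝ^d (A = −A, B = −B) with A ⊆ C ⊆ B. Suppose Λ_A is a lattice such that the translates {A + λ : λ ∈ Λ_A} cover ℝ^d, and Λ_B is a lattice such that the translates {B + μ : μ ∈ Λ_B} are pairwise disjoint. Then for every finite family F of translates of C, τ(F) ≤ 2^d · (covol(Λ_B) / covol(Λ_A)) · ν(F). (This equals the bound 2^d · (vol(B)/vol(A)) · θ/δ, where θ = vol(A)/covol(Λ_A) is the density of the lattice covering by A and δ = vol(B)/covol(Λ_B) is the density of the lattice packing by B.) -/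
open Pointwise MeasureTheory

/-- "Sandwich" lemma: let `C` be a convex body in `ℝ^d` and let `A ⊆ C ⊆ B` be centrally
symmetric convex bodies. If the lattice generated by the basis `bA` gives a covering of
`ℝ^d` by translates of `A`, and the lattice generated by the basis `bB` gives a packing
by translates of `B`, then for every finite family of translates of `C`,
`τ(F) ≤ 2^d · (covol(Λ_B)/covol(Λ_A)) · ν(F)`. -/
theorem piercing_translates_sandwich_lemma
    (d : ℕ)
    (C A B : Set (EuclideanSpace ℝ (Fin d)))
    (hCcompact : IsCompact C) (hCconv : Convex ℝ C) (hCint : (interior C).Nonempty)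
    (hAcompact : IsCompact A) (hAconv : Convex ℝ A) (hAint : (interior A).Nonempty)
    (hAsymm : A = -A)
    (hBcompact : IsCompact B) (hBconv : Convex ℝ B) (hBint : (interior B).Nonempty)
    (hBsymm : B = -B)
    (hAC : A ⊆ C) (hCB : C ⊆ B)
    (bA bB : Module.Basis (Fin d) ℝ (EuclideanSpace ℝ (Fin d)))
    (hcover : ∀ x : EuclideanSpace ℝ (Fin d),
      ∃ c : Fin d → ℤ, x ∈ (∑ i, (c i : ℝ) • bA i) +ᵥ A)
    (hpack : ∀ c c' : Fin d → ℤ, c ≠ c' →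
      Disjoint ((∑ i, (c i : ℝ) • bB i) +ᵥ B) ((∑ i, (c' i : ℝ) • bB i) +ᵥ B))
    (V : Finset (EuclideanSpace ℝ (Fin d))) :
    ∃ P W : Finset (EuclideanSpace ℝ (Fin d)),
      W ⊆ V ∧
      (∀ v ∈ V, ∃ x ∈ P, x ∈ v +ᵥ C) ∧
      ((W : Set (EuclideanSpace ℝ (Fin d))).Pairwise fun u w =>
        Disjoint (u +ᵥ C) (w +ᵥ C)) ∧
      (P.card : ℝ) ≤ 2 ^ d *
        ((volume {x : EuclideanSpace ℝ (Fin d) | ∃ t : Fin d → ℝ,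
            (∀ i, t i ∈ Set.Icc (0 : ℝ) 1) ∧ x = ∑ i, t i • bB i}).toReal /
         (volume {x : EuclideanSpace ℝ (Fin d) | ∃ t : Fin d → ℝ,
            (∀ i, t i ∈ Set.Icc (0 : ℝ) 1) ∧ x = ∑ i, t i • bA i}).toReal) *
        (W.card : ℝ) := by
  classical
  -- notation
  obtain ⟨c0, hc0i⟩ := hCint
  have hc0C : c0 ∈ C := interior_subset hc0i
  have hAB : A ⊆ B := fun a ha => hCB (hAC ha)
  have hAneg : ∀ {a : EuclideanSpace ℝ (Fin d)}, a ∈ A → -a ∈ A := by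
    intro a ha
    rw [hAsymm, Set.mem_neg, neg_neg]
    exact ha
  have hBneg : ∀ {b : EuclideanSpace ℝ (Fin d)}, b ∈ B → -b ∈ B := by
    intro b hb
    rw [hBsymm, Set.mem_neg, neg_neg]
    exact hb
  -- the maximum pairwise-disjoint subfamily
  have hfam : ((V.powerset).filter (fun S : Finset (EuclideanSpace ℝ (Fin d)) =>
      (S : Set (EuclideanSpace ℝ (Fin d))).Pairwise fun u w =>
        Disjoint (u +ᵥ C) (w +ᵥ C))).Nonempty := by
    refine ⟨∅, Finset.mem_filter.2 ⟨Finset.mem_powerset.2 (Finset.empty_subset V), by simp⟩⟩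
  obtain ⟨W, hWmem, hWmax⟩ := Finset.exists_max_image _ Finset.card hfam
  have hWV : W ⊆ V := Finset.mem_powerset.1 (Finset.mem_filter.1 hWmem).1
  have hWdisj : (W : Set (EuclideanSpace ℝ (Fin d))).Pairwise fun u w =>
      Disjoint (u +ᵥ C) (w +ᵥ C) := (Finset.mem_filter.1 hWmem).2
  set k := W.card with hk
  have hmax : ∀ S : Finset (EuclideanSpace ℝ (Fin d)), S ⊆ V →
      ((S : Set (EuclideanSpace ℝ (Fin d))).Pairwise fun u w =>
        Disjoint (u +ᵥ C) (w +ᵥ C)) → S.card ≤ k := by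
    intro S h1 h2
    exact hWmax S (Finset.mem_filter.2 ⟨Finset.mem_powerset.2 h1, h2⟩)
  -- the union of the A-translates
  set U : Set (EuclideanSpace ℝ (Fin d)) := ⋃ v ∈ V, v +ᵥ A with hUdef
  have hUmeas : MeasurableSet U :=
    MeasurableSet.biUnion V.countable_toSet
      (fun v _ => (hAcompact.isClosed.measurableSet).const_vadd v)
  have hmemU : ∀ {x : EuclideanSpace ℝ (Fin d)}, x ∈ U ↔ ∃ v ∈ V, -v + x ∈ A := by
    intro x
    simp only [hUdef, Set.mem_iUnion₂, Set.mem_vadd_set_iff_neg_vadd_mem, vadd_eq_add,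
      Finset.mem_coe, exists_prop]
  -- the packing lattice consequence
  have hpackB : ∀ n : Fin d → ℤ, n ≠ 0 → ∀ q1 ∈ B, ∀ q2 ∈ B,
      (∑ i, (n i : ℝ) • bB i) ≠ q1 + q2 := by
    intro n hn q1 hq1 q2 hq2 heq
    have hd := hpack n 0 hn
    have h0 : (∑ i, ((0 : Fin d → ℤ) i : ℝ) • bB i) = (0 : EuclideanSpace ℝ (Fin d)) := by
      simp
    rw [h0] at hd
    have hm1 : q2 ∈ (∑ i, (n i : ℝ) • bB i) +ᵥ B := by
      rw [Set.mem_vadd_set_iff_neg_vadd_mem, vadd_eq_add, heq]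
      have h1 : -(q1 + q2) + q2 = -q1 := by abel
      rw [h1]
      exact hBneg hq1
    have hm2 : q2 ∈ (0 : EuclideanSpace ℝ (Fin d)) +ᵥ B := by
      rw [Set.mem_vadd_set_iff_neg_vadd_mem, vadd_eq_add, neg_zero, zero_add]
      exact hq2
    exact Set.disjoint_left.1 hd hm1 hm2
  -- scaled basis
  set bB2 : Module.Basis (Fin d) ℝ (EuclideanSpace ℝ (Fin d)) :=
    bB.unitsSMul (fun _ => Units.mk0 (2:ℝ) two_ne_zero) with hbB2
  have hbB2_apply : ∀ i, bB2 i = (2:ℝ) • bB i := by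
    intro i
    rw [hbB2, Module.Basis.unitsSMul_apply, Units.smul_def, Units.val_mk0]
  -- fiber counting lemma
  have hfiber : ∀ (x : EuclideanSpace ℝ (Fin d))
      (T : Finset ↥(Submodule.span ℤ (Set.range ⇑bB2)).toAddSubgroup),
      (∀ g ∈ T, x ∈ ((g : EuclideanSpace ℝ (Fin d))) +ᵥ U) → T.card ≤ k := by
    intro x T hT
    have hchoice : ∀ g : ↥(Submodule.span ℤ (Set.range ⇑bB2)).toAddSubgroup, g ∈ T →
        ∃ v ∈ V, -v + (-(g : EuclideanSpace ℝ (Fin d)) + x) ∈ A := by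
      intro g hg
      have h1 := hT g hg
      rw [Set.mem_vadd_set_iff_neg_vadd_mem, vadd_eq_add] at h1
      exact hmemU.1 h1
    set F : ↥(Submodule.span ℤ (Set.range ⇑bB2)).toAddSubgroup → EuclideanSpace ℝ (Fin d) :=
      fun g => if h : ∃ v ∈ V, -v + (-(g : EuclideanSpace ℝ (Fin d)) + x) ∈ A
        then h.choose else 0 with hF
    have hFspec : ∀ g ∈ T, F g ∈ V ∧ -(F g) + (-(g : EuclideanSpace ℝ (Fin d)) + x) ∈ A := by
      intro g hg
      have h := hchoice g hg
      rw [hF]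
      simp only [dif_pos h]
      exact ⟨h.choose_spec.1, h.choose_spec.2⟩
    have hdisjF : ∀ g ∈ T, ∀ g' ∈ T, g ≠ g' → Disjoint (F g +ᵥ C) (F g' +ᵥ C) := by
      intro g hg g' hg' hne
      rw [Set.disjoint_left]
      intro z hz1 hz2
      rw [Set.mem_vadd_set_iff_neg_vadd_mem, vadd_eq_add] at hz1 hz2
      obtain ⟨hFV, hFA⟩ := hFspec g hg
      obtain ⟨hFV', hFA'⟩ := hFspec g' hg'
      obtain ⟨nn, hnn⟩ := (Submodule.mem_span_range_iff_exists_fun ℤ).1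
        ((Submodule.mem_toAddSubgroup _).1 (g' - g).2)
      -- hnn : ∑ i, nn i • bB2 i = ↑(g' - g)
      have h2 : (2:ℝ) • (∑ i, (nn i : ℝ) • bB i)
          = (g' : EuclideanSpace ℝ (Fin d)) - (g : EuclideanSpace ℝ (Fin d)) := by
        have hterm : ∀ i : Fin d, nn i • bB2 i = (2:ℝ) • ((nn i : ℝ) • bB i) := by
          intro i
          rw [← Int.cast_smul_eq_zsmul ℝ, hbB2_apply i, smul_comm]
        calc (2:ℝ) • (∑ i, (nn i : ℝ) • bB i) = ∑ i, (2:ℝ) • ((nn i : ℝ) • bB i) :=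
              Finset.smul_sum
          _ = ∑ i, nn i • bB2 i := by
              refine Finset.sum_congr rfl fun i _ => (hterm i).symm
          _ = ((g' - g : ↥(Submodule.span ℤ (Set.range ⇑bB2)).toAddSubgroup) :
                EuclideanSpace ℝ (Fin d)) := hnn
          _ = (g' : EuclideanSpace ℝ (Fin d)) - (g : EuclideanSpace ℝ (Fin d)) := by
              simp
      have hnn0 : nn ≠ 0 := by
        intro h0
        apply hne
        have hz : (g' : EuclideanSpace ℝ (Fin d)) - (g : EuclideanSpace ℝ (Fin d)) = 0 := by
          rw [← h2, h0]
          simp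
        exact (Subtype.coe_injective (sub_eq_zero.1 hz)).symm
      -- the identity
      have hiden : (g' : EuclideanSpace ℝ (Fin d)) - (g : EuclideanSpace ℝ (Fin d))
          = ((-(F g') + z) + (-(F g) + (-(g : EuclideanSpace ℝ (Fin d)) + x)))
            - ((-(F g) + z) + (-(F g') + (-(g' : EuclideanSpace ℝ (Fin d)) + x))) := by
        abel
      have hlam : (∑ i, (nn i : ℝ) • bB i)
          = ((2⁻¹:ℝ) • (-(F g') + z) + (2⁻¹:ℝ) • (-(-(F g) + z)))
            + ((2⁻¹:ℝ) • (-(F g) + (-(g : EuclideanSpace ℝ (Fin d)) + x))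
              + (2⁻¹:ℝ) • (-(-(F g') + (-(g' : EuclideanSpace ℝ (Fin d)) + x)))) := by
        have h3 : (∑ i, (nn i : ℝ) • bB i)
            = (2⁻¹:ℝ) • ((g' : EuclideanSpace ℝ (Fin d)) - (g : EuclideanSpace ℝ (Fin d))) := by
          rw [← h2, smul_smul]
          norm_num
        rw [h3, hiden]
        module
      have hq1 : (2⁻¹:ℝ) • (-(F g') + z) + (2⁻¹:ℝ) • (-(-(F g) + z)) ∈ B :=
        hBconv (hCB hz2) (hBneg (hCB hz1)) (by norm_num) (by norm_num) (by norm_num)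
      have hq2 : (2⁻¹:ℝ) • (-(F g) + (-(g : EuclideanSpace ℝ (Fin d)) + x))
          + (2⁻¹:ℝ) • (-(-(F g') + (-(g' : EuclideanSpace ℝ (Fin d)) + x))) ∈ B :=
        hBconv (hAB hFA) (hBneg (hAB hFA')) (by norm_num) (by norm_num) (by norm_num)
      exact hpackB nn hnn0 _ hq1 _ hq2 hlam
    have hFinj : Set.InjOn F ↑T := by
      intro g hg g' hg' hFeq
      by_contra hne
      have hd := hdisjF g (Finset.mem_coe.1 hg) g' (Finset.mem_coe.1 hg') hne
      have hmemv : F g + c0 ∈ F g +ᵥ C := by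
        rw [Set.mem_vadd_set_iff_neg_vadd_mem, vadd_eq_add, neg_add_cancel_left]
        exact hc0C
      have hmemv' : F g + c0 ∈ F g' +ᵥ C := by
        rw [← hFeq]
        exact hmemv
      exact Set.disjoint_left.1 hd hmemv hmemv'
    rw [← Finset.card_image_of_injOn hFinj]
    apply hmax
    · intro u hu
      obtain ⟨g, hg, rfl⟩ := Finset.mem_image.1 hu
      exact (hFspec g hg).1
    · intro u hu w hw hneq
      obtain ⟨g, hg, rfl⟩ := Finset.mem_image.1 (Finset.mem_coe.1 hu)
      obtain ⟨g', hg', rfl⟩ := Finset.mem_image.1 (Finset.mem_coe.1 hw)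
      exact hdisjF g hg g' hg' (fun h => hneq (by rw [h]))
  -- countability of the lattices
  have hcnt2 : Countable ↥(Submodule.span ℤ (Set.range ⇑bB2)).toAddSubgroup := by
    have hsurj : Function.Surjective (fun c : Fin d → ℤ =>
        (⟨∑ i, c i • bB2 i, (Submodule.mem_toAddSubgroup _).2 (Submodule.sum_mem _ fun i _ =>
          Submodule.smul_mem _ _ (Submodule.subset_span (Set.mem_range_self i)))⟩ :
          ↥(Submodule.span ℤ (Set.range ⇑bB2)).toAddSubgroup)) := by
      rintro ⟨x, hx⟩
      obtain ⟨c, hc⟩ := (Submodule.mem_span_range_iff_exists_fun ℤ).1 ((Submodule.mem_toAddSubgroup _).1 hx)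
      exact ⟨c, Subtype.ext hc⟩
    exact hsurj.countable
  have hcntA : Countable ↥(Submodule.span ℤ (Set.range ⇑bA)).toAddSubgroup := by
    have hsurj : Function.Surjective (fun c : Fin d → ℤ =>
        (⟨∑ i, c i • bA i, (Submodule.mem_toAddSubgroup _).2 (Submodule.sum_mem _ fun i _ =>
          Submodule.smul_mem _ _ (Submodule.subset_span (Set.mem_range_self i)))⟩ :
          ↥(Submodule.span ℤ (Set.range ⇑bA)).toAddSubgroup)) := by
      rintro ⟨x, hx⟩
      obtain ⟨c, hc⟩ := (Submodule.mem_span_range_iff_exists_fun ℤ).1 ((Submodule.mem_toAddSubgroup _).1 hx)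
      exact ⟨c, Subtype.ext hc⟩
    exact hsurj.countable
  -- the two fundamental domains
  set DA := ZSpan.fundamentalDomain bA with hDA
  set D2 := ZSpan.fundamentalDomain bB2 with hD2
  have hDAmeas : MeasurableSet DA := ZSpan.fundamentalDomain_measurableSet bA
  have hD2meas : MeasurableSet D2 := ZSpan.fundamentalDomain_measurableSet bB2
  have hDAne : volume DA ≠ 0 := ZSpan.measure_fundamentalDomain_ne_zero bA
  have hDAfin : volume DA ≠ ⊤ := ((ZSpan.fundamentalDomain_isBounded bA).measure_lt_top).ne
  have hD2fin : volume D2 ≠ ⊤ := ((ZSpan.fundamentalDomain_isBounded bB2).measure_lt_top).ne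
  -- upper bound on the volume of U
  have hvolU : volume U ≤ (k : ENNReal) * volume D2 := by
    have hfd := ZSpan.isAddFundamentalDomain' bB2 (volume : Measure (EuclideanSpace ℝ (Fin d)))
    have hsetmeas : ∀ g : ↥(Submodule.span ℤ (Set.range ⇑bB2)).toAddSubgroup,
        MeasurableSet ((((g : EuclideanSpace ℝ (Fin d))) +ᵥ U) ∩ D2) :=
      fun g => (hUmeas.const_vadd ((g : EuclideanSpace ℝ (Fin d)))).inter hD2meas
    rw [hfd.measure_eq_tsum U]
    calc ∑' g : ↥(Submodule.span ℤ (Set.range ⇑bB2)).toAddSubgroup, volume ((g +ᵥ U) ∩ D2)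
        = ∑' g : ↥(Submodule.span ℤ (Set.range ⇑bB2)).toAddSubgroup,
            ∫⁻ y, (((((g : EuclideanSpace ℝ (Fin d))) +ᵥ U) ∩ D2).indicator 1 y) := by
          refine tsum_congr fun g => ?_
          rw [lintegral_indicator_one (hsetmeas g)]
          rfl
      _ = ∫⁻ y, ∑' g : ↥(Submodule.span ℤ (Set.range ⇑bB2)).toAddSubgroup,
            (((((g : EuclideanSpace ℝ (Fin d))) +ᵥ U) ∩ D2).indicator 1 y) :=
          (lintegral_tsum fun g => (measurable_one.indicator (hsetmeas g)).aemeasurable).symm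
      _ ≤ ∫⁻ y, D2.indicator (fun _ => (k : ENNReal)) y := by
          refine lintegral_mono fun y => ?_
          by_cases hy : y ∈ D2
          · rw [Set.indicator_of_mem hy]
            rw [ENNReal.tsum_eq_iSup_sum]
            refine iSup_le fun T => ?_
            calc ∑ g ∈ T, (((((g : EuclideanSpace ℝ (Fin d))) +ᵥ U) ∩ D2).indicator 1 y)
                = ∑ g ∈ T, if y ∈ ((g : EuclideanSpace ℝ (Fin d))) +ᵥ U
                    then (1 : ENNReal) else 0 := by
                  refine Finset.sum_congr rfl fun g _ => ?_
                  by_cases h : y ∈ ((g : EuclideanSpace ℝ (Fin d))) +ᵥ U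
                  · rw [if_pos h, Set.indicator_of_mem (Set.mem_inter h hy)]
                    rfl
                  · rw [if_neg h, Set.indicator_of_notMem (fun hc => h hc.1)]
              _ ≤ (k : ENNReal) := by
                  rw [Finset.sum_boole]
                  exact Nat.cast_le.2 (hfiber y _ (fun g hg => (Finset.mem_filter.1 hg).2))
          · rw [Set.indicator_of_notMem hy]
            have hzero : ∀ g : ↥(Submodule.span ℤ (Set.range ⇑bB2)).toAddSubgroup,
                (((((g : EuclideanSpace ℝ (Fin d))) +ᵥ U) ∩ D2).indicator
                  (1 : EuclideanSpace ℝ (Fin d) → ENNReal) y) = 0 :=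
              fun g => Set.indicator_of_notMem (fun hc => hy hc.2) _
            simp [hzero]
      _ = (k : ENNReal) * volume D2 := lintegral_indicator_const hD2meas _
  -- main counting: a good shift exists
  set m : ℕ := Nat.floor (((k : ENNReal) * volume D2).toReal / (volume DA).toReal) with hm
  have hgood : ∃ t ∈ DA, ¬ ∃ T : Finset (Fin d → ℤ), T.card = m + 1 ∧
      ∀ c ∈ T, t + ∑ i, (c i : ℝ) • bA i ∈ U := by
    by_contra hbad
    push_neg at hbad
    have hfdA := ZSpan.isAddFundamentalDomain' bA (volume : Measure (EuclideanSpace ℝ (Fin d)))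
    have hsetmeas : ∀ g : ↥(Submodule.span ℤ (Set.range ⇑bA)).toAddSubgroup,
        MeasurableSet ((((g : EuclideanSpace ℝ (Fin d))) +ᵥ U) ∩ DA) :=
      fun g => (hUmeas.const_vadd ((g : EuclideanSpace ℝ (Fin d)))).inter hDAmeas
    have hkey : ((m : ENNReal) + 1) * volume DA ≤ volume U := by
      have h1 : volume U = ∫⁻ y, ∑' g : ↥(Submodule.span ℤ (Set.range ⇑bA)).toAddSubgroup,
          (((((g : EuclideanSpace ℝ (Fin d))) +ᵥ U) ∩ DA).indicator 1 y) := by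
        calc volume U
            = ∑' g : ↥(Submodule.span ℤ (Set.range ⇑bA)).toAddSubgroup,
              volume ((g +ᵥ U) ∩ DA) := hfdA.measure_eq_tsum U
          _ = ∑' g : ↥(Submodule.span ℤ (Set.range ⇑bA)).toAddSubgroup,
              ∫⁻ y, (((((g : EuclideanSpace ℝ (Fin d))) +ᵥ U) ∩ DA).indicator 1 y) := by
              refine tsum_congr fun g => ?_
              rw [lintegral_indicator_one (hsetmeas g)]
              rfl
          _ = ∫⁻ y, ∑' g : ↥(Submodule.span ℤ (Set.range ⇑bA)).toAddSubgroup,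
              (((((g : EuclideanSpace ℝ (Fin d))) +ᵥ U) ∩ DA).indicator 1 y) :=
              (lintegral_tsum fun g =>
                (measurable_one.indicator (hsetmeas g)).aemeasurable).symm
      rw [h1]
      have h3 : ∀ y, DA.indicator (fun _ => ((m : ENNReal) + 1)) y ≤
          ∑' g : ↥(Submodule.span ℤ (Set.range ⇑bA)).toAddSubgroup,
            (((((g : EuclideanSpace ℝ (Fin d))) +ᵥ U) ∩ DA).indicator 1 y) := by
        intro y
        by_cases hy : y ∈ DA
        · rw [Set.indicator_of_mem hy]
          obtain ⟨T, hTcard, hTmem⟩ := hbad y hy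
          set emb : (Fin d → ℤ) → ↥(Submodule.span ℤ (Set.range ⇑bA)).toAddSubgroup :=
            fun c => ⟨-(∑ i, (c i : ℝ) • bA i), neg_mem ((Submodule.mem_toAddSubgroup _).2
              (Submodule.sum_mem _ fun i _ => by
                rw [Int.cast_smul_eq_zsmul ℝ (c i) (bA i)]
                exact zsmul_mem (Submodule.subset_span (Set.mem_range_self i)) (c i)))⟩
            with hemb
          have hembinj : Set.InjOn emb ↑T := by
            intro c hc c' hc' hcc
            have h4 : (∑ i, (c i : ℝ) • bA i) = ∑ i, (c' i : ℝ) • bA i := by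
              have h5 := congrArg (fun z : ↥(Submodule.span ℤ (Set.range ⇑bA)).toAddSubgroup =>
                -(z : EuclideanSpace ℝ (Fin d))) hcc
              simpa [hemb] using h5
            have h6 := congrArg (fun v => ⇑(bA.repr v)) h4
            simp only [Module.Basis.repr_sum_self] at h6
            funext i
            exact Int.cast_injective (congrFun h6 i)
          calc ((m : ENNReal) + 1) = ∑ _g ∈ T.image emb, (1 : ENNReal) := by
                rw [Finset.sum_const, Finset.card_image_of_injOn hembinj, hTcard,
                  nsmul_eq_mul, mul_one]
                push_cast
                ring
            _ ≤ ∑ g ∈ T.image emb,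
                (((((g : EuclideanSpace ℝ (Fin d))) +ᵥ U) ∩ DA).indicator 1 y) := by
                refine Finset.sum_le_sum fun g hg => ?_
                obtain ⟨c, hc, rfl⟩ := Finset.mem_image.1 hg
                have hyU : y ∈ ((emb c : EuclideanSpace ℝ (Fin d))) +ᵥ U := by
                  rw [Set.mem_vadd_set_iff_neg_vadd_mem, vadd_eq_add]
                  have h7 : -(emb c : EuclideanSpace ℝ (Fin d)) + y
                      = y + ∑ i, (c i : ℝ) • bA i := by
                    have h8 : (emb c : EuclideanSpace ℝ (Fin d))
                        = -(∑ i, (c i : ℝ) • bA i) := rfl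
                    rw [h8, neg_neg, add_comm]
                  rw [h7]
                  exact hTmem c hc
                rw [Set.indicator_of_mem (Set.mem_inter hyU hy)]
                rfl
            _ ≤ ∑' g : ↥(Submodule.span ℤ (Set.range ⇑bA)).toAddSubgroup,
                (((((g : EuclideanSpace ℝ (Fin d))) +ᵥ U) ∩ DA).indicator 1 y) :=
                ENNReal.sum_le_tsum _
        · rw [Set.indicator_of_notMem hy]
          exact zero_le
      calc ((m : ENNReal) + 1) * volume DA
          = ∫⁻ y, DA.indicator (fun _ => ((m : ENNReal) + 1)) y :=
            (lintegral_indicator_const hDAmeas _).symm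
        _ ≤ _ := lintegral_mono h3
    have hle := hkey.trans hvolU
    have hD2top : (k : ENNReal) * volume D2 ≠ ⊤ :=
      ENNReal.mul_ne_top (ENNReal.natCast_ne_top k) hD2fin
    have hreal : ((m : ℝ) + 1) * (volume DA).toReal ≤ ((k : ENNReal) * volume D2).toReal := by
      have h8 := ENNReal.toReal_mono hD2top hle
      rw [ENNReal.toReal_mul] at h8
      have h9 : (((m : ENNReal) + 1)).toReal = (m : ℝ) + 1 := by
        rw [show ((m : ENNReal) + 1) = ((m + 1 : ℕ) : ENNReal) by push_cast; ring,
          ENNReal.toReal_natCast]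
        push_cast
        ring
      rwa [h9] at h8
    have hApos : 0 < (volume DA).toReal := ENNReal.toReal_pos hDAne hDAfin
    have hcontra : ((m : ℝ) + 1) ≤ ((k : ENNReal) * volume D2).toReal / (volume DA).toReal := by
      rw [le_div_iff₀ hApos]
      exact hreal
    have hfl := Nat.lt_floor_add_one (((k : ENNReal) * volume D2).toReal / (volume DA).toReal)
    rw [← hm] at hfl
    linarith
  -- construct the piercing set
  obtain ⟨t, htDA, htgood⟩ := hgood
  have hGfin : {c : Fin d → ℤ | t + ∑ i, (c i : ℝ) • bA i ∈ U}.Finite := by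
    by_contra hinf
    obtain ⟨T, hTsub, hTcard⟩ := Set.Infinite.exists_subset_card_eq hinf (m + 1)
    exact htgood ⟨T, hTcard, fun c hc => hTsub hc⟩
  set S := hGfin.toFinset with hS
  have hScard : S.card ≤ m := by
    by_contra hlt
    obtain ⟨T, hTsub, hTcard⟩ := Finset.exists_subset_card_eq
      (show m + 1 ≤ S.card by omega)
    refine htgood ⟨T, hTcard, fun c hc => ?_⟩
    have := hTsub hc
    rw [hS, Set.Finite.mem_toFinset] at this
    exact this
  set P := S.image (fun c => t + ∑ i, (c i : ℝ) • bA i) with hP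
  refine ⟨P, W, hWV, ?_, hWdisj, ?_⟩
  · -- piercing
    intro v hv
    obtain ⟨c, hc⟩ := hcover (v - t)
    rw [Set.mem_vadd_set_iff_neg_vadd_mem, vadd_eq_add] at hc
    set a := -(∑ i, (c i : ℝ) • bA i) + (v - t) with ha
    have haA : a ∈ A := hc
    refine ⟨t + ∑ i, (c i : ℝ) • bA i, ?_, ?_⟩
    · refine Finset.mem_image.2 ⟨c, ?_, rfl⟩
      rw [hS, Set.Finite.mem_toFinset]
      show t + ∑ i, (c i : ℝ) • bA i ∈ U
      rw [hmemU]
      refine ⟨v, hv, ?_⟩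
      have h10 : -v + (t + ∑ i, (c i : ℝ) • bA i) = -a := by
        rw [ha]; abel
      rw [h10]
      exact hAneg haA
    · rw [Set.mem_vadd_set_iff_neg_vadd_mem, vadd_eq_add]
      have h10 : -v + (t + ∑ i, (c i : ℝ) • bA i) = -a := by
        rw [ha]; abel
      rw [h10]
      exact hAC (hAneg haA)
  · -- cardinality bound
    have hPS : P.card ≤ m := le_trans Finset.card_image_le hScard
    have hSA : {x : EuclideanSpace ℝ (Fin d) | ∃ s : Fin d → ℝ,
        (∀ i, s i ∈ Set.Icc (0 : ℝ) 1) ∧ x = ∑ i, s i • bA i} = parallelepiped ⇑bA := by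
      ext x
      rw [mem_parallelepiped_iff]
      constructor
      · rintro ⟨s, h1, h2⟩
        exact ⟨s, Set.mem_Icc.2 ⟨fun i => (h1 i).1, fun i => (h1 i).2⟩, h2⟩
      · rintro ⟨s, h1, h2⟩
        rw [Set.mem_Icc] at h1
        exact ⟨s, fun i => ⟨h1.1 i, h1.2 i⟩, h2⟩
    have hSB : {x : EuclideanSpace ℝ (Fin d) | ∃ s : Fin d → ℝ,
        (∀ i, s i ∈ Set.Icc (0 : ℝ) 1) ∧ x = ∑ i, s i • bB i} = parallelepiped ⇑bB := by
      ext x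
      rw [mem_parallelepiped_iff]
      constructor
      · rintro ⟨s, h1, h2⟩
        exact ⟨s, Set.mem_Icc.2 ⟨fun i => (h1 i).1, fun i => (h1 i).2⟩, h2⟩
      · rintro ⟨s, h1, h2⟩
        rw [Set.mem_Icc] at h1
        exact ⟨s, fun i => ⟨h1.1 i, h1.2 i⟩, h2⟩
    rw [hSA, hSB]
    have hvolDA_eq : volume DA = volume (parallelepiped ⇑bA) :=
      measure_congr (ZSpan.fundamentalDomain_ae_parallelepiped bA volume)
    have hvolDB_eq : volume (ZSpan.fundamentalDomain bB) = volume (parallelepiped ⇑bB) :=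
      measure_congr (ZSpan.fundamentalDomain_ae_parallelepiped bB volume)
    have hdet : |bB.det ⇑bB2| = (2:ℝ)^d := by
      rw [hbB2, Module.Basis.det_unitsSMul_self]
      simp only [Units.val_mk0, Finset.prod_const, Finset.card_univ, Fintype.card_fin]
      rw [abs_pow, abs_two]
    have hvolD2 : volume D2 = ENNReal.ofReal ((2:ℝ)^d) * volume (parallelepiped ⇑bB) := by
      rw [hD2, ZSpan.measure_fundamentalDomain bB2 volume bB, hdet, hvolDB_eq]
    set pA := (volume (parallelepiped ⇑bA)).toReal with hpA
    set pB := (volume (parallelepiped ⇑bB)).toReal with hpB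
    have hApos : 0 < pA := by
      rw [hpA, ← hvolDA_eq]
      exact ENNReal.toReal_pos hDAne hDAfin
    have htoReal : ((k : ENNReal) * volume D2).toReal = (k : ℝ) * ((2:ℝ)^d * pB) := by
      rw [hvolD2, ENNReal.toReal_mul, ENNReal.toReal_mul, ENNReal.toReal_natCast,
        ENNReal.toReal_ofReal (by positivity)]
    have hDAtoReal : (volume DA).toReal = pA := by rw [hpA, hvolDA_eq]
    calc (P.card : ℝ) ≤ (m : ℝ) := by exact_mod_cast hPS
      _ ≤ ((k : ENNReal) * volume D2).toReal / (volume DA).toReal := by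
        rw [hm]
        exact Nat.floor_le (div_nonneg ENNReal.toReal_nonneg ENNReal.toReal_nonneg)
      _ = 2 ^ d * (pB / pA) * (k : ℝ) := by
        rw [htoReal, hDAtoReal]
        ring
end

section
/- Let C be a convex body in ℝ^d, let u ∈ ℝ^d be a nonzero vector, and let L = {x ∈ ℝ^d : ⟨x, u⟩ ≥ 0} be the closed half-space bounded by the hyperplane through the origin (the center of C − C) with normal u. If k is a positive integer such that (C − C) ∩ L can be covered by k translates of C, then for every finite family F of translates of C, τ(F) ≤ k · ν(F). -/
open Pointwise

/-- Let `C` be a convex body in `ℝ^d`, let `u ≠ 0`, and let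
`L = {x : ⟨x,u⟩ ≥ 0}` be a closed half-space through the center of `C − C`.
If `(C − C) ∩ L` can be covered by `k` translates of `C`, then for every finite family of
translates of `C`, `τ(F) ≤ k · ν(F)`. -/
theorem piercing_translates_halfspace_covering_bound
    (d : ℕ)
    (C : Set (EuclideanSpace ℝ (Fin d)))
    (hCcompact : IsCompact C) (hCconv : Convex ℝ C) (hCint : (interior C).Nonempty)
    (u : EuclideanSpace ℝ (Fin d)) (hu : u ≠ 0)
    (k : ℕ) (hk : 0 < k)
    (hcov : ∃ v : Fin k → EuclideanSpace ℝ (Fin d),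
      (C - C) ∩ {x : EuclideanSpace ℝ (Fin d) | (0 : ℝ) ≤ inner ℝ x u} ⊆
        ⋃ i, v i +ᵥ C)
    (V : Finset (EuclideanSpace ℝ (Fin d))) :
    ∃ P W : Finset (EuclideanSpace ℝ (Fin d)),
      W ⊆ V ∧
      (∀ v ∈ V, ∃ x ∈ P, x ∈ v +ᵥ C) ∧
      ((W : Set (EuclideanSpace ℝ (Fin d))).Pairwise fun a b =>
        Disjoint (a +ᵥ C) (b +ᵥ C)) ∧
      P.card ≤ k * W.card := by
  classical
  obtain ⟨vv, hvv⟩ := hcov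
  have hCne : C.Nonempty := hCint.mono interior_subset
  induction V using Finset.strongInduction with
  | _ V ih =>
    rcases V.eq_empty_or_nonempty with rfl | hVne
    · exact ⟨∅, ∅, by simp, by simp, by simp, by simp⟩
    obtain ⟨v, hvV, hvmax⟩ := V.exists_max_image (fun w => (inner ℝ w u : ℝ)) hVne
    set V' := V.filter (fun w => Disjoint (w +ᵥ C) (v +ᵥ C)) with hV'
    have hvnot : v ∉ V' := by
      simp only [hV', Finset.mem_filter, not_and]
      intro _ hdis
      obtain ⟨c, hc⟩ := hCne
      exact Set.disjoint_left.1 hdis (Set.vadd_mem_vadd_set hc) (Set.vadd_mem_vadd_set hc)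
    have hss : V' ⊂ V := ⟨Finset.filter_subset _ _, fun h => hvnot (h hvV)⟩
    obtain ⟨P', W', hW'V', hP', hdisj', hcard'⟩ := ih V' hss
    have hvW' : v ∉ W' := fun h => hvnot (hW'V' h)
    refine ⟨P' ∪ (Finset.univ.image fun i => v - vv i), insert v W', ?_, ?_, ?_, ?_⟩
    · exact Finset.insert_subset hvV (hW'V'.trans (Finset.filter_subset _ _))
    · intro w hw
      by_cases hw' : w ∈ V'
      · obtain ⟨x, hxP, hxw⟩ := hP' w hw'
        exact ⟨x, Finset.mem_union_left _ hxP, hxw⟩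
      · have hnd : ¬ Disjoint (w +ᵥ C) (v +ᵥ C) := by
          simpa [hV', hw] using hw'
        obtain ⟨x, hxw, hxv⟩ := Set.not_disjoint_iff.1 hnd
        obtain ⟨c₁, hc₁, hx₁⟩ := hxw
        obtain ⟨c₂, hc₂, hx₂⟩ := hxv
        simp only [vadd_eq_add] at hx₁ hx₂
        have heq : v - w = c₁ - c₂ := by
          have : w + c₁ = v + c₂ := by rw [hx₁, hx₂]
          have := congrArg (fun y => y - w - c₂) this
          simpa [sub_sub, add_sub_cancel_left] using this.symm.trans (by abel)
        have hsub : v - w ∈ (C - C) ∩ {x : EuclideanSpace ℝ (Fin d) | (0 : ℝ) ≤ inner ℝ x u} := by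
          refine ⟨heq ▸ Set.sub_mem_sub hc₁ hc₂, ?_⟩
          have hle : (inner ℝ w u : ℝ) ≤ inner ℝ v u := hvmax w hw
          simp only [Set.mem_setOf_eq, inner_sub_left]
          linarith
        obtain ⟨i, hi⟩ := Set.mem_iUnion.1 (hvv hsub)
        obtain ⟨c, hc, hci⟩ := hi
        simp only [vadd_eq_add] at hci
        refine ⟨v - vv i, Finset.mem_union_right _ ?_, ?_⟩
        · exact Finset.mem_image.2 ⟨i, Finset.mem_univ i, rfl⟩
        · refine ⟨c, hc, ?_⟩
          simp only [vadd_eq_add, eq_sub_iff_add_eq] at hci ⊢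
          rw [← hci]; abel
    · rw [Finset.coe_insert]
      haveI : Std.Symm (fun a b : EuclideanSpace ℝ (Fin d) => Disjoint (a +ᵥ C) (b +ᵥ C)) := ⟨fun a b h => h.symm⟩
      refine Set.pairwise_insert_of_symm |>.2 ⟨hdisj', ?_⟩
      intro b hb _
      exact ((Finset.mem_filter.1 (hW'V' hb)).2).symm
    · calc (P' ∪ (Finset.univ.image fun i => v - vv i)).card
          ≤ P'.card + (Finset.univ.image fun i => v - vv i).card := Finset.card_union_le _ _
        _ ≤ k * W'.card + k := by
            refine Nat.add_le_add hcard' ?_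
            simpa using Finset.card_image_le (s := (Finset.univ : Finset (Fin k)))
              (f := fun i => v - vv i)
        _ = k * (insert v W').card := by
            rw [Finset.card_insert_of_notMem hvW']; ring
end

section
/- For every centrally symmetric convex body C in the plane ℝ² (C = −C) and every nonempty finite family F of translates of C, τ(F) ≤ 4 · ν(F) − 1. -/
set_option linter.unusedSectionVars false
set_option maxHeartbeats 1000000
open Pointwise

noncomputable section
namespace PiercingAux

abbrev E := EuclideanSpace ℝ (Fin 2)

variable {C : Set E}

/-- planar determinant -/
def det2 (u v : E) : ℝ := u 0 * v 1 - u 1 * v 0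

theorem det2_smul_left (c : ℝ) (u v : E) : det2 (c • u) v = c * det2 u v := by
  unfold det2
  have h0 : (c • u) 0 = c * u 0 := rfl
  have h1 : (c • u) 1 = c * u 1 := rfl
  rw [h0, h1]; ring

theorem det2_add_left (u w v : E) : det2 (u + w) v = det2 u v + det2 w v := by
  unfold det2
  have h0 : (u + w) 0 = u 0 + w 0 := rfl
  have h1 : (u + w) 1 = u 1 + w 1 := rfl
  rw [h0, h1]; ring

theorem det2_sub_sub (u v w : E) :
    det2 (u - w) (v - w) = det2 u v - det2 u w - det2 w v := by
  unfold det2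
  have a0 : (u - w) 0 = u 0 - w 0 := rfl
  have a1 : (u - w) 1 = u 1 - w 1 := rfl
  have b0 : (v - w) 0 = v 0 - w 0 := rfl
  have b1 : (v - w) 1 = v 1 - w 1 := rfl
  rw [a0, a1, b0, b1]; ring

theorem det2_comb (u v w : E) {a b : ℝ} (hw : w = a • u + b • v) :
    det2 w v = a * det2 u v ∧ det2 u w = b * det2 u v := by
  subst hw
  unfold det2
  have h0 : (a • u + b • v) 0 = a * u 0 + b * v 0 := rfl
  have h1 : (a • u + b • v) 1 = a * u 1 + b * v 1 := rfl
  rw [h0, h1]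
  constructor <;> ring

theorem cramer2 {u v : E} (hΔ : det2 u v ≠ 0) (w : E) :
    w = (det2 w v / det2 u v) • u + (det2 u w / det2 u v) • v := by
  ext i
  have e0 : ∀ z : E, ∀ c d : ℝ, (c • z + d • v) 0 = c * z 0 + d * v 0 := fun _ _ _ => rfl
  fin_cases i
  · show w 0 = ((det2 w v / det2 u v) • u + (det2 u w / det2 u v) • v) 0
    have : ((det2 w v / det2 u v) • u + (det2 u w / det2 u v) • v) 0
        = (det2 w v / det2 u v) * u 0 + (det2 u w / det2 u v) * v 0 := rfl
    rw [this]
    unfold det2 at *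
    rw [div_mul_eq_mul_div, div_mul_eq_mul_div, ← add_div, eq_div_iff hΔ]
    ring
  · show w 1 = ((det2 w v / det2 u v) • u + (det2 u w / det2 u v) • v) 1
    have : ((det2 w v / det2 u v) • u + (det2 u w / det2 u v) • v) 1
        = (det2 w v / det2 u v) * u 1 + (det2 u w / det2 u v) * v 1 := rfl
    rw [this]
    unfold det2 at *
    rw [div_mul_eq_mul_div, div_mul_eq_mul_div, ← add_div, eq_div_iff hΔ]
    ring

theorem ext2 {x y : E} (h0 : x 0 = y 0) (h1 : x 1 = y 1) : x = y := by
  ext i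
  fin_cases i
  · simpa using h0
  · simpa using h1

theorem dep2 {u v : E} (hu : u ≠ 0) (hdet : det2 u v = 0) : ∃ t : ℝ, v = t • u := by
  by_cases h0 : u 0 = 0
  · have h1 : u 1 ≠ 0 := by
      intro hc
      exact hu (ext2 (by simpa using h0) (by simpa using hc))
    refine ⟨v 1 / u 1, ext2 ?_ ?_⟩
    · have e : ((v 1 / u 1) • u) 0 = v 1 / u 1 * u 0 := rfl
      rw [e]
      unfold det2 at hdet
      have hv0 : v 0 = 0 := by
        have h2 : u 1 * v 0 = 0 := by linear_combination -hdet + v 1 * h0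
        rcases mul_eq_zero.1 h2 with hc | hc
        · exact absurd hc h1
        · exact hc
      rw [hv0, h0]; ring
    · have e : ((v 1 / u 1) • u) 1 = v 1 / u 1 * u 1 := rfl
      rw [e]; field_simp
  · refine ⟨v 0 / u 0, ext2 ?_ ?_⟩
    · have e : ((v 0 / u 0) • u) 0 = v 0 / u 0 * u 0 := rfl
      rw [e]; field_simp
    · have e : ((v 0 / u 0) • u) 1 = v 0 / u 0 * u 1 := rfl
      rw [e]
      unfold det2 at hdet
      field_simp
      nlinarith [hdet]

structure Body (C : Set E) : Prop where
  compact : IsCompact C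
  conv : Convex ℝ C
  int : (interior C).Nonempty
  symm : C = -C

namespace Body

variable (h : Body C)
include h

theorem zero_mem_interior : (0:E) ∈ interior C := by
  obtain ⟨x, hx⟩ := h.int
  have hxC : x ∈ C := interior_subset hx
  have hnx : -x ∈ C := by rw [h.symm]; simpa using hxC
  have := h.conv.combo_interior_self_mem_interior (x := x) (y := -x) hx hnx
      (by norm_num : (0:ℝ) < 1/2) (by norm_num : (0:ℝ) ≤ 1/2) (by norm_num)
  simpa using this

theorem mem_nhds : C ∈ nhds (0:E) :=
  mem_interior_iff_mem_nhds.1 h.zero_mem_interior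

theorem absorbent : Absorbent ℝ C := absorbent_nhds_zero h.mem_nhds

theorem vonNBounded : Bornology.IsVonNBounded ℝ C :=
  (NormedSpace.isVonNBounded_iff ℝ).2 h.compact.isBounded

theorem zero_mem : (0:E) ∈ C := interior_subset h.zero_mem_interior

theorem mem_iff {x : E} : x ∈ C ↔ gauge C x ≤ 1 := by
  constructor
  · exact fun hx => gauge_le_one_of_mem hx
  · intro hx
    have := (gauge_le_one_iff_mem_closure h.conv h.mem_nhds).1 hx
    rwa [h.compact.isClosed.closure_eq] at this

theorem g_add (x y : E) : gauge C (x + y) ≤ gauge C x + gauge C y :=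
  gauge_add_le h.conv h.absorbent x y

theorem g_neg (x : E) : gauge C (-x) = gauge C x :=
  gauge_neg (fun y hy => by rw [h.symm]; simpa using hy) x

theorem g_smul {r : ℝ} (hr : 0 ≤ r) (x : E) : gauge C (r • x) = r * gauge C x := by
  rw [gauge_smul_of_nonneg hr]; simp

theorem g_pos {x : E} (hx : x ≠ 0) : 0 < gauge C x :=
  (gauge_pos h.absorbent h.vonNBounded).2 hx

theorem g_zero_iff {x : E} : gauge C x = 0 ↔ x = 0 := by
  constructor
  · intro hx; by_contra hne
    exact absurd hx (ne_of_gt (h.g_pos hne))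
  · rintro rfl; exact gauge_zero

theorem g_sub_comm (x y : E) : gauge C (x - y) = gauge C (y - x) := by
  rw [← h.g_neg (x - y)]; congr 1; abel


theorem g_comb2 {c1 c2 : ℝ} (h1 : 0 ≤ c1) (h2 : 0 ≤ c2) (w1 w2 : E) :
    gauge C (c1 • w1 + c2 • w2) ≤ c1 * gauge C w1 + c2 * gauge C w2 := by
  refine le_trans (h.g_add _ _) ?_
  rw [h.g_smul h1, h.g_smul h2]

theorem g_comb3 {c1 c2 c3 : ℝ} (h1 : 0 ≤ c1) (h2 : 0 ≤ c2) (h3 : 0 ≤ c3) (w1 w2 w3 : E) :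
    gauge C (c1 • w1 + c2 • w2 + c3 • w3) ≤
      c1 * gauge C w1 + c2 * gauge C w2 + c3 * gauge C w3 := by
  refine le_trans (h.g_add _ _) ?_
  have := h.g_comb2 h1 h2 w1 w2
  rw [h.g_smul h3]
  linarith

/-- Key estimate: a point in the cone over `b, b'` with `2C`-constraints is within the
translate of `C` centered at the midpoint `(b+b')/2`. -/
theorem keyA {b b' : E} {α β : ℝ} (hb : gauge C b = 2) (hb' : gauge C b' = 2)
    (hbb : gauge C (b - b') ≤ 2) (hα : 0 ≤ α) (hβ : 0 ≤ β) (hσ : 1/2 ≤ α + β)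
    (hx : gauge C (α • b + β • b') ≤ 2) :
    gauge C (α • b + β • b' - (2⁻¹ : ℝ) • (b + b')) ≤ 1 := by
  have hbb' : gauge C (b' - b) ≤ 2 := by rwa [h.g_sub_comm]
  rcases le_or_gt (α + β) 1 with hσ1 | hσ1
  · -- σ ≤ 1
    rcases le_or_gt α (1/2) with ha2 | ha2
    · rcases le_or_gt β (1/2) with hb2 | hb2
      · -- both ≤ 1/2
        have hid : α • b + β • b' - (2⁻¹ : ℝ) • (b + b') =
            -((1/2 - α) • b + (1/2 - β) • b') := by module
        rw [hid, h.g_neg]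
        have := h.g_comb2 (by linarith : (0:ℝ) ≤ 1/2 - α) (by linarith : (0:ℝ) ≤ 1/2 - β) b b'
        rw [hb, hb'] at this
        linarith
      · -- β ≥ 1/2
        have hid : α • b + β • b' - (2⁻¹ : ℝ) • (b + b') =
            (β - 1/2) • (b' - b) + (1 - (α + β)) • (-b) := by module
        rw [hid]
        have := h.g_comb2 (by linarith : (0:ℝ) ≤ β - 1/2)
          (by linarith : (0:ℝ) ≤ 1 - (α+β)) (b' - b) (-b)
        rw [h.g_neg, hb] at this
        nlinarith
    · -- α ≥ 1/2
      have hid : α • b + β • b' - (2⁻¹ : ℝ) • (b + b') =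
          (α - 1/2) • (b - b') + (1 - (α + β)) • (-b') := by module
      rw [hid]
      have := h.g_comb2 (by linarith : (0:ℝ) ≤ α - 1/2)
        (by linarith : (0:ℝ) ≤ 1 - (α+β)) (b - b') (-b')
      rw [h.g_neg, hb'] at this
      nlinarith
  · -- σ ≥ 1
    set σ := α + β with hσdef
    have hσ0 : 0 < σ := by linarith
    -- α ≤ 1
    have hα1 : α ≤ 1 := by
      have hid : α • b + β • b' + β • (b - b') = σ • b := by rw [hσdef]; module
      have h1 : gauge C (σ • b) ≤ gauge C (α • b + β • b') + β * gauge C (b - b') := by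
        rw [← hid]
        refine le_trans (h.g_add _ _) ?_
        rw [h.g_smul hβ]
      rw [h.g_smul (le_of_lt hσ0), hb] at h1
      nlinarith
    have hβ1 : β ≤ 1 := by
      have hid : α • b + β • b' + α • (b' - b) = σ • b' := by rw [hσdef]; module
      have h1 : gauge C (σ • b') ≤ gauge C (α • b + β • b') + α * gauge C (b' - b) := by
        rw [← hid]
        refine le_trans (h.g_add _ _) ?_
        rw [h.g_smul hα]
      rw [h.g_smul (le_of_lt hσ0), hb'] at h1
      nlinarith
    have hc1 : (0:ℝ) ≤ 1 - 1/σ := by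
      have : 1/σ ≤ 1 := by rw [div_le_one hσ0]; linarith
      linarith
    rcases le_or_gt β α with hab | hab
    · have hc2 : (0:ℝ) ≤ (α - β)/(2*σ) := div_nonneg (by linarith) (by positivity)
      have hid : α • b + β • b' - (2⁻¹ : ℝ) • (b + b') =
          (1 - 1/σ) • (α • b + β • b') + ((α - β)/(2*σ)) • (b - b') := by
        rw [hσdef]
        match_scalars <;> field_simp [show α + β ≠ 0 by linarith] <;> ring
      rw [hid]
      refine le_trans (h.g_comb2 hc1 hc2 _ _) ?_
      have key : ((1 - 1/σ) * 2 + ((α - β)/(2*σ)) * 2) * σ = 2*σ - 2 + (α - β) := by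
        field_simp
      have e1 : (1 - 1/σ) * gauge C (α • b + β • b') ≤ (1 - 1/σ) * 2 :=
        mul_le_mul_of_nonneg_left hx hc1
      have e2 : ((α - β)/(2*σ)) * gauge C (b - b') ≤ ((α - β)/(2*σ)) * 2 :=
        mul_le_mul_of_nonneg_left hbb hc2
      have e3 : (1 - 1/σ) * 2 + ((α - β)/(2*σ)) * 2 ≤ 1 := by
        rw [← mul_le_mul_iff_left₀ hσ0, key]
        nlinarith
      linarith
    · have hc2 : (0:ℝ) ≤ (β - α)/(2*σ) := div_nonneg (by linarith) (by positivity)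
      have hid : α • b + β • b' - (2⁻¹ : ℝ) • (b + b') =
          (1 - 1/σ) • (α • b + β • b') + ((β - α)/(2*σ)) • (b' - b) := by
        rw [hσdef]
        match_scalars <;> field_simp [show α + β ≠ 0 by linarith] <;> ring
      rw [hid]
      refine le_trans (h.g_comb2 hc1 hc2 _ _) ?_
      have key : ((1 - 1/σ) * 2 + ((β - α)/(2*σ)) * 2) * σ = 2*σ - 2 + (β - α) := by
        field_simp
      have e1 : (1 - 1/σ) * gauge C (α • b + β • b') ≤ (1 - 1/σ) * 2 :=
        mul_le_mul_of_nonneg_left hx hc1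
      have e2 : ((β - α)/(2*σ)) * gauge C (b' - b) ≤ ((β - α)/(2*σ)) * 2 :=
        mul_le_mul_of_nonneg_left hbb' hc2
      have e3 : (1 - 1/σ) * 2 + ((β - α)/(2*σ)) * 2 ≤ 1 := by
        rw [← mul_le_mul_iff_left₀ hσ0, key]
        nlinarith
      linarith


/-- interior push: from a point of gauge `< 1` we can increase the second coordinate while
staying in `C`. -/
theorem push {y : E} (hy : gauge C y < 1) {ε : ℝ} (hε : 0 < ε)
    (hεle : ε ≤ (1 - gauge C y) / (gauge C (EuclideanSpace.single 1 (1:ℝ)) + 1)) :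
    gauge C (y + ε • EuclideanSpace.single 1 (1:ℝ)) < 1 := by
  set e1 : E := EuclideanSpace.single 1 (1:ℝ) with he1
  have hg1 : 0 ≤ gauge C e1 := gauge_nonneg _
  have hd : 0 < gauge C e1 + 1 := by linarith
  have h2 : gauge C (y + ε • e1) ≤ gauge C y + ε * gauge C e1 := by
    refine le_trans (h.g_add _ _) ?_
    rw [h.g_smul (le_of_lt hε)]
  have h3 : ε * gauge C e1 < 1 - gauge C y := by
    rcases eq_or_lt_of_le hg1 with h0 | h0
    · rw [← h0]; simpa using (by linarith : gauge C y < 1)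
    · calc ε * gauge C e1 ≤ (1 - gauge C y) / (gauge C e1 + 1) * gauge C e1 := by
            exact mul_le_mul_of_nonneg_right hεle hg1
        _ < 1 - gauge C y := by
            rw [div_mul_eq_mul_div, div_lt_iff₀ hd]
            nlinarith
  linarith

theorem pin {s : E} (hs1 : gauge C s = 1) (hs0 : s 1 = 0) (hss : s 0 ≠ 0) :
    ∃ a : E, gauge C a = 1 ∧ gauge C (a + s) = 1 ∧ 0 < a 1 := by
  classical
  set e1 : E := EuclideanSpace.single 1 (1:ℝ) with he1
  have he1one : e1 1 = 1 := by simp [he1]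
  set K : Set E := C ∩ {x | x + s ∈ C} with hK
  have hsC : s ∈ C := h.mem_iff.2 (le_of_eq hs1)
  have hKne : K.Nonempty := ⟨0, h.zero_mem, by simpa using hsC⟩
  have hKcl : IsCompact K := by
    refine h.compact.inter_right ?_
    have : IsClosed ((fun x : E => x + s) ⁻¹' C) :=
      IsClosed.preimage (by continuity) h.compact.isClosed
    simpa [Set.preimage] using this
  obtain ⟨a, haK, hamax⟩ := hKcl.exists_isMaxOn hKne
      ((EuclideanSpace.proj (1 : Fin 2)).continuous.continuousOn)
  have hamax' : ∀ y ∈ K, y 1 ≤ a 1 := by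
    intro y hy
    have := hamax hy
    simpa using this
  have haC : a ∈ C := haK.1
  have hasC : a + s ∈ C := haK.2
  have hga : gauge C a ≤ 1 := h.mem_iff.1 haC
  have hgas : gauge C (a + s) ≤ 1 := h.mem_iff.1 hasC
  -- not both < 1
  have hnotboth : ¬ (gauge C a < 1 ∧ gauge C (a + s) < 1) := by
    rintro ⟨h1, h2⟩
    set ε : ℝ := min ((1 - gauge C a) / (gauge C e1 + 1))
        ((1 - gauge C (a + s)) / (gauge C e1 + 1)) with hε
    have hd : 0 < gauge C e1 + 1 := by
      have := gauge_nonneg (s := C) e1; linarith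
    have hε0 : 0 < ε := by
      apply lt_min <;> exact div_pos (by linarith) hd
    have hy1 : gauge C (a + ε • e1) < 1 := h.push h1 hε0 (min_le_left _ _)
    have hy2 : gauge C ((a + s) + ε • e1) < 1 := h.push h2 hε0 (min_le_right _ _)
    have hmem : a + ε • e1 ∈ K := by
      constructor
      · exact h.mem_iff.2 (le_of_lt hy1)
      · have : (a + ε • e1) + s = (a + s) + ε • e1 := by abel
        simp only [Set.mem_setOf_eq, this]
        exact h.mem_iff.2 (le_of_lt hy2)
    have := hamax' _ hmem
    have hcoord : (a + ε • e1) 1 = a 1 + ε := by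
      simp [he1, EuclideanSpace.single_apply]
    rw [hcoord] at this
    linarith
  -- if gauge a = 1 and gauge (a+s) < 1 then contradiction
  have hcase2 : gauge C a = 1 → gauge C (a + s) < 1 → False := by
    intro hga1 hlt
    -- every c ∈ C has c 1 ≤ a 1
    have htop : ∀ c ∈ C, c 1 ≤ a 1 := by
      intro c hc
      by_contra hgt
      push_neg at hgt
      set r : ℝ := gauge C (a + s) with hr
      set t : ℝ := (1 - r) / 4 with ht
      have hr1 : r < 1 := hlt
      have hr0 : 0 ≤ r := gauge_nonneg _
      have ht0 : 0 < t := by rw [ht]; linarith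
      have ht1 : t < 1 := by rw [ht]; linarith
      set y : E := (1 - t) • a + t • c with hy
      have hyC : y ∈ C := h.conv haC hc (by linarith) (le_of_lt ht0) (by ring)
      have hys : y + s = (1 - t) • (a + s) + t • (c + s) := by
        rw [hy]
        have : ((1:ℝ) - t) • s + t • s = s := by
          rw [← add_smul]; norm_num
        module
      have hgcs : gauge C (c + s) ≤ 2 := by
        refine le_trans (h.g_add _ _) ?_
        have := h.mem_iff.1 hc
        linarith
      have hgys : gauge C (y + s) ≤ (1 - t) * r + t * 2 := by
        rw [hys]
        refine le_trans (h.g_comb2 (by linarith) (le_of_lt ht0) _ _) ?_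
        rw [← hr]
        nlinarith
      have hgys1 : gauge C (y + s) < 1 := by
        have : (1 - t) * r + t * 2 < 1 := by rw [ht]; nlinarith
        linarith
      have hyK : y ∈ K := ⟨hyC, h.mem_iff.2 (le_of_lt hgys1)⟩
      have := hamax' _ hyK
      have hycoord : y 1 = (1 - t) * a 1 + t * c 1 := by
        simp [hy]
      rw [hycoord] at this
      nlinarith
    -- but a + s has gauge < 1 and we can push it up
    set ε : ℝ := (1 - gauge C (a + s)) / (gauge C e1 + 1) with hε
    have hd : 0 < gauge C e1 + 1 := by
      have := gauge_nonneg (s := C) e1; linarith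
    have hε0 : 0 < ε := div_pos (by linarith) hd
    have hy2 : gauge C ((a + s) + ε • e1) < 1 := h.push hlt hε0 (le_refl _)
    have hcm : (a + s) + ε • e1 ∈ C := h.mem_iff.2 (le_of_lt hy2)
    have := htop _ hcm
    have hcoord : ((a + s) + ε • e1) 1 = a 1 + ε := by
      simp [he1, EuclideanSpace.single_apply, hs0]
    rw [hcoord] at this
    linarith
  -- if gauge a < 1 and gauge (a+s) = 1 then contradiction
  have hcase3 : gauge C a < 1 → gauge C (a + s) = 1 → False := by
    intro hlt hgas1
    have htop : ∀ c ∈ C, c 1 ≤ a 1 := by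
      intro c hc
      by_contra hgt
      push_neg at hgt
      set r : ℝ := gauge C a with hr
      set t : ℝ := (1 - r) / 4 with ht
      have hr1 : r < 1 := hlt
      have hr0 : 0 ≤ r := gauge_nonneg _
      have ht0 : 0 < t := by rw [ht]; linarith
      have ht1 : t < 1 := by rw [ht]; linarith
      set y : E := (1 - t) • a + t • (c - s) with hy
      have hys : y + s = (1 - t) • (a + s) + t • c := by
        rw [hy]; module
      have hysC : y + s ∈ C := by
        rw [hys]
        exact h.conv hasC hc (by linarith) (le_of_lt ht0) (by ring)
      have hgcs : gauge C (c - s) ≤ 2 := by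
        have h1 : gauge C (c - s) ≤ gauge C c + gauge C (-s) := by
          have : c - s = c + (-s) := by abel
          rw [this]; exact h.g_add _ _
        rw [h.g_neg] at h1
        have := h.mem_iff.1 hc
        linarith
      have hgy : gauge C y ≤ (1 - t) * r + t * 2 := by
        rw [hy]
        refine le_trans (h.g_comb2 (by linarith) (le_of_lt ht0) _ _) ?_
        rw [← hr]
        nlinarith
      have hgy1 : gauge C y < 1 := by
        have : (1 - t) * r + t * 2 < 1 := by rw [ht]; nlinarith
        linarith
      have hyK : y ∈ K := ⟨h.mem_iff.2 (le_of_lt hgy1), hysC⟩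
      have := hamax' _ hyK
      have hycoord : y 1 = (1 - t) * a 1 + t * c 1 := by
        simp [hy, hs0]
      rw [hycoord] at this
      nlinarith
    set ε : ℝ := (1 - gauge C a) / (gauge C e1 + 1) with hε
    have hd : 0 < gauge C e1 + 1 := by
      have := gauge_nonneg (s := C) e1; linarith
    have hε0 : 0 < ε := div_pos (by linarith) hd
    have hy2 : gauge C (a + ε • e1) < 1 := h.push hlt hε0 (le_refl _)
    have hcm : a + ε • e1 ∈ C := h.mem_iff.2 (le_of_lt hy2)
    have := htop _ hcm
    have hcoord : (a + ε • e1) 1 = a 1 + ε := by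
      simp [he1, EuclideanSpace.single_apply]
    rw [hcoord] at this
    linarith
  -- conclude both gauges equal 1
  have hga1 : gauge C a = 1 ∧ gauge C (a + s) = 1 := by
    rcases eq_or_lt_of_le hga with h1 | h1
    · rcases eq_or_lt_of_le hgas with h2 | h2
      · exact ⟨h1, h2⟩
      · exact absurd (hcase2 h1 h2) (by simp)
    · rcases eq_or_lt_of_le hgas with h2 | h2
      · exact absurd (hcase3 h1 h2) (by simp)
      · exact absurd (hnotboth ⟨h1, h2⟩) (by simp)
  refine ⟨a, hga1.1, hga1.2, ?_⟩
  have ha1nn : 0 ≤ a 1 := by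
    have := hamax' 0 ⟨h.zero_mem, by simpa using hsC⟩
    simpa using this
  rcases eq_or_lt_of_le ha1nn with h0 | h0
  · exfalso
    -- a = t • s for t = a 0 / s 0
    set t : ℝ := a 0 / s 0 with htdef
    have hat : a = t • s := by
      ext i
      fin_cases i
      · show a 0 = (t • s) 0
        have : (t • s) 0 = t * s 0 := rfl
        rw [this, htdef]
        field_simp
      · show a 1 = (t • s) 1
        have : (t • s) 1 = t * s 1 := rfl
        rw [this, hs0, ← h0]
        ring
    have habs : |t| = 1 := by
      rcases le_or_gt 0 t with htpos | htneg
      · have := h.g_smul htpos s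
        rw [← hat, hs1, mul_one] at this
        rw [abs_of_nonneg htpos, ← this, hga1.1]
      · have h2 : gauge C (-(t • s)) = gauge C (t • s) := h.g_neg _
        have h3 : -(t • s) = (-t) • s := by module
        rw [h3] at h2
        have h4 := h.g_smul (by linarith : (0:ℝ) ≤ -t) s
        rw [hs1, mul_one] at h4
        rw [h4, ← hat, hga1.1] at h2
        rw [abs_of_neg htneg, h2]
    rcases abs_eq (by norm_num : (0:ℝ) ≤ 1) |>.1 habs with ht1 | ht1
    · -- a = s, then gauge (a+s) = 2
      rw [ht1, one_smul] at hat
      have : a + s = (2:ℝ) • s := by rw [hat]; module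
      have h2 := h.g_smul (by norm_num : (0:ℝ) ≤ 2) s
      rw [hs1, mul_one] at h2
      rw [this, h2] at hga1
      exact absurd hga1.2 (by norm_num)
    · rw [ht1] at hat
      have : a + s = 0 := by rw [hat]; module
      rw [this, gauge_zero] at hga1
      exact absurd hga1.2 (by norm_num)
  · exact h0


theorem coverStep {b b' x : E} {α β : ℝ} (hb : gauge C b = 2) (hb' : gauge C b' = 2)
    (hbb : gauge C (b - b') ≤ 2) (hα : 0 ≤ α) (hβ : 0 ≤ β) (hxe : x = α • b + β • b')
    (hx2 : gauge C x ≤ 2) :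
    gauge C x ≤ 1 ∨ gauge C (x - (2⁻¹:ℝ) • (b + b')) ≤ 1 := by
  rcases lt_or_ge (α + β) (1/2) with hσ | hσ
  · left
    rw [hxe]
    have := h.g_comb2 hα hβ b b'
    rw [hb, hb'] at this
    linarith
  · right
    rw [hxe]
    exact h.keyA hb hb' hbb hα hβ hσ (by rw [← hxe]; exact hx2)

/-- Covering of the half of `2C` on the upper side (`x 1 ≥ 0`) by four translates of `C`. -/
theorem halfplane : ∃ m₁ m₂ m₃ : E, ∀ x : E, gauge C x ≤ 2 → 0 ≤ x 1 →
    gauge C x ≤ 1 ∨ gauge C (x - m₁) ≤ 1 ∨ gauge C (x - m₂) ≤ 1 ∨ gauge C (x - m₃) ≤ 1 := by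
  classical
  set e0 : E := EuclideanSpace.single 0 (1:ℝ) with he0
  have he0ne : e0 ≠ 0 := by
    intro hc
    have : e0 0 = (0:ℝ) := by rw [hc]; rfl
    simp [he0] at this
  have hg0 : 0 < gauge C e0 := h.g_pos he0ne
  set s : E := (gauge C e0)⁻¹ • e0 with hsdef
  have hs1 : gauge C s = 1 := by
    rw [hsdef, h.g_smul (le_of_lt (inv_pos.2 hg0))]
    field_simp
  have hs0c : s 1 = 0 := by
    have : s 1 = (gauge C e0)⁻¹ * e0 1 := rfl
    rw [this]; simp [he0, EuclideanSpace.single_apply]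
  have hssc : s 0 = (gauge C e0)⁻¹ := by
    have : s 0 = (gauge C e0)⁻¹ * e0 0 := rfl
    rw [this]; simp [he0]
  have hss : s 0 ≠ 0 := by rw [hssc]; exact ne_of_gt (inv_pos.2 hg0)
  obtain ⟨a, ha1, has1, ha1pos⟩ := h.pin hs1 hs0c hss
  refine ⟨a - s, (2:ℝ) • a + s, a + (2:ℝ) • s, ?_⟩
  intro x hx2 hx1
  set q : ℝ := x 1 / a 1 with hqdef
  set p : ℝ := (x 0 - q * a 0) / s 0 with hpdef
  have hq0 : 0 ≤ q := div_nonneg hx1 (le_of_lt ha1pos)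
  have hxe : x = p • s + q • a := by
    ext i
    fin_cases i
    · show x 0 = (p • s + q • a) 0
      have : (p • s + q • a) 0 = p * s 0 + q * a 0 := rfl
      rw [this, hpdef]
      field_simp
      ring
    · show x 1 = (p • s + q • a) 1
      have : (p • s + q • a) 1 = p * s 1 + q * a 1 := rfl
      rw [this, hs0c, hqdef]
      field_simp
      ring
  -- gauges of the doubled hexagon vertices
  have g2s : gauge C ((2:ℝ) • s) = 2 := by rw [h.g_smul (by norm_num), hs1]; norm_num
  have g2a : gauge C ((2:ℝ) • a) = 2 := by rw [h.g_smul (by norm_num), ha1]; norm_num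
  have g2as : gauge C ((2:ℝ) • (a + s)) = 2 := by
    rw [h.g_smul (by norm_num), has1]; norm_num
  have gneg2s : gauge C ((-2:ℝ) • s) = 2 := by
    have : ((-2:ℝ) • s) = -((2:ℝ) • s) := by module
    rw [this, h.g_neg, g2s]
  rcases le_or_gt p 0 with hp | hp
  · -- cone (-s, a)
    have hx' : x = (-p/2) • ((-2:ℝ) • s) + (q/2) • ((2:ℝ) • a) := by
      rw [hxe]; module
    have hbb : gauge C ((-2:ℝ) • s - (2:ℝ) • a) ≤ 2 := by
      have : ((-2:ℝ) • s - (2:ℝ) • a) = -((2:ℝ) • (a + s)) := by module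
      rw [this, h.g_neg, g2as]
    have := h.coverStep gneg2s g2a hbb (by linarith : (0:ℝ) ≤ -p/2)
      (by linarith : (0:ℝ) ≤ q/2) hx' hx2
    rcases this with h1 | h1
    · exact Or.inl h1
    · refine Or.inr (Or.inl ?_)
      have hm : (2⁻¹:ℝ) • ((-2:ℝ) • s + (2:ℝ) • a) = a - s := by module
      rwa [hm] at h1
  rcases le_or_gt p q with hpq | hpq
  · -- cone (a, a+s)
    have hx' : x = ((q-p)/2) • ((2:ℝ) • a) + (p/2) • ((2:ℝ) • (a + s)) := by
      rw [hxe]; module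
    have hbb : gauge C ((2:ℝ) • a - (2:ℝ) • (a + s)) ≤ 2 := by
      have : ((2:ℝ) • a - (2:ℝ) • (a + s)) = -((2:ℝ) • s) := by module
      rw [this, h.g_neg, g2s]
    have := h.coverStep g2a g2as hbb (by linarith : (0:ℝ) ≤ (q-p)/2)
      (by linarith : (0:ℝ) ≤ p/2) hx' hx2
    rcases this with h1 | h1
    · exact Or.inl h1
    · refine Or.inr (Or.inr (Or.inl ?_))
      have hm : (2⁻¹:ℝ) • ((2:ℝ) • a + (2:ℝ) • (a + s)) = (2:ℝ) • a + s := by module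
      rwa [hm] at h1
  · -- cone (a+s, s)
    have hx' : x = (q/2) • ((2:ℝ) • (a + s)) + ((p-q)/2) • ((2:ℝ) • s) := by
      rw [hxe]; module
    have hbb : gauge C ((2:ℝ) • (a + s) - (2:ℝ) • s) ≤ 2 := by
      have : ((2:ℝ) • (a + s) - (2:ℝ) • s) = (2:ℝ) • a := by module
      rw [this, g2a]
    have := h.coverStep g2as g2s hbb (by linarith : (0:ℝ) ≤ q/2)
      (by linarith : (0:ℝ) ≤ (p-q)/2) hx' hx2
    rcases this with h1 | h1
    · exact Or.inl h1
    · refine Or.inr (Or.inr (Or.inr ?_))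
      have hm : (2⁻¹:ℝ) • ((2:ℝ) • (a + s) + (2:ℝ) • s) = a + (2:ℝ) • s := by module
      rwa [hm] at h1

theorem g_smul_abs (t : ℝ) (u : E) : gauge C (t • u) = |t| * gauge C u := by
  rcases le_or_gt 0 t with ht | ht
  · rw [h.g_smul ht, abs_of_nonneg ht]
  · have h1 : t • u = -((-t) • u) := by module
    rw [h1, h.g_neg, h.g_smul (by linarith), abs_of_neg ht]

theorem grunEst {x₁ x₂ x₃ y : E} {l₁ l₂ l₃ : ℝ}
    (hy : y = l₁ • x₁ + l₂ • x₂ + l₃ • x₃) (hsum : l₁ + l₂ + l₃ = 1)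
    (d23 : gauge C (x₂ - x₃) ≤ 2)
    (dy1 : gauge C (y - x₁) ≤ 2) (dy2 : gauge C (y - x₂) ≤ 2) (dy3 : gauge C (y - x₃) ≤ 2)
    (d12 : gauge C (x₂ - x₁) ≤ 2) (d13 : gauge C (x₃ - x₁) ≤ 2)
    (hl2 : l₂ ≤ 1) (hl3 : l₃ ≤ 1)
    (hcase : l₁ ≤ 0 ∨ (0 ≤ l₁ ∧ 0 ≤ l₂ ∧ 0 ≤ l₃ ∧ l₁ ≤ 1/2)) :
    gauge C (y - (2⁻¹:ℝ) • (x₂ + x₃)) ≤ 1 := by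
  have key : gauge C ((2:ℝ) • (y - (2⁻¹:ℝ) • (x₂ + x₃))) ≤ 2 := by
    rcases hcase with hneg | ⟨h1, h2, h3, h12⟩
    · have hid : (2:ℝ) • (y - (2⁻¹:ℝ) • (x₂ + x₃)) =
          (-l₁) • (y - x₁) + (1 - l₂) • (y - x₂) + (1 - l₃) • (y - x₃) := by
        rw [hy]
        match_scalars <;> field_simp <;> nlinarith [hsum]
      rw [hid]
      refine le_trans (h.g_comb3 (by linarith) (by linarith) (by linarith) _ _ _) ?_
      nlinarith [gauge_nonneg (s := C) (y - x₁), gauge_nonneg (s := C) (y - x₂),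
        gauge_nonneg (s := C) (y - x₃)]
    · rcases le_or_gt l₂ (1/2) with hc2 | hc2
      · rcases le_or_gt l₃ (1/2) with hc3 | hc3
        · have hid : (2:ℝ) • (y - (2⁻¹:ℝ) • (x₂ + x₃)) =
              -((1 - 2*l₂) • (x₂ - x₁) + (1 - 2*l₃) • (x₃ - x₁)) := by
            rw [hy]
            match_scalars <;> field_simp <;> nlinarith [hsum]
          rw [hid, h.g_neg]
          refine le_trans (h.g_comb2 (by linarith) (by linarith) _ _) ?_
          nlinarith
        · -- l₃ > 1/2
          have hid : (2:ℝ) • (y - (2⁻¹:ℝ) • (x₂ + x₃)) =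
              (2*l₃ - 1) • (x₃ - x₂) + (2*l₁) • (x₁ - x₂) := by
            rw [hy]
            match_scalars <;> field_simp <;> nlinarith [hsum]
          rw [hid]
          have d32 : gauge C (x₃ - x₂) ≤ 2 := by rwa [h.g_sub_comm]
          have d1x2 : gauge C (x₁ - x₂) ≤ 2 := by rwa [h.g_sub_comm]
          refine le_trans (h.g_comb2 (by linarith) (by linarith) _ _) ?_
          nlinarith
      · -- l₂ > 1/2
        have hid : (2:ℝ) • (y - (2⁻¹:ℝ) • (x₂ + x₃)) =
            (2*l₂ - 1) • (x₂ - x₃) + (2*l₁) • (x₁ - x₃) := by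
          rw [hy]
          match_scalars <;> field_simp <;> nlinarith [hsum]
        rw [hid]
        have d1x3 : gauge C (x₁ - x₃) ≤ 2 := by rwa [h.g_sub_comm]
        refine le_trans (h.g_comb2 (by linarith) (by linarith) _ _) ?_
        nlinarith
  have hz : y - (2⁻¹:ℝ) • (x₂ + x₃) = (2⁻¹:ℝ) • ((2:ℝ) • (y - (2⁻¹:ℝ) • (x₂ + x₃))) := by
    module
  rw [hz, h.g_smul (by norm_num)]
  linarith

/-- Grünbaum: a finite set of pairwise gauge-distance `≤ 2` points is covered by three
unit balls (centered at the edge midpoints of a maximal-area inscribed triangle). -/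
theorem gruenbaum (S : Finset E) (hS : S.Nonempty)
    (hdiam : ∀ u ∈ S, ∀ v ∈ S, gauge C (u - v) ≤ 2) :
    ∃ z₁ z₂ z₃ : E, ∀ y ∈ S, gauge C (y - z₁) ≤ 1 ∨ gauge C (y - z₂) ≤ 1 ∨
      gauge C (y - z₃) ≤ 1 := by
  classical
  have hT : (S ×ˢ S ×ˢ S).Nonempty := hS.product (hS.product hS)
  obtain ⟨t3, hmemT, hmaxT⟩ := Finset.exists_max_image (S ×ˢ S ×ˢ S)
    (fun t => |det2 (t.2.1 - t.1) (t.2.2 - t.1)|) hT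
  obtain ⟨x₁, x₂, x₃⟩ := t3
  rw [Finset.mem_product] at hmemT
  have hx₁S : x₁ ∈ S := hmemT.1
  have hmemT2 := hmemT.2
  rw [Finset.mem_product] at hmemT2
  have hx₂S : x₂ ∈ S := hmemT2.1
  have hx₃S : x₃ ∈ S := hmemT2.2
  set u : E := x₂ - x₁ with hudef
  set v : E := x₃ - x₁ with hvdef
  set Δ : ℝ := det2 u v with hΔdef
  have hmax : ∀ a ∈ S, ∀ b ∈ S, ∀ c ∈ S,
      |det2 (b - a) (c - a)| ≤ |Δ| := by
    intro a ha b hb c hc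
    exact hmaxT (a, b, c) (by
      rw [Finset.mem_product]
      exact ⟨ha, by rw [Finset.mem_product]; exact ⟨hb, hc⟩⟩)
  by_cases hdeg : Δ = 0
  · -- all points collinear
    obtain ⟨pq2, hpqmem, hmax2⟩ := Finset.exists_max_image (S ×ˢ S)
      (fun t => gauge C (t.1 - t.2)) (hS.product hS)
    obtain ⟨pp, qq⟩ := pq2
    rw [Finset.mem_product] at hpqmem
    have hpS : pp ∈ S := hpqmem.1
    have hqS : qq ∈ S := hpqmem.2
    set d : ℝ := gauge C (pp - qq) with hddef
    have hd2 : d ≤ 2 := hdiam _ hpS _ hqS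
    have hdmax : ∀ a ∈ S, ∀ b ∈ S, gauge C (a - b) ≤ d := by
      intro a ha b hb
      exact hmax2 (a, b) (by rw [Finset.mem_product]; exact ⟨ha, hb⟩)
    by_cases hpq : qq - pp = 0
    · -- all points coincide with pp
      refine ⟨pp, pp, pp, ?_⟩
      intro y hy
      left
      have h1 : gauge C (y - pp) ≤ d := hdmax _ hy _ hpS
      have h2 : d = 0 := by
        rw [hddef]
        have : pp - qq = 0 := by
          rw [sub_eq_zero] at hpq ⊢
          exact hpq.symm
        rw [this, gauge_zero]
      rw [h2] at h1
      linarith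
    · set z : E := pp + (2⁻¹:ℝ) • (qq - pp) with hzdef
      refine ⟨z, z, z, ?_⟩
      intro y hy
      left
      have hdet0 : det2 (qq - pp) (y - pp) = 0 := by
        have h1 := hmax _ hpS _ hqS _ hy
        rw [hdeg] at h1
        simpa using h1
      obtain ⟨t, ht⟩ := dep2 hpq hdet0
      have hgu : gauge C (qq - pp) = d := by rw [hddef, h.g_sub_comm]
      have hd0 : 0 < d := by
        rw [← hgu]; exact h.g_pos hpq
      have htle : |t| ≤ 1 := by
        have h1 : gauge C (y - pp) ≤ d := hdmax _ hy _ hpS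
        rw [ht, h.g_smul_abs, hgu] at h1
        nlinarith [abs_nonneg t]
      have ht1le : |t - 1| ≤ 1 := by
        have h1 : gauge C (y - qq) ≤ d := hdmax _ hy _ hqS
        have h2 : y - qq = (t - 1) • (qq - pp) := by
          have e : y - qq = (y - pp) - (qq - pp) := by abel
          rw [e, ht]; module
        rw [h2, h.g_smul_abs, hgu] at h1
        nlinarith [abs_nonneg (t-1)]
      have hta := abs_le.1 htle
      have htb := abs_le.1 ht1le
      have hyz : y - z = (t - 2⁻¹) • (qq - pp) := by
        rw [hzdef]
        have e : y - (pp + (2⁻¹:ℝ) • (qq - pp)) = (y - pp) - (2⁻¹:ℝ) • (qq - pp) := by abel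
        rw [e, ht]; module
      rw [hyz, h.g_smul_abs, hgu]
      have habs : |t - 2⁻¹| ≤ 2⁻¹ := by
        rw [abs_le]
        constructor
        · linarith [htb.1]
        · linarith [hta.2]
      nlinarith [abs_nonneg (t - 2⁻¹)]
  · -- nondegenerate triangle
    refine ⟨(2⁻¹:ℝ) • (x₂ + x₃), (2⁻¹:ℝ) • (x₁ + x₃), (2⁻¹:ℝ) • (x₁ + x₂), ?_⟩
    intro y hy
    set l₂ : ℝ := det2 (y - x₁) v / Δ with hl2def
    set l₃ : ℝ := det2 u (y - x₁) / Δ with hl3def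
    set l₁ : ℝ := 1 - l₂ - l₃ with hl1def
    have hw : y - x₁ = l₂ • u + l₃ • v := by
      rw [hl2def, hl3def, hΔdef]
      exact cramer2 hdeg _
    have hyrep : y = l₁ • x₁ + l₂ • x₂ + l₃ • x₃ := by
      rw [hl1def]
      have e : y = x₁ + (y - x₁) := by abel
      rw [e, hw, hudef, hvdef]
      module
    have hsum : l₁ + l₂ + l₃ = 1 := by rw [hl1def]; ring
    have habsΔ : 0 < |Δ| := abs_pos.2 hdeg
    have hb2 : |l₂| ≤ 1 := by
      have h1 := hmax _ hx₁S _ hy _ hx₃S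
      have h2 : det2 (y - x₁) v = l₂ * Δ := by
        rw [hl2def]; field_simp
      rw [h2, abs_mul] at h1
      nlinarith [abs_nonneg l₂]
    have hb3 : |l₃| ≤ 1 := by
      have h1 := hmax _ hx₁S _ hx₂S _ hy
      have h2 : det2 u (y - x₁) = l₃ * Δ := by
        rw [hl3def]; field_simp
      rw [h2, abs_mul] at h1
      nlinarith [abs_nonneg l₃]
    have hb1 : |l₁| ≤ 1 := by
      have h1 := hmax _ hy _ hx₂S _ hx₃S
      have h2 : det2 (x₂ - y) (x₃ - y) = l₁ * Δ := by
        have e1 : x₂ - y = u - (y - x₁) := by rw [hudef]; abel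
        have e2 : x₃ - y = v - (y - x₁) := by rw [hvdef]; abel
        rw [e1, e2, det2_sub_sub]
        have e3 : det2 u (y - x₁) = l₃ * Δ := by rw [hl3def]; field_simp
        have e4 : det2 (y - x₁) v = l₂ * Δ := by rw [hl2def]; field_simp
        rw [e3, e4, ← hΔdef, hl1def]
        ring
      rw [h2, abs_mul] at h1
      nlinarith [abs_nonneg l₁]
    -- distances
    have dy1 : gauge C (y - x₁) ≤ 2 := hdiam _ hy _ hx₁S
    have dy2 : gauge C (y - x₂) ≤ 2 := hdiam _ hy _ hx₂S
    have dy3 : gauge C (y - x₃) ≤ 2 := hdiam _ hy _ hx₃S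
    have d12 : gauge C (x₂ - x₁) ≤ 2 := hdiam _ hx₂S _ hx₁S
    have d13 : gauge C (x₃ - x₁) ≤ 2 := hdiam _ hx₃S _ hx₁S
    have d23 : gauge C (x₂ - x₃) ≤ 2 := hdiam _ hx₂S _ hx₃S
    have d21 : gauge C (x₁ - x₂) ≤ 2 := hdiam _ hx₁S _ hx₂S
    have d31 : gauge C (x₁ - x₃) ≤ 2 := hdiam _ hx₁S _ hx₃S
    have d32 : gauge C (x₃ - x₂) ≤ 2 := hdiam _ hx₃S _ hx₂S
    have hl1' := abs_le.1 hb1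
    have hl2' := abs_le.1 hb2
    have hl3' := abs_le.1 hb3
    rcases le_or_gt l₁ 0 with hc1 | hc1
    · left
      exact h.grunEst hyrep hsum d23 dy1 dy2 dy3 d12 d13 hl2'.2 hl3'.2 (Or.inl hc1)
    rcases le_or_gt l₂ 0 with hc2 | hc2
    · right; left
      have hyrep' : y = l₂ • x₂ + l₁ • x₁ + l₃ • x₃ := by rw [hyrep]; module
      exact h.grunEst hyrep' (by linarith) d31 dy2 dy1 dy3 d21 d32 hl1'.2 hl3'.2 (Or.inl hc2)
    rcases le_or_gt l₃ 0 with hc3 | hc3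
    · right; right
      have hyrep' : y = l₃ • x₃ + l₁ • x₁ + l₂ • x₂ := by rw [hyrep]; module
      exact h.grunEst hyrep' (by linarith) d21 dy3 dy1 dy2 d31 d23 hl1'.2 hl2'.2 (Or.inl hc3)
    rcases le_or_gt l₁ (1/2) with hd1 | hd1
    · left
      exact h.grunEst hyrep hsum d23 dy1 dy2 dy3 d12 d13 hl2'.2 hl3'.2
        (Or.inr ⟨le_of_lt hc1, le_of_lt hc2, le_of_lt hc3, hd1⟩)
    rcases le_or_gt l₂ (1/2) with hd2 | hd2
    · right; left
      have hyrep' : y = l₂ • x₂ + l₁ • x₁ + l₃ • x₃ := by rw [hyrep]; module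
      exact h.grunEst hyrep' (by linarith) d31 dy2 dy1 dy3 d21 d32 hl1'.2 hl3'.2
        (Or.inr ⟨le_of_lt hc2, le_of_lt hc1, le_of_lt hc3, hd2⟩)
    · right; right
      have hyrep' : y = l₃ • x₃ + l₁ • x₁ + l₂ • x₂ := by rw [hyrep]; module
      exact h.grunEst hyrep' (by linarith) d21 dy3 dy1 dy2 d31 d23 hl1'.2 hl2'.2
        (Or.inr ⟨by linarith, le_of_lt hc1, le_of_lt hc2, by linarith⟩)

theorem core : ∀ n : ℕ, ∀ V : Finset E, V.card ≤ n → V.Nonempty →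
    ∃ P W : Finset E, W ⊆ V ∧ (∀ v ∈ V, ∃ x ∈ P, gauge C (x - v) ≤ 1) ∧
      (∀ u ∈ W, ∀ w ∈ W, u ≠ w → 2 < gauge C (u - w)) ∧ P.card + 1 ≤ 4 * W.card := by
  intro n
  induction n with
  | zero =>
    intro V hcard hne
    exfalso
    have := Finset.card_pos.2 hne
    omega
  | succ n IH =>
    intro V hcard hne
    classical
    by_cases hA : ∀ u ∈ V, ∀ v ∈ V, gauge C (u - v) ≤ 2
    · -- diameter ≤ 2 : Grünbaum, three points suffice
      obtain ⟨z₁, z₂, z₃, hz⟩ := h.gruenbaum V hne hA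
      obtain ⟨v₀, hv₀⟩ := hne
      refine ⟨{z₁, z₂, z₃}, {v₀}, ?_, ?_, ?_, ?_⟩
      · intro x hx
        rw [Finset.mem_singleton] at hx
        rw [hx]; exact hv₀
      · intro v hv
        rcases hz v hv with h1 | h1 | h1
        · exact ⟨z₁, by simp, by rwa [h.g_sub_comm]⟩
        · exact ⟨z₂, by simp, by rwa [h.g_sub_comm]⟩
        · exact ⟨z₃, by simp, by rwa [h.g_sub_comm]⟩
      · intro u hu w hw hne'
        rw [Finset.mem_singleton] at hu hw
        exact absurd (hu.trans hw.symm) hne'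
      · have h3 : ({z₁, z₂, z₃} : Finset E).card ≤ 3 := by
          refine le_trans (Finset.card_insert_le _ _) ?_
          have := Finset.card_insert_le z₂ ({z₃} : Finset E)
          simp only [Finset.card_singleton] at this ⊢
          omega
        rw [Finset.card_singleton]
        omega
    · -- there is a far pair
      push_neg at hA
      obtain ⟨u₀, hu₀V, v₀, hv₀V, hfar⟩ := hA
      obtain ⟨w, hwV, hwmin⟩ := Finset.exists_min_image V (fun v => v 1) hne
      obtain ⟨m₁, m₂, m₃, hcover⟩ := h.halfplane
      set Pk : Finset E := {w, w + m₁, w + m₂, w + m₃} with hPk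
      have hPk4 : Pk.card ≤ 4 := by
        rw [hPk]
        refine le_trans (Finset.card_insert_le _ _) ?_
        refine Nat.succ_le_succ ?_
        refine le_trans (Finset.card_insert_le _ _) ?_
        refine Nat.succ_le_succ ?_
        refine le_trans (Finset.card_insert_le _ _) ?_
        simp
      have hKpierce : ∀ v ∈ V, gauge C (v - w) ≤ 2 → ∃ x ∈ Pk, gauge C (x - v) ≤ 1 := by
        intro v hv hvw
        have hc1 : 0 ≤ (v - w) 1 := by
          have e : (v - w) 1 = v 1 - w 1 := rfl
          rw [e]
          have := hwmin v hv
          simp only at this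
          linarith
        rcases hcover (v - w) hvw hc1 with h1 | h1 | h1 | h1
        · refine ⟨w, by simp [hPk], ?_⟩
          rwa [h.g_sub_comm]
        · refine ⟨w + m₁, by simp [hPk], ?_⟩
          have e : w + m₁ - v = -(v - w - m₁) := by abel
          rw [e, h.g_neg]; exact h1
        · refine ⟨w + m₂, by simp [hPk], ?_⟩
          have e : w + m₂ - v = -(v - w - m₂) := by abel
          rw [e, h.g_neg]; exact h1
        · refine ⟨w + m₃, by simp [hPk], ?_⟩
          have e : w + m₃ - v = -(v - w - m₃) := by abel
          rw [e, h.g_neg]; exact h1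
      set V' : Finset E := V.filter (fun v => 2 < gauge C (v - w)) with hV'def
      have hwnotV' : w ∉ V' := by
        rw [hV'def, Finset.mem_filter]
        rintro ⟨-, hc⟩
        rw [sub_self, gauge_zero] at hc
        linarith
      by_cases hV'ne : V'.Nonempty
      · -- recurse
        have hV'card : V'.card ≤ n := by
          have hsub : V' ⊆ V := Finset.filter_subset _ _
          have hss : V' ⊂ V := (Finset.ssubset_iff_of_subset hsub).2 ⟨w, hwV, hwnotV'⟩
          have := Finset.card_lt_card hss
          omega
        obtain ⟨P', W', hW'sub, hpierce', hsep', hcard'⟩ := IH V' hV'card hV'ne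
        refine ⟨P' ∪ Pk, insert w W', ?_, ?_, ?_, ?_⟩
        · intro x hx
          rcases Finset.mem_insert.1 hx with rfl | hx'
          · exact hwV
          · exact Finset.filter_subset _ _ (hW'sub hx')
        · intro v hv
          by_cases hvw : 2 < gauge C (v - w)
          · have hvV' : v ∈ V' := by rw [hV'def, Finset.mem_filter]; exact ⟨hv, hvw⟩
            obtain ⟨x, hxP, hgx⟩ := hpierce' v hvV'
            exact ⟨x, Finset.mem_union_left _ hxP, hgx⟩
          · push_neg at hvw
            obtain ⟨x, hxP, hgx⟩ := hKpierce v hv hvw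
            exact ⟨x, Finset.mem_union_right _ hxP, hgx⟩
        · intro u hu z hz hne'
          rcases Finset.mem_insert.1 hu with rfl | hu'
          · rcases Finset.mem_insert.1 hz with rfl | hz'
            · exact absurd rfl hne'
            · have hzV' : z ∈ V' := hW'sub hz'
              rw [hV'def, Finset.mem_filter] at hzV'
              rw [h.g_sub_comm]
              exact hzV'.2
          · rcases Finset.mem_insert.1 hz with rfl | hz'
            · have huV' : u ∈ V' := hW'sub hu'
              rw [hV'def, Finset.mem_filter] at huV'
              exact huV'.2
            · exact hsep' u hu' z hz' hne'
        · have hWnot : w ∉ W' := fun hc => hwnotV' (hW'sub hc)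
          rw [Finset.card_insert_of_notMem hWnot]
          have := Finset.card_union_le P' Pk
          omega
      · -- all points are within 2 of w
        have hall : ∀ v ∈ V, gauge C (v - w) ≤ 2 := by
          intro v hv
          by_contra hc
          push_neg at hc
          exact hV'ne ⟨v, by rw [hV'def, Finset.mem_filter]; exact ⟨hv, hc⟩⟩
        have hne0 : u₀ ≠ v₀ := by
          intro hc
          rw [hc, sub_self, gauge_zero] at hfar
          linarith
        refine ⟨Pk, {u₀, v₀}, ?_, ?_, ?_, ?_⟩
        · intro x hx
          rcases Finset.mem_insert.1 hx with rfl | hx'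
          · exact hu₀V
          · rw [Finset.mem_singleton] at hx'
            rw [hx']; exact hv₀V
        · intro v hv
          exact hKpierce v hv (hall v hv)
        · intro u hu z hz hne'
          rcases Finset.mem_insert.1 hu with rfl | hu'
          · rcases Finset.mem_insert.1 hz with rfl | hz'
            · exact absurd rfl hne'
            · rw [Finset.mem_singleton] at hz'
              rw [hz']; exact hfar
          · rw [Finset.mem_singleton] at hu'
            rcases Finset.mem_insert.1 hz with rfl | hz'
            · rw [hu', h.g_sub_comm]; exact hfar
            · rw [Finset.mem_singleton] at hz'
              rw [hu', hz'] at hne'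
              exact absurd rfl hne'
        · have hW2 : ({u₀, v₀} : Finset E).card = 2 := by
            rw [Finset.card_insert_of_notMem (by simpa using hne0), Finset.card_singleton]
          rw [hW2]
          omega


end Body
end PiercingAux

open PiercingAux in
/-- For every centrally symmetric convex body `C` in the plane and every nonempty finite
family of translates of `C`, `τ(F) ≤ 4 · ν(F) − 1` (stated as `τ(F) + 1 ≤ 4 · ν(F)`). -/
theorem piercing_translates_symmetric_planar_minus_one
    (C : Set (EuclideanSpace ℝ (Fin 2)))
    (hCcompact : IsCompact C) (hCconv : Convex ℝ C)
    (hCint : (interior C).Nonempty) (hCsymm : C = -C)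
    (V : Finset (EuclideanSpace ℝ (Fin 2))) (hV : V.Nonempty) :
    ∃ P W : Finset (EuclideanSpace ℝ (Fin 2)),
      W ⊆ V ∧
      (∀ v ∈ V, ∃ x ∈ P, x ∈ v +ᵥ C) ∧
      ((W : Set (EuclideanSpace ℝ (Fin 2))).Pairwise fun u w =>
        Disjoint (u +ᵥ C) (w +ᵥ C)) ∧
      P.card + 1 ≤ 4 * W.card := by
  have h : Body C := ⟨hCcompact, hCconv, hCint, hCsymm⟩
  obtain ⟨P, W, hsub, hpierce, hsep, hcard⟩ := h.core V.card V le_rfl hV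
  have hmem : ∀ x v : E, gauge C (x - v) ≤ 1 → x ∈ v +ᵥ C := by
    intro x v hg
    have hxv : x - v ∈ C := h.mem_iff.2 hg
    rw [Set.mem_vadd_set_iff_neg_vadd_mem]
    have e : (-v) +ᵥ x = x - v := by
      simp [vadd_eq_add]
      abel
    rwa [e]
  refine ⟨P, W, hsub, ?_, ?_, hcard⟩
  · intro v hv
    obtain ⟨x, hxP, hgx⟩ := hpierce v hv
    exact ⟨x, hxP, hmem x v hgx⟩
  · intro u hu w hw hne
    have hfar := hsep u hu w hw hne
    rw [Set.disjoint_left]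
    intro x hxu hxw
    have h1 : gauge C (x - u) ≤ 1 := by
      rw [Set.mem_vadd_set_iff_neg_vadd_mem] at hxu
      have e : (-u) +ᵥ x = x - u := by simp [vadd_eq_add]; abel
      rw [e] at hxu
      exact h.mem_iff.1 hxu
    have h2 : gauge C (x - w) ≤ 1 := by
      rw [Set.mem_vadd_set_iff_neg_vadd_mem] at hxw
      have e : (-w) +ᵥ x = x - w := by simp [vadd_eq_add]; abel
      rw [e] at hxw
      exact h.mem_iff.1 hxw
    have h3 : gauge C (u - w) ≤ gauge C (x - w) + gauge C (x - u) := by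
      have e : u - w = (x - w) + -(x - u) := by abel
      rw [e]
      refine le_trans (h.g_add _ _) ?_
      rw [h.g_neg]
    linarith
end
end
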